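/- arXiv:1709.07922 — 4 statements merged into one kernel-verified Lean document; each statement's English description precedes it below -/
import Mathlib

section
/- For every positive integers n and k, there exists a thermodynamic binding network T = (D, M) with |D| = n - 1 primary domain types and |M| = n monomer types that has a monomer collection whose unique stable configuration consists of a single polymer of size \sum_{j=1}^{n} k^{j-1} (which equals (k^n - 1)/(k - 1) when k >= 2). Concretely, one may take D = {d_1, ..., d_{n-1}}, monomer types m_1 = {k copies of d_1}, m_j = {one d_{j-1}*, k copies of d_j} for 2 <= j <= n-1, m_n = {one d_{n-1}*}, and the monomer collection with k^{j-1} copies of m_j for each j; its unique saturated configuration is a complete k-ary tree of monomers and is stable. -/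
/-- A monomer type over a set `D` of primary domain types: for each primary
domain type it records the number of instances of that domain and of its
complementary (starred) domain on the monomer. -/
structure Monomer (D : Type) where
  prim : D → ℕ
  star : D → ℕ

/-- Instances of primary domains in the monomer collection `mon : I → Monomer D`
(`I` indexes the individual monomers). -/
def PrimInst {D I : Type} (mon : I → Monomer D) : Type :=
  Σ i : I, Σ x : D, Fin ((mon i).prim x)

/-- Instances of complementary (starred) domains in the collection `mon`. -/
def StarInst {D I : Type} (mon : I → Monomer D) : Type :=
  Σ i : I, Σ x : D, Fin ((mon i).star x)

/-- A configuration of the monomer collection `mon`: a matching between primary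
domain instances and complementary domain instances of the same domain type. -/
structure Config {D I : Type} (mon : I → Monomer D) where
  bond : PrimInst mon → Option (StarInst mon)
  inj : ∀ p q s, bond p = some s → bond q = some s → p = q
  compat : ∀ p s, bond p = some s → p.2.1 = s.2.1

namespace Config

variable {D I : Type} {mon : I → Monomer D}

/-- A configuration is saturated if no primary domain instance of some type and
complementary instance of the same type are both unmatched. -/
def Saturated (α : Config mon) : Prop :=
  ¬ ∃ (p : PrimInst mon) (s : StarInst mon),
      p.2.1 = s.2.1 ∧ α.bond p = none ∧ ∀ q, α.bond q ≠ some s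

/-- The monomer binding graph: vertices are monomers, with an edge between two
(distinct) monomers that share at least one bound pair of domain instances.
Its connected components are the polymers of the configuration. -/
def bindingGraph (α : Config mon) : SimpleGraph I where
  Adj i j := i ≠ j ∧ ∃ p s, α.bond p = some s ∧
      ((p.1 = i ∧ s.1 = j) ∨ (p.1 = j ∧ s.1 = i))
  symm := by
    constructor
    rintro i j ⟨hne, p, s, hb, hor⟩
    exact ⟨hne.symm, p, s, hb, hor.symm⟩
  loopless := by
    constructor
    rintro i ⟨hne, -⟩
    exact hne rfl

/-- The entropy `S(α)`: the number of polymers (connected components). -/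
noncomputable def entropy (α : Config mon) : ℕ :=
  Nat.card α.bindingGraph.ConnectedComponent

/-- A configuration is stable if it is saturated and has maximal entropy among
all saturated configurations of the same monomer collection. -/
def IsStable (α : Config mon) : Prop :=
  α.Saturated ∧ ∀ β : Config mon, β.Saturated → β.entropy ≤ α.entropy

/-- The size of a polymer (connected component) `C`: the number of monomers in it. -/
noncomputable def polymerSize (α : Config mon) (C : α.bindingGraph.ConnectedComponent) : ℕ :=
  Nat.card {i : I // α.bindingGraph.connectedComponentMk i = C}

/-- A monomer is free if its polymer contains no other monomer. -/
def Free (α : Config mon) (i : I) : Prop :=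
  ∀ j : I, α.bindingGraph.Reachable i j → j = i

end Config

/-- The monomer matrix `M_T` applied to a count vector `c`: component `x` is the
number of instances of domain `x` minus the number of instances of `x*` in the
collection with `c j` copies of monomer type `Mty j`. -/
def matVec {D : Type} {m : ℕ} (Mty : Fin m → Monomer D) (c : Fin m → ℕ) (x : D) : ℤ :=
  ∑ j, (c j : ℤ) * (((Mty j).prim x : ℤ) - ((Mty j).star x : ℤ))


section Aux

variable (n k : ℕ)

/-- The monomer types of the tree TBN. -/
def Mk (j : Fin n) : Monomer (Fin (n - 1)) where
  prim x := if x.val = j.val then k else 0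
  star x := if x.val + 1 = j.val then 1 else 0

/-- The index type of the monomer collection. -/
abbrev Idx : Type := Σ j : Fin n, Fin (k ^ j.val)

/-- The monomer collection. -/
abbrev mymon : Idx n k → Monomer (Fin (n - 1)) := fun i => Mk n k i.1

instance : Fintype (PrimInst (mymon n k)) :=
  inferInstanceAs (Fintype (Σ i : Idx n k, Σ x : Fin (n - 1), Fin ((mymon n k i).prim x)))

instance : Fintype (StarInst (mymon n k)) :=
  inferInstanceAs (Fintype (Σ i : Idx n k, Σ x : Fin (n - 1), Fin ((mymon n k i).star x)))

/-- Instances of a fixed domain type, as a sigma type. -/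
def instEquiv {D I : Type} (m : I → D → ℕ) (x : D) :
    {p : Σ i : I, Σ y : D, Fin (m i y) // p.2.1 = x} ≃ Σ i : I, Fin (m i x) where
  toFun p := ⟨p.1.1, Fin.cast (congrArg (m p.1.1) p.2) p.1.2.2⟩
  invFun q := ⟨⟨q.1, x, q.2⟩, rfl⟩
  left_inv := by rintro ⟨⟨i, y, t⟩, h⟩; cases h; rfl
  right_inv := by rintro ⟨i, t⟩; rfl

lemma card_prim (x : Fin (n - 1)) :
    Fintype.card {p : PrimInst (mymon n k) // p.2.1 = x} = k ^ x.val * k := by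
  classical
  refine Eq.trans (Fintype.card_congr (instEquiv (fun i : Idx n k => (mymon n k i).prim) x)) ?_
  rw [Fintype.card_sigma]
  simp only [Fintype.card_fin]
  rw [← Finset.univ_sigma_univ, Finset.sum_sigma]
  have hlt : x.val < n := by have := x.isLt; omega
  rw [Finset.sum_eq_single (⟨x.val, hlt⟩ : Fin n)]
  · simp [Mk, Finset.sum_const]
  · intro b _ hb
    have hne : ¬ x.val = b.val := fun hh => hb (Fin.ext hh.symm)
    simp [Mk, hne]
  · simp

lemma card_star (x : Fin (n - 1)) :
    Fintype.card {s : StarInst (mymon n k) // s.2.1 = x} = k ^ x.val * k := by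
  classical
  refine Eq.trans (Fintype.card_congr (instEquiv (fun i : Idx n k => (mymon n k i).star) x)) ?_
  rw [Fintype.card_sigma]
  simp only [Fintype.card_fin]
  rw [← Finset.univ_sigma_univ, Finset.sum_sigma]
  have hlt : x.val + 1 < n := by have := x.isLt; omega
  rw [Finset.sum_eq_single (⟨x.val + 1, hlt⟩ : Fin n)]
  · simp [Mk, Finset.sum_const, pow_succ]
  · intro b _ hb
    have hne : ¬ x.val + 1 = b.val := fun hh => hb (Fin.ext hh.symm)
    simp [Mk, hne]
  · simp

/-- In any saturated configuration every star instance is bound. -/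
lemma star_bound {α : Config (mymon n k)} (hsat : α.Saturated)
    (s : StarInst (mymon n k)) : ∃ p, α.bond p = some s := by
  classical
  by_contra hs
  push_neg at hs
  set x := s.2.1 with hx
  have hb : ∀ p : PrimInst (mymon n k), p.2.1 = x → α.bond p ≠ none := by
    intro p hp hnone
    exact hsat ⟨p, s, hp, hnone, fun q hq => hs q hq⟩
  have hso : ∀ p : {p : PrimInst (mymon n k) // p.2.1 = x}, (α.bond p.1).isSome := by
    intro p
    cases h : α.bond p.1 with
    | none => exact absurd h (hb p.1 p.2)
    | some s' => rfl
  let g : {p : PrimInst (mymon n k) // p.2.1 = x} →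
      {s' : StarInst (mymon n k) // s'.2.1 = x} := fun p =>
    ⟨(α.bond p.1).get (hso p), by
      have := α.compat p.1 ((α.bond p.1).get (hso p)) (Option.some_get (hso p)).symm
      rw [← this, p.2]⟩
  have ginj : Function.Injective g := by
    intro u v huv
    have h1 : α.bond u.1 = some ((α.bond u.1).get (hso u)) := (Option.some_get (hso u)).symm
    have h2 : α.bond v.1 = some ((α.bond v.1).get (hso v)) := (Option.some_get (hso v)).symm
    have heq : (α.bond u.1).get (hso u) = (α.bond v.1).get (hso v) := congrArg Subtype.val huv
    exact Subtype.ext (α.inj u.1 v.1 _ h1 (heq ▸ h2))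
  have hcard : Fintype.card {p : PrimInst (mymon n k) // p.2.1 = x} =
      Fintype.card {s' : StarInst (mymon n k) // s'.2.1 = x} := by
    rw [card_prim, card_star]
  have gbij : Function.Bijective g :=
    (Fintype.bijective_iff_injective_and_card g).2 ⟨ginj, hcard⟩
  obtain ⟨p, hp⟩ := gbij.2 ⟨s, hx.symm⟩
  have hval : (α.bond p.1).get (hso p) = s := congrArg Subtype.val hp
  exact hs p.1 (by rw [← hval]; exact (Option.some_get (hso p)).symm)

/-- Any saturated configuration is connected. -/
lemma sat_connected (hn : 0 < n) {α : Config (mymon n k)} (hsat : α.Saturated) :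
    α.bindingGraph.Connected := by
  let root : Idx n k := ⟨⟨0, hn⟩, ⟨0, by simp⟩⟩
  have key : ∀ v : ℕ, ∀ i : Idx n k, i.1.val = v → α.bindingGraph.Reachable i root := by
    intro v
    induction v with
    | zero =>
      rintro ⟨⟨jv, hj⟩, ⟨av, ha⟩⟩ h
      simp only at h
      subst h
      have hav : av = 0 := by simpa using ha
      subst hav
      exact SimpleGraph.Reachable.refl _
    | succ v ih =>
      intro i hi
      have hx : v < n - 1 := by have := i.1.isLt; omega
      have h1 : 0 < (mymon n k i).star ⟨v, hx⟩ := by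
        show 0 < if v + 1 = i.1.val then 1 else 0
        rw [if_pos hi.symm]
        omega
      set s : StarInst (mymon n k) := ⟨i, ⟨v, hx⟩, ⟨0, h1⟩⟩ with hs
      obtain ⟨p, hp⟩ := star_bound n k hsat s
      have hcompat : p.2.1 = (⟨v, hx⟩ : Fin (n - 1)) := α.compat p s hp
      have ht : (p.2.2 : ℕ) < (mymon n k p.1).prim p.2.1 := p.2.2.isLt
      have hlev : p.1.1.val = v := by
        by_contra hne
        have h0 : (mymon n k p.1).prim p.2.1 = 0 := by
          show (if p.2.1.val = p.1.1.val then k else 0) = 0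
          rw [if_neg (by rw [hcompat]; simp only [Fin.val_mk]; omega)]
        omega
      have hne : p.1 ≠ i := by
        intro h
        rw [h] at hlev
        omega
      have hadj : α.bindingGraph.Adj p.1 i := ⟨hne, p, s, hp, Or.inl ⟨rfl, rfl⟩⟩
      exact hadj.symm.reachable.trans (ih p.1 hlev)
  haveI : Nonempty (Idx n k) := ⟨root⟩
  exact ⟨fun a b => (key a.1.val a rfl).trans (key b.1.val b rfl).symm⟩

lemma sat_entropy (hn : 0 < n) {α : Config (mymon n k)} (hsat : α.Saturated) :
    α.entropy = 1 := by
  have hc := sat_connected n k hn hsat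
  rw [Config.entropy, Nat.card_eq_one_iff_unique]
  constructor
  · constructor
    intro a b
    refine SimpleGraph.ConnectedComponent.ind (fun u => SimpleGraph.ConnectedComponent.ind
      (fun w => SimpleGraph.ConnectedComponent.sound (hc.preconnected u w)) b) a
  · exact ⟨SimpleGraph.connectedComponentMk _ hc.nonempty.some⟩

/-- The canonical configuration's bond function. -/
def fbond (p : PrimInst (mymon n k)) : StarInst (mymon n k) :=
  ⟨⟨⟨p.1.1.val + 1, by
      have ht : (p.2.2 : ℕ) < (mymon n k p.1).prim p.2.1 := p.2.2.isLt
      have hx : p.2.1.val < n - 1 := p.2.1.isLt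
      by_cases h : p.2.1.val = p.1.1.val
      · omega
      · have h0 : (mymon n k p.1).prim p.2.1 = 0 := by
          show (if p.2.1.val = p.1.1.val then k else 0) = 0
          rw [if_neg h]
        omega⟩,
    ⟨p.1.2.val * k + p.2.2.val, by
      have ht : (p.2.2 : ℕ) < (mymon n k p.1).prim p.2.1 := p.2.2.isLt
      have heq : p.2.1.val = p.1.1.val := by
        by_contra h
        have h0 : (mymon n k p.1).prim p.2.1 = 0 := by
          show (if p.2.1.val = p.1.1.val then k else 0) = 0
          rw [if_neg h]
        omega
      have hk : (mymon n k p.1).prim p.2.1 = k := by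
        show (if p.2.1.val = p.1.1.val then k else 0) = k
        rw [if_pos heq]
      have htk : (p.2.2 : ℕ) < k := by omega
      have ha := p.1.2.isLt
      calc p.1.2.val * k + p.2.2.val < p.1.2.val * k + k := by omega
        _ = (p.1.2.val + 1) * k := by ring
        _ ≤ k ^ p.1.1.val * k := Nat.mul_le_mul_right k ha
        _ = k ^ (p.1.1.val + 1) := (pow_succ k p.1.1.val).symm⟩⟩,
    p.2.1, ⟨0, by
      have ht : (p.2.2 : ℕ) < (mymon n k p.1).prim p.2.1 := p.2.2.isLt
      have heq : p.2.1.val = p.1.1.val := by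
        by_contra h
        have h0 : (mymon n k p.1).prim p.2.1 = 0 := by
          show (if p.2.1.val = p.1.1.val then k else 0) = 0
          rw [if_neg h]
        omega
      show 0 < if p.2.1.val + 1 = p.1.1.val + 1 then 1 else 0
      rw [if_pos (by omega)]
      omega⟩⟩

lemma fbond_inj : Function.Injective (fbond n k) := by
  rintro ⟨⟨⟨jv, hj⟩, ⟨av, ha⟩⟩, ⟨xv, hx⟩, ⟨tv, ht⟩⟩
    ⟨⟨⟨jv', hj'⟩, ⟨av', ha'⟩⟩, ⟨xv', hx'⟩, ⟨tv', ht'⟩⟩ h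
  have h1 : jv + 1 = jv' + 1 := congrArg (fun s : StarInst (mymon n k) => s.1.1.val) h
  have h2 : av * k + tv = av' * k + tv' := congrArg (fun s : StarInst (mymon n k) => s.1.2.val) h
  have h3 : xv = xv' := congrArg (fun s : StarInst (mymon n k) => s.2.1.val) h
  have ht2 : tv < if xv = jv then k else 0 := ht
  have ht2' : tv' < if xv' = jv' then k else 0 := ht'
  have hxj : xv = jv := by
    by_contra hc
    rw [if_neg hc] at ht2
    omega
  have hxj' : xv' = jv' := by
    by_contra hc
    rw [if_neg hc] at ht2'
    omega
  rw [if_pos hxj] at ht2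
  rw [if_pos hxj'] at ht2'
  have hj0 : jv = jv' := by omega
  have hav : av = av' := by
    have e1 : (av * k + tv) / k = av := by
      rw [Nat.mul_comm av k, Nat.mul_add_div (by omega : 0 < k), Nat.div_eq_of_lt ht2]
      omega
    have e1' : (av' * k + tv') / k = av' := by
      rw [Nat.mul_comm av' k, Nat.mul_add_div (by omega : 0 < k), Nat.div_eq_of_lt ht2']
      omega
    rw [← e1, ← e1', h2]
  have htv : tv = tv' := by
    have hmul : av * k = av' * k := by rw [hav]
    omega
  subst hj0; subst h3; subst hav; subst htv
  rfl

/-- The canonical saturated configuration. -/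
def canon : Config (mymon n k) where
  bond p := some (fbond n k p)
  inj := fun p q s hp hq => fbond_inj n k (Option.some_injective _ (hp.trans hq.symm))
  compat := fun p s hp => by
    have h : fbond n k p = s := Option.some_injective _ hp
    rw [← h]
    rfl

lemma canon_saturated : (canon n k).Saturated := by
  rintro ⟨p, s, -, hnone, -⟩
  simp [canon] at hnone

lemma Mk_inj : Function.Injective (Mk n k) := by
  have key : ∀ j j' : Fin n, Mk n k j = Mk n k j' → j.val ≤ j'.val := by
    intro j j' h
    rcases Nat.eq_zero_or_pos j.val with h0 | h0
    · omega
    · obtain ⟨v, hv⟩ : ∃ v, j.val = v + 1 := ⟨j.val - 1, by omega⟩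
      have hx : v < n - 1 := by have := j.isLt; omega
      have hst := congrFun (congrArg Monomer.star h) ⟨v, hx⟩
      simp only [Mk] at hst
      rw [if_pos (by omega : v + 1 = j.val)] at hst
      by_cases hc : v + 1 = j'.val
      · omega
      · rw [if_neg hc] at hst; omega
  intro j j' h
  exact Fin.ext (Nat.le_antisymm (key j j' h) (key j' j h.symm))

end Aux

/-- For all positive `n, k` there is a TBN with `n - 1` primary
domain types and `n` monomer types, together with a monomer collection of total
size `∑_{j=1}^{n} k^{j-1}`, that has a stable configuration, and every stable
configuration of it consists of a single polymer (hence a stable polymer of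
size `∑_{j=1}^{n} k^{j-1}`). -/
theorem stmt0 (n k : ℕ) (hn : 0 < n) (hk : 0 < k) :
    ∃ (D : Type) (_ : Fintype D) (Mty : Fin n → Monomer D) (c : Fin n → ℕ),
      Fintype.card D = n - 1 ∧
      Function.Injective Mty ∧
      (∑ j, c j) = ∑ j ∈ Finset.range n, k ^ j ∧
      (∃ α : Config (fun i : (Σ j : Fin n, Fin (c j)) => Mty i.1), α.IsStable) ∧
      (∀ α : Config (fun i : (Σ j : Fin n, Fin (c j)) => Mty i.1),
        α.IsStable → α.entropy = 1) := by
  classical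
  refine ⟨Fin (n - 1), inferInstance, Mk n k, fun j => k ^ j.val, ?_, Mk_inj n k, ?_, ?_, ?_⟩
  · simp
  · exact Fin.sum_univ_eq_sum_range (fun j => k ^ j) n
  · refine ⟨canon n k, canon_saturated n k, fun β hβ => ?_⟩
    rw [sat_entropy n k hn hβ, sat_entropy n k hn (canon_saturated n k)]
  · intro α hα
    exact sat_entropy n k hn hα.1
end

section
/- Let T = (D, M) be a thermodynamic binding network with d = |D| and m = |M|, and let a be the maximum number of instances of any single domain type (primary or complementary) occurring in any monomer type of M. Then for every monomer collection of T and every stable configuration α of that collection, every polymer of α has size at most 2(m + d)(ad)^{2d+3}. -/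
set_option linter.unusedSectionVars false
set_option linter.unusedVariables false
set_option maxHeartbeats 1000000

namespace TBNCore

open Finset Submodule Module

variable {γ : Type} [Fintype γ] [DecidableEq γ] {ρ : Type} [Fintype ρ]

/-- integer dot of a row with an integer vector -/
def dotZ (A : ρ → γ → ℤ) (i : ρ) (y : γ → ℤ) : ℤ := ∑ j, A i j * y j

def IsKer (A : ρ → γ → ℤ) (y : γ → ℤ) : Prop := ∀ i, dotZ A i y = 0

def dotQ (A : ρ → γ → ℤ) (i : ρ) (x : γ → ℚ) : ℚ := ∑ j, (A i j : ℚ) * x j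

def IsKerQ (A : ρ → γ → ℤ) (x : γ → ℚ) : Prop := ∀ i, dotQ A i x = 0

/-- the bound on entries of basic kernel vectors -/
def Hb (a d : ℕ) : ℕ := if d = 1 then a else (2*a*(d+1))^d

lemma one_le_Hb {a d : ℕ} (ha : 1 ≤ a) (_hd : 1 ≤ d) : 1 ≤ Hb a d := by
  unfold Hb
  split
  · exact ha
  · exact Nat.one_le_pow _ _ (by positivity)

lemma dotZ_single (A : ρ → γ → ℤ) (i : ρ) (j₀ : γ) (c : ℤ) :
    dotZ A i (Pi.single j₀ c) = A i j₀ * c := by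
  unfold dotZ
  rw [Finset.sum_eq_single j₀]
  · rw [Pi.single_eq_same]
  · intro b _ hb; rw [Pi.single_eq_of_ne hb, mul_zero]
  · intro h; exact absurd (mem_univ j₀) h

lemma dotZ_add (A : ρ → γ → ℤ) (i : ρ) (y z : γ → ℤ) :
    dotZ A i (y + z) = dotZ A i y + dotZ A i z := by
  simp [dotZ, mul_add, Finset.sum_add_distrib]

/-- dot with a fixed vector, as a linear map -/
def dotL {ι : Type} [Fintype ι] (w₀ : ι → ℚ) : (ι → ℚ) →ₗ[ℚ] ℚ where
  toFun w := ∑ j, w j * w₀ j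
  map_add' u v := by simp [add_mul, Finset.sum_add_distrib]
  map_smul' c u := by simp [Finset.mul_sum, mul_assoc]

/-- Existence of a small integer kernel vector supported on a small set `S`,
provided either `S` has `d+1` elements or the columns of `S` are rationally
dependent. -/
theorem exists_small_kernel (A : ρ → γ → ℤ) (a d : ℕ) (hd : Fintype.card ρ = d)
    (hd1 : 1 ≤ d) (ha1 : 1 ≤ a) (ha : ∀ i j, (A i j).natAbs ≤ a)
    (S : Finset γ) (hScard : S.card ≤ d + 1)
    (hdep : S.card = d + 1 ∨ ∃ z : γ → ℚ, z ≠ 0 ∧ (∀ j, z j ≠ 0 → j ∈ S) ∧ IsKerQ A z) :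
    ∃ y : γ → ℤ, y ≠ 0 ∧ (∀ j, y j ≠ 0 → j ∈ S) ∧ IsKer A y ∧
      ∀ j, (y j).natAbs ≤ Hb a d := by
  -- S is nonempty
  have hSne : S.Nonempty := by
    rcases S.eq_empty_or_nonempty with h | h
    · exfalso
      rcases hdep with h1 | ⟨z, hz0, hzsupp, _⟩
      · rw [h] at h1; simp at h1
      · apply hz0; funext j
        by_contra hj
        have := hzsupp j hj; rw [h] at this; simp at this
    · exact h
  have hS1 : 1 ≤ S.card := hSne.card_pos
  by_cases hd' : d = 1
  -- ===================== case d = 1 : explicit construction =====================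
  · subst hd'
    have hHb : Hb a 1 = a := by simp [Hb]
    obtain ⟨i₀, hi₀⟩ := Fintype.card_eq_one_iff.mp hd
    have hcases : S.card = 1 ∨ S.card = 2 := by omega
    rcases hcases with hs | hs
    · -- S = {j₀}
      obtain ⟨j₀, hj₀⟩ := Finset.card_eq_one.mp hs
      rcases hdep with h1 | ⟨z, hz0, hzsupp, hzker⟩
      · omega
      · have hzj : ∀ j, z j ≠ 0 → j = j₀ := by
          intro j hj; have := hzsupp j hj; rw [hj₀] at this; simpa using this
        obtain ⟨jz', hjz'⟩ : ∃ j, z j ≠ 0 := by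
          by_contra h; push_neg at h; exact hz0 (funext h)
        have hzj₀ : z j₀ ≠ 0 := by rw [← hzj jz' hjz']; exact hjz'
        have hA0 : ∀ i, A i j₀ = 0 := by
          intro i
          have := hzker i
          unfold dotQ at this
          rw [Finset.sum_eq_single j₀] at this
          · rcases mul_eq_zero.mp this with h | h
            · exact_mod_cast h
            · exact absurd h hzj₀
          · intro b _ hb
            have : z b = 0 := by
              by_contra hzb; exact hb (hzj b hzb)
            rw [this, mul_zero]
          · intro h; exact absurd (mem_univ j₀) h
        refine ⟨Pi.single j₀ 1, ?_, ?_, ?_, ?_⟩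
        · intro h
          have := congrFun h j₀
          rw [Pi.single_eq_same] at this; simp at this
        · intro j hj
          by_cases hjj : j = j₀
          · rw [hjj]; exact hzsupp j₀ hzj₀
          · rw [Pi.single_eq_of_ne hjj] at hj; simp at hj
        · intro i; rw [dotZ_single, hA0, zero_mul]
        · intro j
          by_cases hjj : j = j₀
          · subst hjj; rw [Pi.single_eq_same, hHb]; simpa using ha1
          · rw [Pi.single_eq_of_ne hjj, hHb]; simp
    · -- S = {j₁, j₂}
      obtain ⟨j₁, j₂, hj12, hjS⟩ := Finset.card_eq_two.mp hs
      set α := A i₀ j₁ with hα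
      set βv := A i₀ j₂ with hβ
      by_cases hz : α = 0 ∧ βv = 0
      · refine ⟨Pi.single j₁ 1, ?_, ?_, ?_, ?_⟩
        · intro h; have := congrFun h j₁; rw [Pi.single_eq_same] at this; simp at this
        · intro j hj
          by_cases hjj : j = j₁
          · subst hjj; rw [hjS]; simp
          · rw [Pi.single_eq_of_ne hjj] at hj; simp at hj
        · intro i; rw [hi₀ i, dotZ_single, ← hα, hz.1, zero_mul]
        · intro j
          by_cases hjj : j = j₁
          · subst hjj; rw [Pi.single_eq_same, hHb]; simpa using ha1
          · rw [Pi.single_eq_of_ne hjj, hHb]; simp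
      · have hy : (Pi.single j₁ βv + Pi.single j₂ (-α) : γ → ℤ) ≠ 0 := by
          intro h
          apply hz
          constructor
          · have := congrFun h j₂
            rw [Pi.add_apply, Pi.single_eq_of_ne (Ne.symm hj12), Pi.single_eq_same,
              Pi.zero_apply] at this
            omega
          · have := congrFun h j₁
            rw [Pi.add_apply, Pi.single_eq_same, Pi.single_eq_of_ne hj12,
              Pi.zero_apply] at this
            omega
        refine ⟨Pi.single j₁ βv + Pi.single j₂ (-α), hy, ?_, ?_, ?_⟩
        · intro j hj
          rw [Pi.add_apply] at hj
          rw [hjS]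
          by_cases h1 : j = j₁
          · subst h1; simp
          · by_cases h2 : j = j₂
            · subst h2; simp
            · exfalso
              rw [Pi.single_eq_of_ne h1, Pi.single_eq_of_ne h2] at hj
              simp at hj
        · intro i
          rw [hi₀ i, dotZ_add, dotZ_single, dotZ_single, ← hα, ← hβ]
          ring
        · intro j
          rw [hHb, Pi.add_apply]
          by_cases h1 : j = j₁
          · subst h1
            rw [Pi.single_eq_same, Pi.single_eq_of_ne hj12, add_zero]
            exact ha i₀ j₂
          · by_cases h2 : j = j₂
            · subst h2
              rw [Pi.single_eq_same, Pi.single_eq_of_ne (Ne.symm hj12), zero_add]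
              rw [Int.natAbs_neg]
              exact ha i₀ j₁
            · rw [Pi.single_eq_of_ne h1, Pi.single_eq_of_ne h2]
              simp
  -- ===================== case d ≥ 2 : pigeonhole =====================
  · have hH : Hb a d = (2*a*(d+1))^d := by simp [Hb, hd']
    set H := Hb a d with hHdef
    have hH1 : 1 ≤ H := one_le_Hb ha1 hd1
    -- rows restricted to S, as rational vectors
    set r : ρ → (↥S → ℚ) := fun i j => (A i j.1 : ℚ) with hr
    obtain ⟨b, hbt, hbspan, hbli⟩ := exists_linearIndependent ℚ (Set.range r)
    have hbfin : b.Finite := (Set.finite_range r).subset hbt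
    haveI : Fintype ↥b := hbfin.fintype
    set nb := Fintype.card ↥b with hnbdef
    have hrange : Set.range (Subtype.val : ↥b → (↥S → ℚ)) = b := Subtype.range_coe
    have hfr : finrank ℚ ↥(span ℚ (Set.range r)) = nb := by
      rw [← hbspan, ← hrange, finrank_span_eq_card hbli]
    -- key rank bound
    have hnb : nb ≤ S.card - 1 := by
      rcases hdep with hcard | ⟨z, hz0, hzsupp, hzker⟩
      · -- |S| = d+1, rank ≤ d
        haveI : Fintype ↥(Set.range r) := (Set.finite_range r).fintype
        have h1 : finrank ℚ ↥(span ℚ (Set.range r)) ≤ Fintype.card ρ := by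
          refine le_trans (finrank_span_le_card _) ?_
          rw [Set.toFinset_range]
          exact le_trans Finset.card_image_le (by simp)
        omega
      · -- dependent columns: rank ≤ |S| - 1
        set z' : ↥S → ℚ := fun j => z j.1 with hz'
        obtain ⟨j₀, hj₀⟩ : ∃ j, z j ≠ 0 := by
          by_contra h; push_neg at h; exact hz0 (funext h)
        have hj₀S : j₀ ∈ S := hzsupp j₀ hj₀
        have hz'0 : dotL z' z' ≠ 0 := by
          have : (0:ℚ) < ∑ j : ↥S, z' j * z' j := by
            apply Finset.sum_pos' (fun j _ => mul_self_nonneg _)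
            exact ⟨⟨j₀, hj₀S⟩, mem_univ _, mul_self_pos.mpr hj₀⟩
          exact ne_of_gt this
        have hrk : ∀ i, dotL z' (r i) = 0 := by
          intro i
          have h1 : dotL z' (r i) = ∑ j : ↥S, (A i j.1 : ℚ) * z j.1 := rfl
          rw [h1]
          have h2 : ∑ j : ↥S, (A i j.1 : ℚ) * z j.1
              = ∑ j ∈ S, (A i j : ℚ) * z j := by
            simpa using Finset.sum_coe_sort S (fun j' => (A i j' : ℚ) * z j')
          rw [h2]
          rw [Finset.sum_subset S.subset_univ]
          · exact hzker i
          · intro x _ hx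
            have : z x = 0 := by
              by_contra hzx; exact hx (hzsupp x hzx)
            rw [this, mul_zero]
        have hkerf : finrank ℚ ↥(LinearMap.ker (dotL z')) = S.card - 1 := by
          have h1 := LinearMap.finrank_range_add_finrank_ker (dotL z')
          have h2 : finrank ℚ (↥S → ℚ) = S.card := by
            rw [Module.finrank_pi]; exact Fintype.card_coe S
          have h3 : finrank ℚ ↥(LinearMap.range (dotL z')) = 1 := by
            have hle : finrank ℚ ↥(LinearMap.range (dotL z')) ≤ 1 := by
              have := Submodule.finrank_le (LinearMap.range (dotL z'))
              rwa [Module.finrank_self] at this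
            have hne : finrank ℚ ↥(LinearMap.range (dotL z')) ≠ 0 := by
              rw [Ne, Submodule.finrank_eq_zero, LinearMap.range_eq_bot]
              intro h
              apply hz'0
              rw [h]
              rfl
            omega
          omega
        have hle : span ℚ (Set.range r) ≤ LinearMap.ker (dotL z') := by
          rw [span_le]
          rintro w ⟨i, rfl⟩
          exact LinearMap.mem_ker.mpr (hrk i)
        have := Submodule.finrank_mono hle
        omega
    -- choose a preimage row index for each element of b
    have hivex : ∀ v : ↥b, ∃ i, r i = v.1 := fun v => hbt v.2
    set iv : ↥b → ρ := fun v => (hivex v).choose with hivdef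
    have hiv : ∀ v, r (iv v) = v.1 := fun v => (hivex v).choose_spec
    -- the pigeonhole map
    set c0 : ℕ := a*H*S.card with hc0
    set T : (↥S → Fin (H+1)) → ↥b → ℤ :=
      fun z v => ∑ j : ↥S, A (iv v) j.1 * ((z j : ℕ) : ℤ) with hTdef
    have hT : ∀ z v, |T z v| ≤ (c0 : ℤ) := by
      intro z v
      have h1 : |T z v| ≤ ∑ j : ↥S, |A (iv v) j.1 * ((z j : ℕ) : ℤ)| :=
        Finset.abs_sum_le_sum_abs _ _
      have h2 : ∀ j : ↥S, |A (iv v) j.1 * ((z j : ℕ) : ℤ)| ≤ (a : ℤ) * H := by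
        intro j
        rw [abs_mul]
        apply _root_.mul_le_mul
        · rw [Int.abs_eq_natAbs]
          exact_mod_cast ha (iv v) j.1
        · rw [Int.abs_eq_natAbs]
          have := Fin.is_le (z j)
          exact_mod_cast this
        · positivity
        · positivity
      calc |T z v| ≤ ∑ _j : ↥S, (a : ℤ) * H := le_trans h1 (Finset.sum_le_sum (fun j _ => h2 j))
        _ = (c0 : ℤ) := by
            rw [Finset.sum_const, Finset.card_univ, Fintype.card_coe, nsmul_eq_mul, hc0]
            push_cast; ring
    set Φ : (↥S → Fin (H+1)) → (↥b → Fin (2*c0+1)) :=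
      fun z v => ⟨(T z v + (c0 : ℕ)).toNat, by
        have := hT z v
        rw [abs_le] at this
        omega⟩ with hΦdef
    -- cardinality comparison
    have hkey : (2*a*S.card)^(S.card-1) ≤ H := by
      rw [hH]
      calc (2*a*S.card)^(S.card-1) ≤ (2*a*(d+1))^(S.card-1) := by
            apply Nat.pow_le_pow_left
            exact Nat.mul_le_mul_left _ (by omega)
        _ ≤ (2*a*(d+1))^d := Nat.pow_le_pow_right (by positivity) (by omega)
    have hlt : Fintype.card (↥b → Fin (2*c0+1)) <
        Fintype.card (↥S → Fin (H+1)) := by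
      rw [Fintype.card_fun, Fintype.card_fun, Fintype.card_fin, Fintype.card_fin,
        Fintype.card_coe]
      have h1 : (2*c0+1)^nb ≤ (2*c0+1)^(S.card-1) :=
        Nat.pow_le_pow_right (by omega) hnb
      have h2 : 2*c0+1 ≤ (2*a*S.card)*(H+1) := by rw [hc0]; nlinarith
      have h3 : (2*c0+1)^(S.card-1) ≤ ((2*a*S.card)*(H+1))^(S.card-1) :=
        Nat.pow_le_pow_left h2 _
      have h4 : ((2*a*S.card)*(H+1))^(S.card-1)
          = (2*a*S.card)^(S.card-1) * (H+1)^(S.card-1) := mul_pow _ _ _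
      have h7 : (2*a*S.card)^(S.card-1) < H + 1 := by omega
      have h5 : (2*a*S.card)^(S.card-1) * (H+1)^(S.card-1) < (H+1) * (H+1)^(S.card-1) :=
        mul_lt_mul_of_pos_right h7 (by positivity)
      have h6 : (H+1) * (H+1)^(S.card-1) = (H+1)^(S.card) := by
        rw [← pow_succ']
        congr 1
        omega
      calc (2*c0+1)^nb ≤ (2*c0+1)^(S.card-1) := h1
        _ ≤ ((2*a*S.card)*(H+1))^(S.card-1) := h3
        _ = (2*a*S.card)^(S.card-1) * (H+1)^(S.card-1) := h4
        _ < (H+1) * (H+1)^(S.card-1) := h5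
        _ = (H+1)^(S.card) := h6
    obtain ⟨z1, z2, hz12, hΦeq⟩ := Fintype.exists_ne_map_eq_of_card_lt Φ hlt
    -- the kernel vector
    set yS : ↥S → ℤ := fun j => ((z1 j : ℕ) : ℤ) - ((z2 j : ℕ) : ℤ) with hySdef
    set y : γ → ℤ := fun j => if h : j ∈ S then yS ⟨j, h⟩ else 0 with hydef
    have hyS : ∀ (j : γ) (h : j ∈ S), y j = yS ⟨j, h⟩ := by
      intro j h; rw [hydef]; simp [h]
    have hyoff : ∀ j, j ∉ S → y j = 0 := by
      intro j h; rw [hydef]; simp [h]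
    have hTeq : ∀ v, T z1 v = T z2 v := by
      intro v
      have := congrFun hΦeq v
      rw [hΦdef] at this
      simp only [Fin.mk.injEq] at this
      have h1 := hT z1 v
      have h2 := hT z2 v
      rw [abs_le] at h1 h2
      omega
    have hkerb : ∀ v, ∑ j : ↥S, A (iv v) j.1 * yS j = 0 := by
      intro v
      have h1 : ∑ j : ↥S, A (iv v) j.1 * yS j = T z1 v - T z2 v := by
        rw [hTdef]
        simp only [hySdef, mul_sub]
        rw [Finset.sum_sub_distrib]
      rw [h1, hTeq v, sub_self]
    -- extend kernel property to all rows via the span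
    set yQS : ↥S → ℚ := fun j => (yS j : ℚ) with hyQSdef
    have hLb : ∀ w ∈ b, dotL yQS w = 0 := by
      intro w hw
      have h1 : dotL yQS ((⟨w, hw⟩ : ↥b) : ↥S → ℚ) = 0 := by
        rw [← hiv ⟨w, hw⟩]
        have h2 : dotL yQS (r (iv ⟨w, hw⟩)) = ∑ j : ↥S, (A (iv ⟨w, hw⟩) j.1 : ℚ) * (yS j : ℚ) := rfl
        rw [h2]
        have h3 := hkerb ⟨w, hw⟩
        have : ((∑ j : ↥S, A (iv ⟨w, hw⟩) j.1 * yS j : ℤ) : ℚ) = 0 := by rw [h3]; simp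
        push_cast at this
        convert this using 2
      exact h1
    have hspanker : span ℚ (Set.range r) ≤ LinearMap.ker (dotL yQS) := by
      rw [← hbspan, span_le]
      intro w hw
      exact LinearMap.mem_ker.mpr (hLb w hw)
    have hfull : ∀ i, ∑ j : ↥S, (A i j.1 : ℚ) * (yS j : ℚ) = 0 := by
      intro i
      have h1 : r i ∈ span ℚ (Set.range r) := subset_span (Set.mem_range_self i)
      have h2 := hspanker h1
      exact LinearMap.mem_ker.mp h2
    -- conclude
    refine ⟨y, ?_, ?_, ?_, ?_⟩
    · -- nonzero
      obtain ⟨j, hj⟩ := Function.ne_iff.mp hz12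
      intro h
      have h1 : y j.1 = yS j := hyS j.1 j.2
      have h2 : y j.1 = 0 := by rw [h]; rfl
      rw [h1] at h2
      rw [hySdef] at h2
      simp only [sub_eq_zero] at h2
      apply hj
      have : (z1 j : ℕ) = (z2 j : ℕ) := by exact_mod_cast h2
      exact Fin.ext this
    · -- support
      intro j hj
      by_contra h
      exact hj (hyoff j h)
    · -- kernel
      intro i
      have h1 : dotZ A i y = ∑ j ∈ S, A i j * y j := by
        unfold dotZ
        rw [← Finset.sum_subset S.subset_univ]
        intro x _ hx
        rw [hyoff x hx, mul_zero]
      have h2 : ∑ j ∈ S, A i j * y j = ∑ j : ↥S, A i j.1 * y j.1 :=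
        (Finset.sum_coe_sort S _).symm
      have h3 : ∑ j : ↥S, A i j.1 * y j.1 = ∑ j : ↥S, A i j.1 * yS j := by
        apply Finset.sum_congr rfl
        intro j _
        congr 1
        exact hyS j.1 j.2
      have h4 := hfull i
      have h5 : ((∑ j : ↥S, A i j.1 * yS j : ℤ) : ℚ) = 0 := by
        push_cast
        convert h4 using 2
      have h6 : ∑ j : ↥S, A i j.1 * yS j = 0 := by exact_mod_cast h5
      rw [h1, h2, h3, h6]
    · -- bound
      intro j
      by_cases h : j ∈ S
      · rw [hyS j h, hySdef]
        simp only
        have := Fin.is_le (z1 ⟨j, h⟩)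
        have := Fin.is_le (z2 ⟨j, h⟩)
        omega
      · rw [hyoff j h]
        simp


lemma dotZ_neg (A : ρ → γ → ℤ) (i : ρ) (y : γ → ℤ) : dotZ A i (-y) = - dotZ A i y := by
  simp [dotZ, mul_neg, Finset.sum_neg_distrib]

/-- One step of support shrinking along an integer kernel direction. -/
lemma shrink_step (A : ρ → γ → ℤ) (x : γ → ℚ) (hx0 : ∀ j, 0 ≤ x j)
    (w : γ → ℤ) (hwker : IsKer A w)
    (hwsupp : ∀ j, w j ≠ 0 → x j ≠ 0) (hwpos : ∃ j, 0 < w j) :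
    ∃ t : ℚ, 0 < t ∧ (∀ j, 0 ≤ x j - t * (w j : ℚ)) ∧
      (IsKerQ A x → IsKerQ A (fun j => x j - t * (w j : ℚ))) ∧
      (Finset.univ.filter (fun j => (x j - t * (w j : ℚ)) ≠ 0)).card <
        (Finset.univ.filter (fun j => x j ≠ 0)).card := by
  classical
  set P := Finset.univ.filter (fun j => 0 < w j) with hP
  have hPne : P.Nonempty := by
    obtain ⟨j, hj⟩ := hwpos
    exact ⟨j, by simp [hP, hj]⟩
  set t := P.inf' hPne (fun j => x j / (w j : ℚ)) with ht
  have hxpos : ∀ j ∈ P, 0 < x j := by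
    intro j hj
    rw [hP, Finset.mem_filter] at hj
    have hne := hwsupp j (by omega)
    exact lt_of_le_of_ne (hx0 j) (Ne.symm hne)
  have htpos : 0 < t := by
    rw [ht]
    obtain ⟨j, hjP, hje⟩ := Finset.exists_mem_eq_inf' hPne (fun j => x j / (w j : ℚ))
    rw [hje]
    apply div_pos (hxpos j hjP)
    rw [hP, Finset.mem_filter] at hjP
    exact_mod_cast hjP.2
  have hnonneg : ∀ j, 0 ≤ x j - t * (w j : ℚ) := by
    intro j
    rcases lt_trichotomy (w j) 0 with h | h | h
    · have : t * (w j : ℚ) < 0 := by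
        apply mul_neg_of_pos_of_neg htpos
        exact_mod_cast h
      nlinarith [hx0 j]
    · rw [h]; simpa using hx0 j
    · have hjP : j ∈ P := by simp [hP, h]
      have hle : t ≤ x j / (w j : ℚ) := Finset.inf'_le _ hjP
      have hwq : (0:ℚ) < (w j : ℚ) := by exact_mod_cast h
      rw [le_div_iff₀ hwq] at hle
      linarith
  refine ⟨t, htpos, hnonneg, ?_, ?_⟩
  · intro hker i
    have h1 : dotQ A i (fun j => x j - t * (w j : ℚ))
        = dotQ A i x - t * ((dotZ A i w : ℤ) : ℚ) := by
      unfold dotQ dotZ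
      push_cast
      rw [Finset.mul_sum, ← Finset.sum_sub_distrib]
      apply Finset.sum_congr rfl
      intro j _
      ring
    rw [h1, hker i, hwker i]
    simp
  · -- support shrinks
    obtain ⟨j₀, hj₀P, hj₀e⟩ := Finset.exists_mem_eq_inf' hPne (fun j => x j / (w j : ℚ))
    have hj₀w : (0:ℚ) < (w j₀ : ℚ) := by
      rw [hP, Finset.mem_filter] at hj₀P
      exact_mod_cast hj₀P.2
    have hzero : x j₀ - t * (w j₀ : ℚ) = 0 := by
      have h' : t = x j₀ / (w j₀ : ℚ) := by rw [ht]; exact hj₀e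
      rw [h']
      field_simp
      ring
    apply Finset.card_lt_card
    rw [Finset.ssubset_iff_of_subset]
    · refine ⟨j₀, ?_, ?_⟩
      · simp only [Finset.mem_filter, Finset.mem_univ, true_and]
        exact hwsupp j₀ (by rw [hP, Finset.mem_filter] at hj₀P; omega)
      · simp only [Finset.mem_filter, Finset.mem_univ, true_and, not_not]
        exact hzero
    · intro j hj
      simp only [Finset.mem_filter, Finset.mem_univ, true_and] at hj ⊢
      intro hxj
      apply hj
      by_cases hw : w j = 0
      · rw [hxj, hw]; simp
      · exact absurd (hwsupp j hw) (by simp [hxj])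

/-- a conic decomposition of `x` into small non-negative integer kernel vectors -/
def Decomp (A : ρ → γ → ℤ) (R : ℕ) (x : γ → ℚ) (n : ℕ)
    (Y : Fin n → γ → ℕ) (Λ : Fin n → ℚ) : Prop :=
  (∀ k, Y k ≠ 0) ∧ (∀ k, IsKer A (fun j => (Y k j : ℤ))) ∧
  (∀ k, ∑ j, Y k j ≤ R) ∧ (∀ k, 0 ≤ Λ k) ∧
  (∀ j, x j = ∑ k, Λ k * (Y k j : ℚ))

theorem exists_decomp (A : ρ → γ → ℤ) (a d : ℕ) (hd : Fintype.card ρ = d)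
    (hd1 : 1 ≤ d) (ha1 : 1 ≤ a) (ha : ∀ i j, (A i j).natAbs ≤ a)
    (x : γ → ℚ) (hx0 : ∀ j, 0 ≤ x j) (hker : IsKerQ A x) :
    ∃ n Y Λ, Decomp A ((d+1) * Hb a d) x n Y Λ := by
  classical
  set R := (d+1) * Hb a d with hR
  suffices h : ∀ (N : ℕ) (x : γ → ℚ), (Finset.univ.filter (fun j => x j ≠ 0)).card ≤ N →
      (∀ j, 0 ≤ x j) → IsKerQ A x → ∃ n Y Λ, Decomp A R x n Y Λ by
    exact h _ x le_rfl hx0 hker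
  intro N
  induction N with
  | zero =>
    intro x hcard hx0 hker
    have hx : x = 0 := by
      funext j
      simp only [Pi.zero_apply]
      by_contra hj
      have : j ∈ Finset.univ.filter (fun j => x j ≠ 0) := by simp [hj]
      have := Finset.card_pos.mpr ⟨j, this⟩
      omega
    subst hx
    exact ⟨0, Fin.elim0, Fin.elim0, (fun k => k.elim0), (fun k => k.elim0),
      (fun k => k.elim0), (fun k => k.elim0), by intro j; simp⟩
  | succ N ih =>
    intro x hcard hx0 hker
    by_cases hx : x = 0
    · subst hx
      exact ⟨0, Fin.elim0, Fin.elim0, (fun k => k.elim0), (fun k => k.elim0),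
        (fun k => k.elim0), (fun k => k.elim0), by intro j; simp⟩
    set T := Finset.univ.filter (fun j => x j ≠ 0) with hT
    have hTne : T.Nonempty := by
      by_contra h
      rw [Finset.not_nonempty_iff_eq_empty] at h
      apply hx
      funext j
      simp only [Pi.zero_apply]
      by_contra hj
      have : j ∈ T := by simp [hT, hj]
      rw [h] at this
      simp at this
    -- choose S
    obtain ⟨S, hST, hSc, hdep⟩ : ∃ S : Finset γ, S ⊆ T ∧ S.card ≤ d + 1 ∧
        (S.card = d + 1 ∨ ∃ z : γ → ℚ, z ≠ 0 ∧ (∀ j, z j ≠ 0 → j ∈ S) ∧ IsKerQ A z) := by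
      by_cases hTc : T.card ≤ d + 1
      · refine ⟨T, le_refl _, hTc, Or.inr ⟨x, hx, ?_, hker⟩⟩
        intro j hj
        simp [hT, hj]
      · obtain ⟨S, hST, hSc⟩ := Finset.exists_subset_card_eq (show d+1 ≤ T.card by omega)
        exact ⟨S, hST, le_of_eq hSc, Or.inl hSc⟩
    obtain ⟨y₀, hy₀nz, hy₀supp, hy₀ker, hy₀bd⟩ :=
      exists_small_kernel A a d hd hd1 ha1 ha S hSc hdep
    -- normalize: make sure y has a positive entry
    obtain ⟨y, hynz, hysupp, hyker, hybd, hypos⟩ :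
        ∃ y : γ → ℤ, y ≠ 0 ∧ (∀ j, y j ≠ 0 → j ∈ S) ∧ IsKer A y ∧
          (∀ j, (y j).natAbs ≤ Hb a d) ∧ ∃ j, 0 < y j := by
      by_cases h : ∃ j, 0 < y₀ j
      · exact ⟨y₀, hy₀nz, hy₀supp, hy₀ker, hy₀bd, h⟩
      · push_neg at h
        obtain ⟨j₀, hj₀⟩ : ∃ j, y₀ j ≠ 0 := by
          by_contra hh; push_neg at hh; exact hy₀nz (funext hh)
        refine ⟨-y₀, ?_, ?_, ?_, ?_, ⟨j₀, ?_⟩⟩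
        · intro hh
          apply hy₀nz
          funext j
          have := congrFun hh j
          simp only [Pi.neg_apply, Pi.zero_apply] at this ⊢
          omega
        · intro j hj
          apply hy₀supp j
          simp only [Pi.neg_apply] at hj
          omega
        · intro i
          rw [dotZ_neg, hy₀ker i, neg_zero]
        · intro j
          simp only [Pi.neg_apply, Int.natAbs_neg]
          exact hy₀bd j
        · have := h j₀
          simp only [Pi.neg_apply]
          omega
    have hysuppx : ∀ j, y j ≠ 0 → x j ≠ 0 := by
      intro j hj
      have := hST (hysupp j hj)
      rw [hT, Finset.mem_filter] at this
      exact this.2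
    -- ℓ¹ bound for y
    have hyR : ∑ j, (y j).natAbs ≤ R := by
      have h1 : ∑ j, (y j).natAbs = ∑ j ∈ S, (y j).natAbs := by
        rw [← Finset.sum_subset S.subset_univ]
        intro j _ hj
        have : y j = 0 := by
          by_contra hh; exact hj (hysupp j hh)
        rw [this]; rfl
      rw [h1, hR]
      calc ∑ j ∈ S, (y j).natAbs ≤ S.card * Hb a d :=
            Finset.sum_le_card_nsmul _ _ _ (fun j _ => hybd j)
        _ ≤ (d+1) * Hb a d := Nat.mul_le_mul_right _ hSc
    by_cases hneg : ∃ j, y j < 0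
    · -- mixed signs: write x as a convex combination of two smaller-support vectors
      obtain ⟨tp, htp, hxp0, hxpker, hxpcard⟩ :=
        shrink_step A x hx0 (-y) (fun i => by rw [dotZ_neg, hyker i, neg_zero])
          (fun j hj => hysuppx j (by simpa using hj))
          (by obtain ⟨j, hj⟩ := hneg
              refine ⟨j, ?_⟩
              simp only [Pi.neg_apply]
              omega)
      obtain ⟨tm, htm, hxm0, hxmker, hxmcard⟩ :=
        shrink_step A x hx0 y hyker hysuppx hypos
      rw [← hT] at hxpcard hxmcard
      obtain ⟨n1, Y1, Λ1, hY1nz, hY1ker, hY1R, hΛ1, hsum1⟩ :=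
        ih (fun j => x j - tp * (((-y) j : ℤ) : ℚ)) (by beta_reduce; omega) hxp0 (hxpker hker)
      obtain ⟨n2, Y2, Λ2, hY2nz, hY2ker, hY2R, hΛ2, hsum2⟩ :=
        ih (fun j => x j - tm * ((y j : ℤ) : ℚ)) (by beta_reduce; omega) hxm0 (hxmker hker)
      have htpm : 0 < tp + tm := by linarith
      have hθp0 : 0 ≤ tm / (tp + tm) := by positivity
      have hθm0 : 0 ≤ tp / (tp + tm) := by positivity
      have hxcomb : ∀ j, x j = (tm / (tp + tm)) * (x j - tp * (((-y) j : ℤ) : ℚ))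
          + (tp / (tp + tm)) * (x j - tm * ((y j : ℤ) : ℚ)) := by
        intro j
        simp only [Pi.neg_apply, Int.cast_neg]
        field_simp
        ring
      have hsum1' : ∀ j, x j - tp * (((-y) j : ℤ) : ℚ) = ∑ k, Λ1 k * (Y1 k j : ℚ) :=
        fun j => hsum1 j
      have hsum2' : ∀ j, x j - tm * ((y j : ℤ) : ℚ) = ∑ k, Λ2 k * (Y2 k j : ℚ) :=
        fun j => hsum2 j
      refine ⟨n1 + n2, Fin.append Y1 Y2,
        Fin.append (fun k => (tm / (tp + tm)) * Λ1 k) (fun k => (tp / (tp + tm)) * Λ2 k),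
        ?_, ?_, ?_, ?_, ?_⟩
      · intro k
        refine Fin.addCases (motive := fun k => Fin.append Y1 Y2 k ≠ 0)
          (fun i => ?_) (fun i => ?_) k
        · simp only [Fin.append_left]; exact hY1nz i
        · simp only [Fin.append_right]; exact hY2nz i
      · intro k
        refine Fin.addCases
          (motive := fun k => IsKer A fun j => ((Fin.append Y1 Y2 k j : ℕ) : ℤ))
          (fun i => ?_) (fun i => ?_) k
        · simp only [Fin.append_left]; exact hY1ker i
        · simp only [Fin.append_right]; exact hY2ker i
      · intro k
        refine Fin.addCases (motive := fun k => ∑ j, Fin.append Y1 Y2 k j ≤ R)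
          (fun i => ?_) (fun i => ?_) k
        · simp only [Fin.append_left]; exact hY1R i
        · simp only [Fin.append_right]; exact hY2R i
      · intro k
        refine Fin.addCases
          (motive := fun k => 0 ≤ Fin.append (fun k => (tm / (tp + tm)) * Λ1 k)
            (fun k => (tp / (tp + tm)) * Λ2 k) k)
          (fun i => ?_) (fun i => ?_) k
        · simp only [Fin.append_left]; exact mul_nonneg hθp0 (hΛ1 i)
        · simp only [Fin.append_right]; exact mul_nonneg hθm0 (hΛ2 i)
      · intro j
        rw [Fin.sum_univ_add]
        simp only [Fin.append_left, Fin.append_right]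
        rw [hxcomb j, hsum1' j, hsum2' j, Finset.mul_sum, Finset.mul_sum]
        congr 1
        · exact Finset.sum_congr rfl (fun i _ => by ring)
        · exact Finset.sum_congr rfl (fun i _ => by ring)
    · -- y is non-negative: peel off one ray
      push_neg at hneg
      have hy0 : ∀ j, 0 ≤ y j := hneg
      obtain ⟨t, htpos, hx'0, hx'ker, hx'card⟩ :=
        shrink_step A x hx0 y hyker hysuppx hypos
      rw [← hT] at hx'card
      obtain ⟨n', Y', Λ', hY'nz, hY'ker, hY'R, hΛ', hsum'⟩ :=
        ih (fun j => x j - t * ((y j : ℤ) : ℚ)) (by beta_reduce; omega) hx'0 (hx'ker hker)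
      have hyncast : ∀ j, (((y j).toNat : ℕ) : ℤ) = y j := fun j => Int.toNat_of_nonneg (hy0 j)
      refine ⟨n'+1, Fin.cons (fun j => (y j).toNat) Y', Fin.cons t Λ', ?_, ?_, ?_, ?_, ?_⟩
      · intro k
        refine Fin.cases ?_ ?_ k
        · rw [Fin.cons_zero]
          intro hh
          obtain ⟨j, hj⟩ := hypos
          have := congrFun hh j
          simp only [Pi.zero_apply] at this
          omega
        · intro i; rw [Fin.cons_succ]; exact hY'nz i
      · intro k
        refine Fin.cases ?_ ?_ k
        · simp only [Fin.cons_zero]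
          have heq : (fun j => (((y j).toNat : ℕ) : ℤ)) = y := funext hyncast
          rw [heq]
          exact hyker
        · intro i; simp only [Fin.cons_succ]; exact hY'ker i
      · intro k
        refine Fin.cases ?_ ?_ k
        · simp only [Fin.cons_zero]
          calc ∑ j, (y j).toNat = ∑ j, (y j).natAbs := by
                refine Finset.sum_congr rfl (fun j _ => ?_)
                have := hy0 j
                omega
            _ ≤ R := hyR
        · intro i; simp only [Fin.cons_succ]; exact hY'R i
      · intro k
        refine Fin.cases ?_ ?_ k
        · rw [Fin.cons_zero]; exact le_of_lt htpos
        · intro i; rw [Fin.cons_succ]; exact hΛ' i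
      · intro j
        have hsum'' : ∀ j, x j - t * ((y j : ℤ) : ℚ) = ∑ k, Λ' k * (Y' k j : ℚ) :=
          fun j => hsum' j
        rw [Fin.sum_univ_succ]
        simp only [Fin.cons_zero, Fin.cons_succ]
        have h1 : x j = t * ((y j : ℤ) : ℚ) + (x j - t * ((y j : ℤ) : ℚ)) := by ring
        rw [h1, hsum'' j]
        have h2 : (((y j).toNat : ℕ) : ℚ) = ((y j : ℤ) : ℚ) := by exact_mod_cast hyncast j
        rw [h2]


/-- Carathéodory compression: a decomposition can be shortened to `≤ card γ` rays. -/
theorem decomp_compress (A : ρ → γ → ℤ) (R : ℕ) (x : γ → ℚ) :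
    ∀ n (Y : Fin n → γ → ℕ) (Λ : Fin n → ℚ), Decomp A R x n Y Λ →
      ∃ n' Y' Λ', n' ≤ Fintype.card γ ∧ Decomp A R x n' Y' Λ' := by
  intro n
  induction n using Nat.strong_induction_on with
  | _ n ih =>
    intro Y Λ hD
    by_cases hn : n ≤ Fintype.card γ
    · exact ⟨n, Y, Λ, hn, hD⟩
    · obtain ⟨hYnz, hYker, hYR, hΛ0, hsum⟩ := hD
      have hdep : ¬ LinearIndependent ℚ (fun k : Fin n => fun j => (Y k j : ℚ)) := by
        intro hli
        have := hli.fintype_card_le_finrank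
        rw [Fintype.card_fin, Module.finrank_pi] at this
        omega
      rw [Fintype.not_linearIndependent_iff] at hdep
      obtain ⟨g₀, hg₀, k₀', hk₀'⟩ := hdep
      obtain ⟨g, hg, hgpos⟩ : ∃ g : Fin n → ℚ,
          (∀ j, ∑ k, g k * (Y k j : ℚ) = 0) ∧ ∃ k, 0 < g k := by
        have hg₀' : ∀ j, ∑ k, g₀ k * (Y k j : ℚ) = 0 := by
          intro j
          have := congrFun hg₀ j
          simpa [Finset.sum_apply] using this
        rcases lt_trichotomy (g₀ k₀') 0 with h | h | h
        · refine ⟨-g₀, fun j => ?_, ⟨k₀', by simpa using h⟩⟩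
          simp only [Pi.neg_apply, neg_mul]
          rw [Finset.sum_neg_distrib, hg₀' j, neg_zero]
        · exact absurd h hk₀'
        · exact ⟨g₀, hg₀', ⟨k₀', h⟩⟩
      set P := Finset.univ.filter (fun k => 0 < g k) with hP
      have hPne : P.Nonempty := by
        obtain ⟨k, hk⟩ := hgpos
        exact ⟨k, by simp [hP, hk]⟩
      set t := P.inf' hPne (fun k => Λ k / g k) with ht
      have ht0 : 0 ≤ t := by
        rw [ht]
        apply Finset.le_inf' hPne
        intro k hk
        rw [hP, Finset.mem_filter] at hk
        exact div_nonneg (hΛ0 k) (le_of_lt hk.2)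
      have hΛ2 : ∀ k, 0 ≤ Λ k - t * g k := by
        intro k
        rcases le_or_gt (g k) 0 with h | h
        · have : t * g k ≤ 0 := mul_nonpos_of_nonneg_of_nonpos ht0 h
          have := hΛ0 k
          linarith
        · have hkP : k ∈ P := by simp [hP, h]
          have hle : t ≤ Λ k / g k := Finset.inf'_le _ hkP
          rw [le_div_iff₀ h] at hle
          linarith
      obtain ⟨k₀, hk₀P, hk₀e⟩ := Finset.exists_mem_eq_inf' hPne (fun k => Λ k / g k)
      have hk₀z : Λ k₀ - t * g k₀ = 0 := by
        have hgk₀ : 0 < g k₀ := by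
          rw [hP, Finset.mem_filter] at hk₀P
          exact hk₀P.2
        have h' : t = Λ k₀ / g k₀ := by rw [ht]; exact hk₀e
        rw [h']
        field_simp
        ring
      have hsum2 : ∀ j, x j = ∑ k, (Λ k - t * g k) * (Y k j : ℚ) := by
        intro j
        have h1 : ∑ k, (Λ k - t * g k) * (Y k j : ℚ)
            = (∑ k, Λ k * (Y k j : ℚ)) - t * ∑ k, g k * (Y k j : ℚ) := by
          rw [Finset.mul_sum, ← Finset.sum_sub_distrib]
          exact Finset.sum_congr rfl (fun k _ => by ring)
        rw [h1, hg j, mul_zero, sub_zero]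
        exact hsum j
      rcases n with _ | m
      · exfalso; omega
      refine ih m (by omega) (fun i => Y (k₀.succAbove i))
        (fun i => Λ (k₀.succAbove i) - t * g (k₀.succAbove i))
        ⟨fun i => hYnz _, fun i => hYker _, fun i => hYR _, fun i => hΛ2 _, ?_⟩
      intro j
      rw [hsum2 j, Fin.sum_univ_succAbove _ k₀, hk₀z, zero_mul, zero_add]

/-- The main splitting theorem: a large non-negative integer kernel vector
splits off a proper nonzero kernel subvector. -/
theorem core_split (A : ρ → γ → ℤ) (a d : ℕ) (hd : Fintype.card ρ = d) (hd1 : 1 ≤ d)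
    (ha1 : 1 ≤ a) (ha : ∀ i j, (A i j).natAbs ≤ a) (x : γ → ℕ)
    (hker : IsKer A (fun j => (x j : ℤ)))
    (hbig : Fintype.card γ * ((d+1) * Hb a d) < ∑ j, x j) :
    ∃ u : γ → ℕ, (∀ j, u j ≤ x j) ∧ u ≠ 0 ∧ u ≠ x ∧ IsKer A (fun j => (u j : ℤ)) := by
  classical
  set R := (d+1) * Hb a d with hR
  have hq1 : 1 ≤ Fintype.card γ := by
    by_contra h
    have h0 : Fintype.card γ = 0 := by omega
    haveI := Fintype.card_eq_zero_iff.mp h0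
    rw [Finset.univ_eq_empty] at hbig
    simp at hbig
  have hkerQ : IsKerQ A (fun j => ((x j : ℕ) : ℚ)) := by
    intro i
    have h0 := hker i
    unfold dotZ at h0
    have h1 : ((∑ j, A i j * ((x j : ℕ) : ℤ) : ℤ) : ℚ) = 0 := by rw [h0]; simp
    push_cast at h1
    unfold dotQ
    convert h1 using 2
  obtain ⟨n₀, Y₀, Λ₀, hD₀⟩ := exists_decomp A a d hd hd1 ha1 ha
    (fun j => ((x j : ℕ) : ℚ)) (fun j => by positivity) hkerQ
  obtain ⟨n, Y, Λ, hn, hYnz, hYker, hYR, hΛ0, hsum₀⟩ := decomp_compress A R _ n₀ Y₀ Λ₀ hD₀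
  have hsum : ∀ j, ((x j : ℕ) : ℚ) = ∑ k, Λ k * ((Y k j : ℕ) : ℚ) := fun j => hsum₀ j
  by_cases hone : ∃ k, 1 ≤ Λ k
  · obtain ⟨k, hk⟩ := hone
    refine ⟨Y k, ?_, hYnz k, ?_, hYker k⟩
    · intro j
      have h1 : ((Y k j : ℕ) : ℚ) ≤ ((x j : ℕ) : ℚ) := by
        rw [hsum j]
        calc ((Y k j : ℕ) : ℚ) ≤ Λ k * ((Y k j : ℕ) : ℚ) := by
              nlinarith [hk, (Nat.cast_nonneg (Y k j) : (0:ℚ) ≤ _)]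
          _ ≤ ∑ k', Λ k' * ((Y k' j : ℕ) : ℚ) := by
              apply Finset.single_le_sum (f := fun k' => Λ k' * ((Y k' j : ℕ) : ℚ))
                (fun k' _ => mul_nonneg (hΛ0 k') (by positivity)) (Finset.mem_univ k)
      exact_mod_cast h1
    · intro he
      have h2 := hYR k
      rw [he] at h2
      have h3 : R ≤ Fintype.card γ * R := Nat.le_mul_of_pos_left R (by omega)
      omega
  · push_neg at hone
    exfalso
    have h1 : (∑ j, ((x j : ℕ) : ℚ)) = ∑ k, Λ k * (∑ j, ((Y k j : ℕ) : ℚ)) := by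
      calc (∑ j, ((x j : ℕ) : ℚ)) = ∑ j, ∑ k, Λ k * ((Y k j : ℕ) : ℚ) :=
            Finset.sum_congr rfl (fun j _ => hsum j)
        _ = ∑ k, ∑ j, Λ k * ((Y k j : ℕ) : ℚ) := Finset.sum_comm
        _ = ∑ k, Λ k * (∑ j, ((Y k j : ℕ) : ℚ)) :=
            Finset.sum_congr rfl (fun k _ => (Finset.mul_sum _ _ _).symm)
    have h2 : ∀ k ∈ Finset.univ (α := Fin n), Λ k * (∑ j, ((Y k j : ℕ) : ℚ)) ≤ (R : ℚ) := by
      intro k _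
      have hYs : (∑ j, ((Y k j : ℕ) : ℚ)) ≤ (R : ℚ) := by
        have := hYR k
        exact_mod_cast this
      have hs0 : (0:ℚ) ≤ ∑ j, ((Y k j : ℕ) : ℚ) := by positivity
      calc Λ k * (∑ j, ((Y k j : ℕ) : ℚ)) ≤ 1 * (∑ j, ((Y k j : ℕ) : ℚ)) :=
            mul_le_mul_of_nonneg_right (le_of_lt (hone k)) hs0
        _ = ∑ j, ((Y k j : ℕ) : ℚ) := one_mul _
        _ ≤ (R : ℚ) := hYs
    have h3 : (∑ j, ((x j : ℕ) : ℚ)) ≤ (n : ℚ) * R := by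
      rw [h1]
      calc ∑ k, Λ k * (∑ j, ((Y k j : ℕ) : ℚ)) ≤ ∑ _k : Fin n, (R : ℚ) :=
            Finset.sum_le_sum h2
        _ = (n : ℚ) * R := by
            rw [Finset.sum_const, Finset.card_univ, Fintype.card_fin, nsmul_eq_mul]
    have h6 : ((Fintype.card γ * R : ℕ) : ℚ) < ((∑ j, x j : ℕ) : ℚ) := by
      exact_mod_cast hbig
    push_cast at h6
    have h7 : (n : ℚ) ≤ (Fintype.card γ : ℚ) := by exact_mod_cast hn
    have h8 : (0:ℚ) ≤ (R : ℚ) := by positivity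
    nlinarith

end TBNCore



namespace TBNSurgery

open Config

variable {D I : Type} [Fintype I] [Fintype D] [DecidableEq I] {mon : I → Monomer D}

instance : Finite (PrimInst mon) := by unfold PrimInst; infer_instance
instance : Finite (StarInst mon) := by unfold StarInst; infer_instance

/-- the monomer set of part `t` -/
def SPart (S1 S2 : Finset I) (t : Bool) : Finset I := cond t S1 S2

/-- primary instances of type `x` in part `t` -/
def PTy (S1 S2 : Finset I) (mon : I → Monomer D) (t : Bool) (x : D) : Type :=
  {p : PrimInst mon // p.1 ∈ SPart S1 S2 t ∧ p.2.1 = x}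

/-- star instances of type `x` in part `t` -/
def STy (S1 S2 : Finset I) (mon : I → Monomer D) (t : Bool) (x : D) : Type :=
  {s : StarInst mon // s.1 ∈ SPart S1 S2 t ∧ s.2.1 = x}

instance (S1 S2 : Finset I) (t : Bool) (x : D) : Finite (PTy S1 S2 mon t x) := by
  unfold PTy; infer_instance

instance (S1 S2 : Finset I) (t : Bool) (x : D) : Finite (STy S1 S2 mon t x) := by
  unfold STy; infer_instance

variable (S1 S2 : Finset I)

/-- number of primary instances of type `x` in part `t` -/
noncomputable def nP (t : Bool) (x : D) : ℕ := Nat.card (PTy S1 S2 mon t x)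

noncomputable def nS (t : Bool) (x : D) : ℕ := Nat.card (STy S1 S2 mon t x)

noncomputable def eP (t : Bool) (x : D) :
    PTy S1 S2 mon t x ≃ Fin (nP (mon := mon) S1 S2 t x) := Finite.equivFin _

noncomputable def eS (t : Bool) (x : D) :
    STy S1 S2 mon t x ≃ Fin (nS (mon := mon) S1 S2 t x) := Finite.equivFin _

/-- canonical maximum matching inside part `t` for domain type `x` -/
noncomputable def innerBond (t : Bool) (x : D) (pp : PTy S1 S2 mon t x) :
    Option (StarInst mon) :=
  if h : ((eP S1 S2 t x) pp : ℕ) < nS (mon := mon) S1 S2 t x then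
    some (((eS S1 S2 t x).symm ⟨((eP S1 S2 t x) pp : ℕ), h⟩) : STy S1 S2 mon t x).1
  else none

/-- the new bond function after the split -/
noncomputable def newBond (α : Config mon) (p : PrimInst mon) : Option (StarInst mon) :=
  if h1 : p.1 ∈ S1 then innerBond S1 S2 true p.2.1 ⟨p, h1, rfl⟩
  else if h2 : p.1 ∈ S2 then innerBond S1 S2 false p.2.1 ⟨p, h2, rfl⟩
  else α.bond p

lemma inner_some {t : Bool} {x : D} {pp : PTy S1 S2 mon t x} {s : StarInst mon}
    (h : innerBond S1 S2 t x pp = some s) : s.1 ∈ SPart S1 S2 t ∧ s.2.1 = x := by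
  unfold innerBond at h
  split at h
  · obtain rfl : (((eS S1 S2 t x).symm ⟨_, by assumption⟩) : STy S1 S2 mon t x).1 = s :=
      Option.some_injective _ h
    exact (((eS S1 S2 t x).symm ⟨_, by assumption⟩) : STy S1 S2 mon t x).2
  · exact absurd h (by simp)

lemma inner_inj {t : Bool} {x x' : D} {pp : PTy S1 S2 mon t x} {qq : PTy S1 S2 mon t x'}
    {s : StarInst mon} (h1 : innerBond S1 S2 t x pp = some s)
    (h2 : innerBond S1 S2 t x' qq = some s) : pp.1 = qq.1 := by
  have hx : x = x' := by
    rw [(inner_some S1 S2 h1).2.symm, (inner_some S1 S2 h2).2.symm]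
  subst hx
  unfold innerBond at h1 h2
  split at h1
  · split at h2
    · have h3 := Option.some_injective _ h1
      have h4 := Option.some_injective _ h2
      have h5 : ((eS S1 S2 t x).symm ⟨((eP S1 S2 t x) pp : ℕ), by assumption⟩)
          = ((eS S1 S2 t x).symm ⟨((eP S1 S2 t x) qq : ℕ), by assumption⟩) := by
        apply Subtype.ext
        rw [h3, h4]
      have h6 := (eS S1 S2 t x).symm.injective h5
      have h7 : ((eP S1 S2 t x) pp : ℕ) = ((eP S1 S2 t x) qq : ℕ) := by
        have := congrArg Fin.val h6
        simpa using this
      have h8 : (eP S1 S2 t x) pp = (eP S1 S2 t x) qq := Fin.ext h7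
      have := (eP S1 S2 t x).injective h8
      rw [this]
    · exact absurd h2 (by simp)
  · exact absurd h1 (by simp)

lemma inner_congr {t : Bool} {x x' : D} (hxx : x = x') (pp : PTy S1 S2 mon t x)
    (qq : PTy S1 S2 mon t x') (h : pp.1 = qq.1) :
    innerBond S1 S2 t x pp = innerBond S1 S2 t x' qq := by
  subst hxx
  rw [Subtype.ext h]

lemma inner_none {t : Bool} {x : D} {pp : PTy S1 S2 mon t x}
    (h : innerBond S1 S2 t x pp = none) :
    nS (mon := mon) S1 S2 t x < nP (mon := mon) S1 S2 t x := by
  unfold innerBond at h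
  split at h
  · exact absurd h (by simp)
  · have h1 : nS (mon := mon) S1 S2 t x ≤ ((eP S1 S2 t x) pp : ℕ) := by omega
    exact lt_of_le_of_lt h1 ((eP S1 S2 t x) pp).isLt

lemma inner_total {t : Bool} {x : D} (ss : STy S1 S2 mon t x)
    (h : ((eS S1 S2 t x) ss : ℕ) < nP (mon := mon) S1 S2 t x) :
    innerBond S1 S2 t x ((eP S1 S2 t x).symm ⟨((eS S1 S2 t x) ss : ℕ), h⟩) = some ss.1 := by
  unfold innerBond
  rw [Equiv.apply_symm_apply]
  have hc : ((⟨((eS S1 S2 t x) ss : ℕ), h⟩ : Fin _) : ℕ) < nS (mon := mon) S1 S2 t x :=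
    ((eS S1 S2 t x) ss).isLt
  rw [dif_pos hc]
  congr
  have h2 : (⟨((⟨((eS S1 S2 t x) ss : ℕ), h⟩ : Fin _) : ℕ), hc⟩ : Fin _) = (eS S1 S2 t x) ss :=
    Fin.ext rfl
  rw [h2, Equiv.symm_apply_apply]


variable (α : Config mon)

lemma newBond_in1 (p : PrimInst mon) (h : p.1 ∈ S1) :
    newBond S1 S2 α p = innerBond S1 S2 true p.2.1 ⟨p, h, rfl⟩ := dif_pos h

lemma newBond_in2 (hd : Disjoint S1 S2) (p : PrimInst mon) (h : p.1 ∈ S2) :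
    newBond S1 S2 α p = innerBond S1 S2 false p.2.1 ⟨p, h, rfl⟩ := by
  unfold newBond
  rw [dif_neg (fun h1 => Finset.disjoint_left.mp hd h1 h), dif_pos h]

lemma newBond_out (p : PrimInst mon) (h1 : p.1 ∉ S1) (h2 : p.1 ∉ S2) :
    newBond S1 S2 α p = α.bond p := by
  unfold newBond
  rw [dif_neg h1, dif_neg h2]

lemma newBond_loc (hd : Disjoint S1 S2) {p : PrimInst mon} {s : StarInst mon}
    (hb : newBond S1 S2 α p = some s) :
    (p.1 ∈ S1 ∧ s.1 ∈ S1 ∧ s.2.1 = p.2.1) ∨ (p.1 ∈ S2 ∧ s.1 ∈ S2 ∧ s.2.1 = p.2.1) ∨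
    (p.1 ∉ S1 ∧ p.1 ∉ S2 ∧ α.bond p = some s) := by
  by_cases h1 : p.1 ∈ S1
  · rw [newBond_in1 S1 S2 α p h1] at hb
    exact Or.inl ⟨h1, (inner_some S1 S2 hb).1, (inner_some S1 S2 hb).2⟩
  · by_cases h2 : p.1 ∈ S2
    · rw [newBond_in2 S1 S2 α hd p h2] at hb
      exact Or.inr (Or.inl ⟨h2, (inner_some S1 S2 hb).1, (inner_some S1 S2 hb).2⟩)
    · rw [newBond_out S1 S2 α p h1 h2] at hb
      exact Or.inr (Or.inr ⟨h1, h2, hb⟩)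

/-- The configuration obtained by re-matching the two parts internally. -/
noncomputable def newConfig (hd : Disjoint S1 S2)
    (hcl : ∀ (p : PrimInst mon) (s : StarInst mon), α.bond p = some s →
      ((p.1 ∈ S1 ∨ p.1 ∈ S2) ↔ (s.1 ∈ S1 ∨ s.1 ∈ S2))) : Config mon where
  bond := newBond S1 S2 α
  inj := by
    intro p q s hp hq
    rcases newBond_loc S1 S2 α hd hp with ⟨hp1, hs1, _⟩ | ⟨hp1, hs1, _⟩ | ⟨hp1, hp2, hpb⟩ <;>
      rcases newBond_loc S1 S2 α hd hq with ⟨hq1, hs1', _⟩ | ⟨hq1, hs1', _⟩ | ⟨hq1, hq2, hqb⟩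
    · rw [newBond_in1 S1 S2 α p hp1] at hp
      rw [newBond_in1 S1 S2 α q hq1] at hq
      exact inner_inj S1 S2 hp hq
    · exact absurd hs1 (Finset.disjoint_right.mp hd hs1')
    · rcases (hcl q s hqb).mpr (Or.inl hs1) with h | h
      · exact absurd h hq1
      · exact absurd h hq2
    · exact absurd hs1' (Finset.disjoint_right.mp hd hs1)
    · rw [newBond_in2 S1 S2 α hd p hp1] at hp
      rw [newBond_in2 S1 S2 α hd q hq1] at hq
      exact inner_inj S1 S2 hp hq
    · rcases (hcl q s hqb).mpr (Or.inr hs1) with h | h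
      · exact absurd h hq1
      · exact absurd h hq2
    · rcases (hcl p s hpb).mpr (Or.inl hs1') with h | h
      · exact absurd h hp1
      · exact absurd h hp2
    · rcases (hcl p s hpb).mpr (Or.inr hs1') with h | h
      · exact absurd h hp1
      · exact absurd h hp2
    · exact α.inj p q s hpb hqb
  compat := by
    intro p s hb
    rcases newBond_loc S1 S2 α hd hb with ⟨_, _, hx⟩ | ⟨_, _, hx⟩ | ⟨h1, h2, hpb⟩
    · exact hx.symm
    · exact hx.symm
    · exact α.compat p s hpb


lemma prim_count {t : Bool} {p : PrimInst mon} (hd : Disjoint S1 S2)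
    (hp : p.1 ∈ SPart S1 S2 t) (hnone : newBond S1 S2 α p = none) :
    nS (mon := mon) S1 S2 t p.2.1 < nP (mon := mon) S1 S2 t p.2.1 := by
  cases t with
  | true =>
    rw [newBond_in1 S1 S2 α p hp] at hnone
    exact inner_none S1 S2 hnone
  | false =>
    rw [newBond_in2 S1 S2 α hd p hp] at hnone
    exact inner_none S1 S2 hnone

lemma star_count {t : Bool} {s : StarInst mon} (hd : Disjoint S1 S2)
    (hs : s.1 ∈ SPart S1 S2 t)
    (hsun : ∀ q, newBond S1 S2 α q ≠ some s) :
    nP (mon := mon) S1 S2 t s.2.1 < nS (mon := mon) S1 S2 t s.2.1 := by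
  set ss : STy S1 S2 mon t s.2.1 := ⟨s, hs, rfl⟩ with hss
  by_contra hcon
  push_neg at hcon
  have hj : ((eS S1 S2 t s.2.1) ss : ℕ) < nP (mon := mon) S1 S2 t s.2.1 :=
    lt_of_lt_of_le ((eS S1 S2 t s.2.1) ss).isLt hcon
  set pp := (eP S1 S2 t s.2.1).symm ⟨((eS S1 S2 t s.2.1) ss : ℕ), hj⟩ with hpp
  have hib : innerBond S1 S2 t s.2.1 pp = some s := inner_total S1 S2 ss hj
  have hppS : pp.1.1 ∈ SPart S1 S2 t := pp.2.1
  have hppx : pp.1.2.1 = s.2.1 := pp.2.2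
  have hnb : newBond S1 S2 α pp.1 = some s := by
    cases t with
    | true =>
      rw [newBond_in1 S1 S2 α pp.1 hppS]
      rw [inner_congr S1 S2 hppx ⟨pp.1, hppS, rfl⟩ pp rfl]
      exact hib
    | false =>
      rw [newBond_in2 S1 S2 α hd pp.1 hppS]
      rw [inner_congr S1 S2 hppx ⟨pp.1, hppS, rfl⟩ pp rfl]
      exact hib
  exact hsun pp.1 hnb

theorem newConfig_saturated (hd : Disjoint S1 S2)
    (hcl : ∀ (p : PrimInst mon) (s : StarInst mon), α.bond p = some s →
      ((p.1 ∈ S1 ∨ p.1 ∈ S2) ↔ (s.1 ∈ S1 ∨ s.1 ∈ S2)))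
    (hsat : α.Saturated)
    (hH1 : ∀ (x : D) (t u : Bool), nS (mon := mon) S1 S2 t x < nP (mon := mon) S1 S2 t x →
      nS (mon := mon) S1 S2 u x ≤ nP (mon := mon) S1 S2 u x)
    (hH2 : ∀ (x : D) (t : Bool), nS (mon := mon) S1 S2 t x < nP (mon := mon) S1 S2 t x →
      ∃ p : PrimInst mon, p.2.1 = x ∧ α.bond p = none)
    (hH3 : ∀ (x : D) (t : Bool), nP (mon := mon) S1 S2 t x < nS (mon := mon) S1 S2 t x →
      ∃ s : StarInst mon, s.2.1 = x ∧ ∀ q, α.bond q ≠ some s) :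
    (newConfig S1 S2 α hd hcl).Saturated := by
  rintro ⟨p, s, htyp, hpnone, hsun⟩
  have hpnone' : newBond S1 S2 α p = none := hpnone
  have hsun' : ∀ q, newBond S1 S2 α q ≠ some s := hsun
  have hdout : s.1 ∉ S1 → s.1 ∉ S2 → ∀ q, α.bond q ≠ some s := by
    intro hs1 hs2 q hq
    have hqout : ¬ (q.1 ∈ S1 ∨ q.1 ∈ S2) := by
      intro hin
      rcases (hcl q s hq).mp hin with h | h
      · exact hs1 h
      · exact hs2 h
    push_neg at hqout
    apply hsun' q
    rw [newBond_out S1 S2 α q hqout.1 hqout.2]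
    exact hq
  by_cases hp1 : p.1 ∈ S1
  · have hnp := prim_count S1 S2 α (t := true) hd hp1 hpnone'
    by_cases hs1 : s.1 ∈ S1
    · have hns := star_count S1 S2 α (t := true) hd hs1 hsun'
      rw [← htyp] at hns
      have := hH1 p.2.1 true true hnp
      omega
    · by_cases hs2 : s.1 ∈ S2
      · have hns := star_count S1 S2 α (t := false) hd hs2 hsun'
        rw [← htyp] at hns
        have := hH1 p.2.1 true false hnp
        omega
      · obtain ⟨p', hp'x, hp'none⟩ := hH2 p.2.1 true hnp
        exact hsat ⟨p', s, hp'x.trans htyp, hp'none, hdout hs1 hs2⟩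
  · by_cases hp2 : p.1 ∈ S2
    · have hnp := prim_count S1 S2 α (t := false) hd hp2 hpnone'
      by_cases hs1 : s.1 ∈ S1
      · have hns := star_count S1 S2 α (t := true) hd hs1 hsun'
        rw [← htyp] at hns
        have := hH1 p.2.1 false true hnp
        omega
      · by_cases hs2 : s.1 ∈ S2
        · have hns := star_count S1 S2 α (t := false) hd hs2 hsun'
          rw [← htyp] at hns
          have := hH1 p.2.1 false false hnp
          omega
        · obtain ⟨p', hp'x, hp'none⟩ := hH2 p.2.1 false hnp
          exact hsat ⟨p', s, hp'x.trans htyp, hp'none, hdout hs1 hs2⟩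
    · have hpα : α.bond p = none := by
        rw [← newBond_out S1 S2 α p hp1 hp2]
        exact hpnone'
      by_cases hs1 : s.1 ∈ S1
      · have hns := star_count S1 S2 α (t := true) hd hs1 hsun'
        obtain ⟨s', hs'x, hs'un⟩ := hH3 s.2.1 true hns
        exact hsat ⟨p, s', htyp.trans hs'x.symm, hpα, hs'un⟩
      · by_cases hs2 : s.1 ∈ S2
        · have hns := star_count S1 S2 α (t := false) hd hs2 hsun'
          obtain ⟨s', hs'x, hs'un⟩ := hH3 s.2.1 false hns
          exact hsat ⟨p, s', htyp.trans hs'x.symm, hpα, hs'un⟩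
        · exact hsat ⟨p, s, htyp, hpα, hdout hs1 hs2⟩

lemma bond_mk {p : PrimInst mon} {s : StarInst mon} (hb : α.bond p = some s) :
    α.bindingGraph.connectedComponentMk p.1 = α.bindingGraph.connectedComponentMk s.1 := by
  by_cases h : p.1 = s.1
  · rw [h]
  · exact SimpleGraph.ConnectedComponent.sound
      (SimpleGraph.Adj.reachable ⟨h, p, s, hb, Or.inl ⟨rfl, rfl⟩⟩)

theorem entropy_lt (hd : Disjoint S1 S2)
    (hcl : ∀ (p : PrimInst mon) (s : StarInst mon), α.bond p = some s →
      ((p.1 ∈ S1 ∨ p.1 ∈ S2) ↔ (s.1 ∈ S1 ∨ s.1 ∈ S2)))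
    (C : α.bindingGraph.ConnectedComponent)
    (hmem : ∀ i, (i ∈ S1 ∨ i ∈ S2) ↔ α.bindingGraph.connectedComponentMk i = C)
    (hne1 : S1.Nonempty) (hne2 : S2.Nonempty) :
    α.entropy < (newConfig S1 S2 α hd hcl).entropy := by
  set β := newConfig S1 S2 α hd hcl with hβ
  have hadj : ∀ i j, β.bindingGraph.Adj i j →
      α.bindingGraph.connectedComponentMk i = α.bindingGraph.connectedComponentMk j := by
    rintro i j ⟨hne, p, s, hb, hor⟩
    have hb' : newBond S1 S2 α p = some s := hb
    have key : α.bindingGraph.connectedComponentMk p.1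
        = α.bindingGraph.connectedComponentMk s.1 := by
      rcases newBond_loc S1 S2 α hd hb' with ⟨hp1, hs1, _⟩ | ⟨hp1, hs1, _⟩ | ⟨_, _, hpb⟩
      · rw [(hmem p.1).mp (Or.inl hp1), (hmem s.1).mp (Or.inl hs1)]
      · rw [(hmem p.1).mp (Or.inr hp1), (hmem s.1).mp (Or.inr hs1)]
      · exact bond_mk α hpb
    rcases hor with ⟨h1, h2⟩ | ⟨h1, h2⟩
    · rw [← h1, ← h2]; exact key
    · rw [← h1, ← h2]; exact key.symm
  have hwalk : ∀ (i j : I), β.bindingGraph.Walk i j →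
      α.bindingGraph.connectedComponentMk i = α.bindingGraph.connectedComponentMk j := by
    intro i j w
    induction w with
    | nil => rfl
    | cons h _ ih => exact (hadj _ _ h).trans ih
  set φ : β.bindingGraph.ConnectedComponent → α.bindingGraph.ConnectedComponent :=
    SimpleGraph.ConnectedComponent.lift (fun i => α.bindingGraph.connectedComponentMk i)
      (fun v w pw _ => hwalk v w pw) with hφ
  have hφmk : ∀ i, φ (β.bindingGraph.connectedComponentMk i)
      = α.bindingGraph.connectedComponentMk i := fun i => rfl
  have hsurj : Function.Surjective φ := by
    intro c
    obtain ⟨i, rfl⟩ := c.exists_rep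
    exact ⟨β.bindingGraph.connectedComponentMk i, rfl⟩
  -- a walk in β starting in S1 stays in S1
  have hstep : ∀ i j, β.bindingGraph.Adj i j → i ∈ S1 → j ∈ S1 := by
    rintro i j ⟨hne, p, s, hb, hor⟩ hi
    have hb' : newBond S1 S2 α p = some s := hb
    rcases newBond_loc S1 S2 α hd hb' with ⟨hp1, hs1, _⟩ | ⟨hp1, hs1, _⟩ | ⟨hp1, hp2, hpb⟩
    · rcases hor with ⟨h1, h2⟩ | ⟨h1, h2⟩
      · rw [← h2]; exact hs1
      · rw [← h1]; exact hp1
    · exfalso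
      rcases hor with ⟨h1, h2⟩ | ⟨h1, h2⟩
      · exact Finset.disjoint_left.mp hd hi (h1 ▸ hp1)
      · exact Finset.disjoint_left.mp hd hi (h2 ▸ hs1)
    · exfalso
      have hsout : ¬ (s.1 ∈ S1 ∨ s.1 ∈ S2) := by
        intro hin
        rcases (hcl p s hpb).mpr hin with h | h
        · exact hp1 h
        · exact hp2 h
      rcases hor with ⟨h1, h2⟩ | ⟨h1, h2⟩
      · exact hp1 (h1 ▸ hi)
      · exact hsout (Or.inl (h2 ▸ hi))
  have hstay : ∀ i j, β.bindingGraph.Reachable i j → i ∈ S1 → j ∈ S1 := by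
    intro i j hr hi
    obtain ⟨w⟩ := hr
    induction w with
    | nil => exact hi
    | cons h w' ih => exact ih (hstep _ _ h hi)
  obtain ⟨i1, hi1⟩ := hne1
  obtain ⟨i2, hi2⟩ := hne2
  have hninj : ¬ Function.Injective φ := by
    intro hinj
    have h1 : φ (β.bindingGraph.connectedComponentMk i1)
        = φ (β.bindingGraph.connectedComponentMk i2) := by
      rw [hφmk, hφmk, (hmem i1).mp (Or.inl hi1), (hmem i2).mp (Or.inr hi2)]
    have h2 := hinj h1
    have h3 : β.bindingGraph.Reachable i1 i2 :=
      SimpleGraph.ConnectedComponent.exact h2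
    exact Finset.disjoint_left.mp hd (hstay i1 i2 h3 hi1) hi2
  -- conclude by cardinality
  unfold Config.entropy
  haveI : Fintype β.bindingGraph.ConnectedComponent := Fintype.ofFinite _
  haveI : Fintype α.bindingGraph.ConnectedComponent := Fintype.ofFinite _
  rw [Nat.card_eq_fintype_card, Nat.card_eq_fintype_card]
  have hle : Fintype.card α.bindingGraph.ConnectedComponent
      ≤ Fintype.card β.bindingGraph.ConnectedComponent :=
    Fintype.card_le_of_surjective φ hsurj
  rcases lt_or_eq_of_le hle with h | h
  · exact h
  · exfalso
    have hbij := (Fintype.bijective_iff_surjective_and_card φ).mpr ⟨hsurj, h.symm⟩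
    exact hninj hbij.1

/-- The full surgery contradiction. -/
theorem surgery_contradiction (hstab : ∀ β : Config mon, β.Saturated → β.entropy ≤ α.entropy)
    (hsat : α.Saturated) (hd : Disjoint S1 S2)
    (C : α.bindingGraph.ConnectedComponent)
    (hmem : ∀ i, (i ∈ S1 ∨ i ∈ S2) ↔ α.bindingGraph.connectedComponentMk i = C)
    (hne1 : S1.Nonempty) (hne2 : S2.Nonempty)
    (hH1 : ∀ (x : D) (t u : Bool), nS (mon := mon) S1 S2 t x < nP (mon := mon) S1 S2 t x →
      nS (mon := mon) S1 S2 u x ≤ nP (mon := mon) S1 S2 u x)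
    (hH2 : ∀ (x : D) (t : Bool), nS (mon := mon) S1 S2 t x < nP (mon := mon) S1 S2 t x →
      ∃ p : PrimInst mon, p.2.1 = x ∧ α.bond p = none)
    (hH3 : ∀ (x : D) (t : Bool), nP (mon := mon) S1 S2 t x < nS (mon := mon) S1 S2 t x →
      ∃ s : StarInst mon, s.2.1 = x ∧ ∀ q, α.bond q ≠ some s) : False := by
  have hcl : ∀ (p : PrimInst mon) (s : StarInst mon), α.bond p = some s →
      ((p.1 ∈ S1 ∨ p.1 ∈ S2) ↔ (s.1 ∈ S1 ∨ s.1 ∈ S2)) := by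
    intro p s hb
    rw [hmem p.1, hmem s.1, bond_mk α hb]
  have h1 := hstab (newConfig S1 S2 α hd hcl)
    (newConfig_saturated S1 S2 α hd hcl hsat hH1 hH2 hH3)
  have h2 := entropy_lt S1 S2 α hd hcl C hmem hne1 hne2
  omega


lemma card_prim (W : Finset I) (x : D) :
    Nat.card {p : PrimInst mon // p.1 ∈ W ∧ p.2.1 = x} = ∑ i ∈ W, (mon i).prim x := by
  have e : {p : PrimInst mon // p.1 ∈ W ∧ p.2.1 = x} ≃ (Σ i : ↥W, Fin ((mon i.1).prim x)) :=
    { toFun := fun pp => ⟨⟨pp.1.1, pp.2.1⟩, Fin.cast (congrArg (mon pp.1.1).prim pp.2.2) pp.1.2.2⟩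
      invFun := fun q => ⟨⟨q.1.1, x, q.2⟩, q.1.2, rfl⟩
      left_inv := by rintro ⟨⟨i, x', k⟩, hi, hx⟩; dsimp only at hx ⊢; subst hx; rfl
      right_inv := by rintro ⟨⟨i, hi⟩, k⟩; rfl }
  rw [Nat.card_congr e, Nat.card_eq_fintype_card, Fintype.card_sigma]
  simp only [Fintype.card_fin]
  exact Finset.sum_coe_sort W (fun i => (mon i).prim x)

lemma card_star (W : Finset I) (x : D) :
    Nat.card {s : StarInst mon // s.1 ∈ W ∧ s.2.1 = x} = ∑ i ∈ W, (mon i).star x := by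
  have e : {s : StarInst mon // s.1 ∈ W ∧ s.2.1 = x} ≃ (Σ i : ↥W, Fin ((mon i.1).star x)) :=
    { toFun := fun pp => ⟨⟨pp.1.1, pp.2.1⟩, Fin.cast (congrArg (mon pp.1.1).star pp.2.2) pp.1.2.2⟩
      invFun := fun q => ⟨⟨q.1.1, x, q.2⟩, q.1.2, rfl⟩
      left_inv := by rintro ⟨⟨i, x', k⟩, hi, hx⟩; dsimp only at hx ⊢; subst hx; rfl
      right_inv := by rintro ⟨⟨i, hi⟩, k⟩; rfl }
  rw [Nat.card_congr e, Nat.card_eq_fintype_card, Fintype.card_sigma]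
  simp only [Fintype.card_fin]
  exact Finset.sum_coe_sort W (fun i => (mon i).star x)

/-- group a sum over a finset of monomers by monomer type -/
lemma sum_fiber {m : ℕ} {β : Fin m → Type} (W : Finset (Σ j : Fin m, β j))
    [∀ j, Fintype (β j)] [DecidableEq (Σ j : Fin m, β j)] (f : Fin m → ℕ) :
    ∑ i ∈ W, f i.1 = ∑ j : Fin m, (W.filter (fun i => i.1 = j)).card * f j := by
  rw [← Finset.sum_fiberwise W (fun i => i.1) (fun i => f i.1)]
  apply Finset.sum_congr rfl
  intro j _
  rw [Finset.sum_congr rfl (fun i hi => ?_), Finset.sum_const, smul_eq_mul]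
  rw [Finset.mem_filter] at hi
  rw [hi.2]

end TBNSurgery

namespace TBNGlue

open TBNCore

lemma arith (a d : ℕ) (ha1 : 1 ≤ a) (hd1 : 1 ≤ d) :
    (d + 1) * Hb a d ≤ 2 * (a*d)^(2*d+3) := by
  by_cases hd' : d = 1
  · subst hd'
    have h1 : Hb a 1 = a := by simp [Hb]
    rw [h1]
    have h2 : a ≤ a^5 := Nat.le_self_pow (by norm_num) a
    calc (1+1) * a = 2 * a := by ring
      _ ≤ 2 * a^5 := by omega
      _ = 2 * (a*1)^(2*1+3) := by ring_nf
  · have h1 : Hb a d = (2*a*(d+1))^d := by simp [Hb, hd']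
    rw [h1]
    by_cases hd2 : d = 2
    · subst hd2
      have h2 : a^2 ≤ a^7 := Nat.pow_le_pow_right ha1 (by norm_num)
      calc (2+1) * (2*a*(2+1))^2 = 108 * a^2 := by ring
        _ ≤ 108 * a^7 := by omega
        _ ≤ 256 * a^7 := by omega
        _ = 2*(a*2)^(2*2+3) := by ring
    · have hd3 : 3 ≤ d := by omega
      have e1 : 2*a*(d+1) ≤ 3*(a*d) := by nlinarith
      have e2 : (2*a*(d+1))^d ≤ (3*(a*d))^d := Nat.pow_le_pow_left e1 d
      have e3 : (3*(a*d))^d = 3^d * (a*d)^d := mul_pow 3 (a*d) d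
      have e4 : (3:ℕ)^d ≤ (a*d)^d := Nat.pow_le_pow_left (by nlinarith) d
      have e5 : d + 1 ≤ 2*(a*d)^3 := by
        have h6 : d ≤ a*d := Nat.le_mul_of_pos_left d (by omega)
        have h7 : a*d ≤ (a*d)^3 := Nat.le_self_pow (by norm_num) (a*d)
        omega
      calc (d+1) * (2*a*(d+1))^d ≤ (2*(a*d)^3) * ((3*(a*d))^d) := Nat.mul_le_mul e5 e2
        _ = (2*(a*d)^3) * (3^d * (a*d)^d) := by rw [e3]
        _ ≤ (2*(a*d)^3) * ((a*d)^d * (a*d)^d) :=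
            Nat.mul_le_mul_left _ (Nat.mul_le_mul_right _ e4)
        _ = 2*(a*d)^(2*d+3) := by
            rw [mul_assoc, ← pow_add, ← pow_add]
            congr 2
            omega

end TBNGlue

/-- In a TBN with `d` primary domain types, `m` monomer types
(each a nonempty multiset of domains), and `a` the maximum number of instances
of any single domain type (primary or complementary) in any monomer type, every
polymer of every stable configuration of every monomer collection has size at
most `2 (m + d) (ad)^(2d+3)`. -/
theorem stmt1 (D : Type) [Fintype D] (d m a : ℕ) (hd : Fintype.card D = d)
    (Mty : Fin m → Monomer D) (hinj : Function.Injective Mty)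
    (hne : ∀ j, ∃ x, 0 < (Mty j).prim x + (Mty j).star x)
    (ha : a = Finset.univ.sup fun j : Fin m =>
      Finset.univ.sup fun x : D => max ((Mty j).prim x) ((Mty j).star x))
    (c : Fin m → ℕ)
    (α : Config (fun i : (Σ j : Fin m, Fin (c j)) => Mty i.1))
    (hα : α.IsStable)
    (C : α.bindingGraph.ConnectedComponent) :
    α.polymerSize C ≤ 2 * (m + d) * (a * d) ^ (2 * d + 3) := by
  classical
  by_contra hbig
  push_neg at hbig
  -- basic positivity facts
  obtain ⟨i₀, hi₀⟩ := C.exists_rep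
  obtain ⟨x₀, hx₀⟩ := hne i₀.1
  have hd1 : 1 ≤ d := by
    rw [← hd]
    exact Fintype.card_pos_iff.mpr ⟨x₀⟩
  have hPS : ∀ (j : Fin m) (x : D), (Mty j).prim x ≤ a ∧ (Mty j).star x ≤ a := by
    intro j x
    have h1 : max ((Mty j).prim x) ((Mty j).star x) ≤
        Finset.univ.sup fun x : D => max ((Mty j).prim x) ((Mty j).star x) :=
      Finset.le_sup (f := fun x : D => max ((Mty j).prim x) ((Mty j).star x))
        (Finset.mem_univ x)
    have h2 : (Finset.univ.sup fun x : D => max ((Mty j).prim x) ((Mty j).star x)) ≤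
        Finset.univ.sup fun j : Fin m =>
          Finset.univ.sup fun x : D => max ((Mty j).prim x) ((Mty j).star x) :=
      Finset.le_sup (f := fun j : Fin m =>
        Finset.univ.sup fun x : D => max ((Mty j).prim x) ((Mty j).star x))
        (Finset.mem_univ j)
    rw [ha]
    constructor <;> omega
  have ha1 : 1 ≤ a := by
    have := hPS i₀.1 x₀
    omega
  -- the polymer as a finset and its type-count vector
  set S : Finset (Σ j : Fin m, Fin (c j)) :=
    Finset.univ.filter (fun i => α.bindingGraph.connectedComponentMk i = C) with hS
  have hSmem : ∀ i, i ∈ S ↔ α.bindingGraph.connectedComponentMk i = C := by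
    intro i; simp [hS]
  have hsize : α.polymerSize C = S.card := by
    unfold Config.polymerSize
    rw [Nat.card_eq_fintype_card, Fintype.card_subtype]
  set v : Fin m → ℕ := fun j => (S.filter (fun i => i.1 = j)).card with hv
  have hvsum : ∑ j, v j = S.card :=
    (Finset.card_eq_sum_card_fiberwise (fun i _ => Finset.mem_univ i.1)).symm
  -- the matrix with slack columns
  set b : D → ℤ := matVec Mty v with hb
  set A : D → (Fin m ⊕ D) → ℤ := fun x jc =>
    Sum.elim (fun j => ((Mty j).prim x : ℤ) - ((Mty j).star x : ℤ))
      (fun x' => if x = x' then (if 0 ≤ b x' then -1 else 1) else 0) jc with hA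
  set xh : (Fin m ⊕ D) → ℕ := Sum.elim v (fun x => (b x).natAbs) with hxh
  -- generic kernel computation
  have hdotgen : ∀ (w : (Fin m ⊕ D) → ℕ) (x : D),
      TBNCore.dotZ A x (fun jc => (w jc : ℤ)) =
        matVec Mty (fun j => w (Sum.inl j)) x +
          (if 0 ≤ b x then (-1:ℤ) else 1) * (w (Sum.inr x) : ℤ) := by
    intro w x
    unfold TBNCore.dotZ
    rw [Fintype.sum_sum_type]
    have h1 : ∑ j : Fin m, A x (Sum.inl j) * (w (Sum.inl j) : ℤ)
        = matVec Mty (fun j => w (Sum.inl j)) x := by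
      unfold matVec
      exact Finset.sum_congr rfl (fun j _ => by rw [hA]; simp [mul_comm])
    have h2 : ∑ x' : D, A x (Sum.inr x') * (w (Sum.inr x') : ℤ)
        = (if 0 ≤ b x then (-1:ℤ) else 1) * (w (Sum.inr x) : ℤ) := by
      rw [Finset.sum_eq_single x]
      · rw [hA]; simp
      · intro x' _ hx'
        rw [hA]
        simp [Ne.symm hx']
      · intro h; exact absurd (Finset.mem_univ x) h
    rw [h1, h2]
  have hker : TBNCore.IsKer A (fun jc => (xh jc : ℤ)) := by
    intro x
    rw [hdotgen xh x]
    have h1 : (fun j => xh (Sum.inl j)) = v := rfl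
    have h2 : (xh (Sum.inr x) : ℤ) = ((b x).natAbs : ℤ) := rfl
    rw [h1, h2, ← hb]
    split <;> omega
  have hbnd : ∀ (x : D) (jc : Fin m ⊕ D), (A x jc).natAbs ≤ a := by
    intro x jc
    rcases jc with j | x'
    · rw [hA]
      simp only [Sum.elim_inl]
      have := hPS j x
      omega
    · rw [hA]
      simp only [Sum.elim_inr]
      split
      · split <;> omega
      · omega
  -- apply the core splitting theorem
  have hcardγ : Fintype.card (Fin m ⊕ D) = m + d := by
    rw [Fintype.card_sum, Fintype.card_fin, hd]
  have hsum_xh : S.card ≤ ∑ jc, xh jc := by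
    rw [Fintype.sum_sum_type]
    have h1 : ∑ j : Fin m, xh (Sum.inl j) = S.card := hvsum
    omega
  have hbig2 : Fintype.card (Fin m ⊕ D) * ((d + 1) * TBNCore.Hb a d) < ∑ jc, xh jc := by
    have h1 := TBNGlue.arith a d ha1 hd1
    have h2 : 2*(m+d)*(a*d)^(2*d+3) < α.polymerSize C := hbig
    rw [hsize] at h2
    have h3 : (m+d) * ((d+1) * TBNCore.Hb a d) ≤ (m+d) * (2*(a*d)^(2*d+3)) :=
      Nat.mul_le_mul_left _ h1
    have h4 : (m+d) * (2*(a*d)^(2*d+3)) = 2*(m+d)*(a*d)^(2*d+3) := by ring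
    rw [hcardγ]
    omega
  obtain ⟨u, hule, hu0, hux, huker⟩ :=
    TBNCore.core_split A a d hd hd1 ha1 hbnd xh hker hbig2
  set u1 : Fin m → ℕ := fun j => u (Sum.inl j) with hu1
  have hu1le : ∀ j, u1 j ≤ v j := fun j => hule (Sum.inl j)
  have hukey : ∀ x : D, matVec Mty u1 x +
      (if 0 ≤ b x then (-1:ℤ) else 1) * (u (Sum.inr x) : ℤ) = 0 := by
    intro x
    have h0 := huker x
    rw [hdotgen u x] at h0
    exact h0
  have hsl : ∀ x, (u (Sum.inr x) : ℤ) ≤ ((b x).natAbs : ℤ) := by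
    intro x
    exact_mod_cast hule (Sum.inr x)
  have hbox : ∀ x, (0 ≤ matVec Mty u1 x ∧ matVec Mty u1 x ≤ b x) ∨
      (b x ≤ matVec Mty u1 x ∧ matVec Mty u1 x ≤ 0) := by
    intro x
    have h1 := hukey x
    have h2 := hsl x
    split at h1
    · left; omega
    · right; omega
  have hu1nz : u1 ≠ 0 := by
    intro h
    apply hu0
    funext jc
    rcases jc with j | x
    · exact congrFun h j
    · have h1 := hukey x
      have h0 : matVec Mty u1 x = 0 := by
        rw [h]
        unfold matVec
        simp
      rw [h0, zero_add] at h1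
      simp only [Pi.zero_apply]
      split at h1 <;> omega
  have hu1nv : u1 ≠ v := by
    intro h
    apply hux
    funext jc
    rcases jc with j | x
    · exact congrFun h j
    · have h1 := hukey x
      have h2 : matVec Mty u1 x = b x := by rw [h]
      rw [h2] at h1
      have h3 : xh (Sum.inr x) = (b x).natAbs := rfl
      rw [h3]
      split at h1 <;> omega
  -- choose the split of the polymer realizing the counts u1 / v - u1
  have hchoice : ∀ j : Fin m, ∃ Tj : Finset (Σ j : Fin m, Fin (c j)),
      Tj ⊆ S.filter (fun i => i.1 = j) ∧ Tj.card = u1 j :=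
    fun j => Finset.exists_subset_card_eq (hu1le j)
  choose T hT1 hT2 using hchoice
  set S1 : Finset (Σ j : Fin m, Fin (c j)) := Finset.univ.biUnion T with hS1
  have hS1sub : S1 ⊆ S := by
    intro i hi
    rw [hS1, Finset.mem_biUnion] at hi
    obtain ⟨j, _, hij⟩ := hi
    exact Finset.mem_of_mem_filter i (hT1 j hij)
  have hfib1 : ∀ j, S1.filter (fun i => i.1 = j) = T j := by
    intro j
    ext i
    simp only [Finset.mem_filter, hS1, Finset.mem_biUnion, Finset.mem_univ, true_and]
    constructor
    · rintro ⟨⟨j', hij'⟩, hij⟩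
      have h1 : i.1 = j' := (Finset.mem_filter.mp (hT1 j' hij')).2
      have h2 : j' = j := by rw [← h1, hij]
      rw [← h2]
      exact hij'
    · intro hiT
      exact ⟨⟨j, hiT⟩, (Finset.mem_filter.mp (hT1 j hiT)).2⟩
  set S2 : Finset (Σ j : Fin m, Fin (c j)) := S \ S1 with hS2
  have hdisj : Disjoint S1 S2 := Finset.disjoint_sdiff
  have hfib2 : ∀ j, (S2.filter (fun i => i.1 = j)).card = v j - u1 j := by
    intro j
    have h1 : S2.filter (fun i => i.1 = j)
        = (S.filter (fun i => i.1 = j)) \ (S1.filter (fun i => i.1 = j)) := by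
      ext i
      simp only [hS2, Finset.mem_filter, Finset.mem_sdiff]
      tauto
    rw [h1, Finset.card_sdiff_of_subset (Finset.filter_subset_filter _ hS1sub), hfib1, hT2]
  have hmem2 : ∀ i, (i ∈ S1 ∨ i ∈ S2) ↔ α.bindingGraph.connectedComponentMk i = C := by
    intro i
    rw [← hSmem i]
    constructor
    · rintro (h | h)
      · exact hS1sub h
      · exact (Finset.mem_sdiff.mp h).1
    · intro h
      by_cases h1 : i ∈ S1
      · exact Or.inl h1
      · exact Or.inr (Finset.mem_sdiff.mpr ⟨h, h1⟩)
  have hne1 : S1.Nonempty := by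
    obtain ⟨j, hj⟩ : ∃ j, u1 j ≠ 0 := by
      by_contra h; push_neg at h; exact hu1nz (funext h)
    have h1 : (T j).Nonempty := Finset.card_pos.mp (by rw [hT2]; omega)
    obtain ⟨i, hi⟩ := h1
    exact ⟨i, by rw [hS1]; exact Finset.mem_biUnion.mpr ⟨j, Finset.mem_univ j, hi⟩⟩
  have hne2 : S2.Nonempty := by
    obtain ⟨j, hj⟩ : ∃ j, u1 j < v j := by
      by_contra h; push_neg at h
      exact hu1nv (funext fun j => le_antisymm (hu1le j) (h j))
    have h1 : (S2.filter (fun i => i.1 = j)).Nonempty :=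
      Finset.card_pos.mp (by rw [hfib2]; omega)
    obtain ⟨i, hi⟩ := h1
    exact ⟨i, Finset.mem_of_mem_filter i hi⟩
  -- counting identities
  have hlink : ∀ (W : Finset (Σ j : Fin m, Fin (c j))) (w : Fin m → ℕ),
      (∀ j, (W.filter (fun i => i.1 = j)).card = w j) → ∀ x : D,
      ((Nat.card {p : PrimInst (fun i : (Σ j : Fin m, Fin (c j)) => Mty i.1) //
          p.1 ∈ W ∧ p.2.1 = x} : ℕ) : ℤ) -
        ((Nat.card {s : StarInst (fun i : (Σ j : Fin m, Fin (c j)) => Mty i.1) //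
          s.1 ∈ W ∧ s.2.1 = x} : ℕ) : ℤ) = matVec Mty w x := by
    intro W w hw x
    rw [TBNSurgery.card_prim W x, TBNSurgery.card_star W x]
    have e1 : ∑ i ∈ W, (Mty i.1).prim x
        = ∑ j, (W.filter (fun i => i.1 = j)).card * (Mty j).prim x :=
      TBNSurgery.sum_fiber W (fun j => (Mty j).prim x)
    have e2 : ∑ i ∈ W, (Mty i.1).star x
        = ∑ j, (W.filter (fun i => i.1 = j)).card * (Mty j).star x :=
      TBNSurgery.sum_fiber W (fun j => (Mty j).star x)
    rw [e1, e2]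
    simp only [hw]
    unfold matVec
    push_cast
    rw [← Finset.sum_sub_distrib]
    exact Finset.sum_congr rfl (fun j _ => by ring)
  have hMtrue : ∀ x, ((TBNSurgery.nP (mon := fun i : (Σ j : Fin m, Fin (c j)) => Mty i.1)
        S1 S2 true x : ℕ) : ℤ) -
      ((TBNSurgery.nS (mon := fun i : (Σ j : Fin m, Fin (c j)) => Mty i.1)
        S1 S2 true x : ℕ) : ℤ) = matVec Mty u1 x := by
    intro x
    exact hlink S1 u1 (fun j => by rw [hfib1, hT2]) x
  have hMfalse : ∀ x, ((TBNSurgery.nP (mon := fun i : (Σ j : Fin m, Fin (c j)) => Mty i.1)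
        S1 S2 false x : ℕ) : ℤ) -
      ((TBNSurgery.nS (mon := fun i : (Σ j : Fin m, Fin (c j)) => Mty i.1)
        S1 S2 false x : ℕ) : ℤ) = matVec Mty (fun j => v j - u1 j) x := by
    intro x
    exact hlink S2 (fun j => v j - u1 j) hfib2 x
  have hw2 : ∀ x, matVec Mty (fun j => v j - u1 j) x = b x - matVec Mty u1 x := by
    intro x
    have hbx : b x = matVec Mty v x := rfl
    rw [hbx]
    unfold matVec
    rw [← Finset.sum_sub_distrib]
    apply Finset.sum_congr rfl
    intro j _
    rw [Nat.cast_sub (hu1le j)]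
    ring
  -- positive excess in either part forces positive total excess
  have hposslack : ∀ (x : D) (t : Bool),
      TBNSurgery.nS (mon := fun i : (Σ j : Fin m, Fin (c j)) => Mty i.1) S1 S2 t x <
        TBNSurgery.nP (mon := fun i : (Σ j : Fin m, Fin (c j)) => Mty i.1) S1 S2 t x →
      0 ≤ matVec Mty u1 x ∧ matVec Mty u1 x ≤ b x ∧ 0 < b x := by
    intro x t hlt
    have h2 := hbox x
    have h3 := hw2 x
    cases t with
    | true =>
      have h1 := hMtrue x
      rcases h2 with h | h
      · refine ⟨h.1, h.2, ?_⟩; omega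
      · exfalso; omega
    | false =>
      have h1 := hMfalse x
      rcases h2 with h | h
      · refine ⟨h.1, h.2, ?_⟩; omega
      · exfalso; omega
  have hnegslack : ∀ (x : D) (t : Bool),
      TBNSurgery.nP (mon := fun i : (Σ j : Fin m, Fin (c j)) => Mty i.1) S1 S2 t x <
        TBNSurgery.nS (mon := fun i : (Σ j : Fin m, Fin (c j)) => Mty i.1) S1 S2 t x →
      b x < 0 := by
    intro x t hlt
    have h2 := hbox x
    have h3 := hw2 x
    cases t with
    | true =>
      have h1 := hMtrue x
      rcases h2 with h | h <;> omega
    | false =>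
      have h1 := hMfalse x
      rcases h2 with h | h <;> omega
  have hMS : ∀ x, ((Nat.card {p : PrimInst (fun i : (Σ j : Fin m, Fin (c j)) => Mty i.1) //
        p.1 ∈ S ∧ p.2.1 = x} : ℕ) : ℤ) -
      ((Nat.card {s : StarInst (fun i : (Σ j : Fin m, Fin (c j)) => Mty i.1) //
        s.1 ∈ S ∧ s.2.1 = x} : ℕ) : ℤ) = b x := by
    intro x
    exact hlink S v (fun j => rfl) x
  -- apply the surgery
  apply TBNSurgery.surgery_contradiction S1 S2 α hα.2 hα.1 hdisj C hmem2 hne1 hne2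
  · -- hH1
    intro x t t' hlt
    obtain ⟨hm0, hmb, hb0⟩ := hposslack x t hlt
    have h1 := hMtrue x
    have h2 := hMfalse x
    have h3 := hw2 x
    cases t' <;> omega
  · -- hH2
    intro x t hlt
    obtain ⟨_, _, hb0⟩ := hposslack x t hlt
    by_contra hno
    push_neg at hno
    have hex : ∀ pp : {p : PrimInst (fun i : (Σ j : Fin m, Fin (c j)) => Mty i.1) //
        p.1 ∈ S ∧ p.2.1 = x},
        ∃ ss : {s : StarInst (fun i : (Σ j : Fin m, Fin (c j)) => Mty i.1) //
          s.1 ∈ S ∧ s.2.1 = x}, α.bond pp.1 = some ss.1 := by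
      intro pp
      cases hob : α.bond pp.1 with
      | none => exact absurd hob (hno pp.1 pp.2.2)
      | some s =>
        refine ⟨⟨s, ?_, ?_⟩, rfl⟩
        · rw [hSmem, ← TBNSurgery.bond_mk α hob]
          exact (hSmem pp.1.1).mp pp.2.1
        · rw [← α.compat pp.1 s hob]
          exact pp.2.2
    choose f hf using hex
    have hfinj : Function.Injective f := by
      intro pp qq hpq
      have h1 := hf pp
      have h2 := hf qq
      rw [hpq] at h1
      exact Subtype.ext (α.inj pp.1 qq.1 _ h1 h2)
    have hcard := Nat.card_le_card_of_injective f hfinj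
    have h3 := hMS x
    omega
  · -- hH3
    intro x t hlt
    have hb0 := hnegslack x t hlt
    by_contra hno
    push_neg at hno
    have hex : ∀ ss : {s : StarInst (fun i : (Σ j : Fin m, Fin (c j)) => Mty i.1) //
        s.1 ∈ S ∧ s.2.1 = x},
        ∃ pp : {p : PrimInst (fun i : (Σ j : Fin m, Fin (c j)) => Mty i.1) //
          p.1 ∈ S ∧ p.2.1 = x}, α.bond pp.1 = some ss.1 := by
      intro ss
      obtain ⟨q, hq⟩ := hno ss.1 ss.2.2
      refine ⟨⟨q, ?_, ?_⟩, hq⟩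
      · rw [hSmem, TBNSurgery.bond_mk α hq]
        exact (hSmem ss.1.1).mp ss.2.1
      · rw [α.compat q ss.1 hq]
        exact ss.2.2
    choose g hg using hex
    have hginj : Function.Injective g := by
      intro s1 s2 h12
      have h1 := hg s1
      have h2 := hg s2
      rw [h12] at h1
      exact Subtype.ext (Option.some_injective _ (h1.symm.trans h2))
    have hcard := Nat.card_le_card_of_injective g hginj
    have h3 := hMS x
    omega
end

section
/- Let a, d, l be positive integers, let v_1, ..., v_l be vectors in ℤ^d with every component having absolute value at most a, and let K = (ad)^{d+1}. Then exactly one of the following two statements holds: (1) there exist integers n_1, ..., n_l, each in {0, 1, ..., K} and not all zero, such that \sum_{j=1}^{l} n_j v_j = 0; (2) there exists a vector h in ℤ^d with every component having absolute value at most K such that h · v_j >= 1 for every j in {1, ..., l}. -/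
open Finset Submodule
open scoped RealInnerProductSpace

namespace Stmt3Aux


/-- The dot-product functional as a linear map. -/
noncomputable def dotL {κ : Type*} [Fintype κ] (u : κ → ℝ) : (κ → ℝ) →ₗ[ℝ] ℝ where
  toFun x := ∑ k, u k * x k
  map_add' x y := by simp [mul_add, Finset.sum_add_distrib]
  map_smul' c x := by
    simp only [smul_eq_mul, Pi.smul_apply, RingHom.id_apply, Finset.mul_sum]
    exact Finset.sum_congr rfl fun k _ => by ring

lemma dot_eq_zero_of_mem_span {κ : Type*} [Fintype κ] {u : κ → ℝ} {S : Set (κ → ℝ)}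
    (hS : ∀ s ∈ S, ∑ k, u k * s k = 0) {w : κ → ℝ} (hw : w ∈ span ℝ S) :
    ∑ k, u k * w k = 0 := by
  have hle : span ℝ S ≤ LinearMap.ker (dotL u) :=
    span_le.mpr fun s hs => by simpa [dotL, LinearMap.mem_ker] using hS s hs
  simpa [dotL, LinearMap.mem_ker] using hle hw

/-- If `x` is not in the span of `S`, there is a vector `u` dot-orthogonal to `S`
but not to `x`. -/
lemma exists_dot_ne {κ : Type*} [Fintype κ] (S : Set (κ → ℝ)) (x : κ → ℝ)
    (hx : x ∉ span ℝ S) :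
    ∃ u : κ → ℝ, (∀ s ∈ S, ∑ k, u k * s k = 0) ∧ ∑ k, u k * x k ≠ 0 := by
  classical
  let E := EuclideanSpace ℝ κ
  let e : E ≃ₗ[ℝ] (κ → ℝ) := WithLp.linearEquiv 2 ℝ (κ → ℝ)
  set A : Submodule ℝ E := span ℝ (e.symm '' S) with hA
  have hinner : ∀ (z : E) (y : κ → ℝ), (⟪z, e.symm y⟫) = ∑ k, z k * y k := by
    intro z y
    simp only [PiLp.inner_apply, RCLike.inner_apply, conj_trivial]
    change ⟪(z : EuclideanSpace ℝ κ), (WithLp.toLp 2 y : EuclideanSpace ℝ κ)⟫ = _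
    rw [PiLp.inner_apply]
    simp [mul_comm]
  have hxA : e.symm x ∉ A := by
    intro hmem
    rw [hA, show (⇑e.symm '' S) = ⇑(e.symm : (κ → ℝ) →ₗ[ℝ] E) '' S from rfl, span_image] at hmem
    obtain ⟨y, hy, hey⟩ := hmem
    have hyx : y = x := e.symm.injective hey
    exact hx (hyx ▸ hy)
  set u' : E := e.symm x - (orthogonalProjection A (e.symm x) : E) with hu'
  have hu'A : u' ∈ Aᗮ := sub_starProjection_mem_orthogonal (K := A) (e.symm x)
  have hu'ne : u' ≠ 0 := by
    intro h0
    apply hxA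
    have : e.symm x = (orthogonalProjection A (e.symm x) : E) := by
      rwa [sub_eq_zero] at h0
    rw [this]; exact SetLike.coe_mem _
  refine ⟨fun k => u' k, ?_, ?_⟩
  · intro s hs
    have hsA : e.symm s ∈ A := subset_span ⟨s, hs, rfl⟩
    have := (Submodule.mem_orthogonal' A u').mp hu'A (e.symm s) hsA
    rw [← hinner u' s]; exact this
  · have hd : (⟪u', e.symm x⟫) = ⟪u', u'⟫ := by
      have hsplit : e.symm x = u' + (orthogonalProjection A (e.symm x) : E) := by
        rw [hu']; abel
      rw [hsplit, inner_add_right]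
      have : (⟪u', (orthogonalProjection A (e.symm x) : E)⟫) = 0 :=
        (Submodule.mem_orthogonal' A u').mp hu'A _ (SetLike.coe_mem _)
      rw [this, add_zero]
    rw [← hinner u' x, hd]
    exact inner_self_ne_zero.mpr hu'ne

/-- selection of an invertible square submatrix from a matrix with independent columns -/
lemma exists_submatrix_det_ne_zero {ι κ : Type*} [Fintype ι] [Fintype κ] [DecidableEq ι]
    [DecidableEq κ] (M : Matrix ι κ ℝ)
    (hM : LinearIndependent ℝ fun k => fun i => M i k) :
    ∃ f : κ → ι, Function.Injective f ∧ (M.submatrix f id).det ≠ 0 := by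
  classical
  set rows : ι → (κ → ℝ) := fun i k => M i k with hrows
  have hspan : span ℝ (Set.range rows) = ⊤ := by
    by_contra hne
    have : ∃ x : κ → ℝ, x ∉ span ℝ (Set.range rows) := by
      by_contra hall
      push_neg at hall
      exact hne (eq_top_iff'.mpr hall)
    obtain ⟨x, hx⟩ := this
    obtain ⟨u, hu, hux⟩ := exists_dot_ne (Set.range rows) x hx
    have hu0 : u ≠ 0 := by
      intro h0; apply hux; simp [h0]
    have hdep : ∀ k, u k = 0 := by
      have hz : ∑ k, u k • (fun i => M i k) = 0 := by
        funext i
        have := hu (rows i) ⟨i, rfl⟩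
        simpa [Finset.sum_apply, mul_comm] using this
      exact Fintype.linearIndependent_iff.mp hM u hz
    exact hu0 (funext hdep)
  obtain ⟨b, hbsub, hbspan, hbind⟩ := exists_linearIndependent ℝ (Set.range rows)
  rw [hspan] at hbspan
  have hbfin : b.Finite := (Set.finite_range rows).subset hbsub
  haveI : Fintype b := hbfin.fintype
  have hcard : Fintype.card b = Fintype.card κ := by
    have h1 : Module.finrank ℝ (span ℝ b) = b.toFinset.card :=
      finrank_span_set_eq_card hbind
    rw [hbspan, finrank_top] at h1
    rw [← Set.toFinset_card, ← h1, Module.finrank_pi]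
  let eb : κ ≃ b := (Fintype.equivOfCardEq hcard).symm
  have hpre : ∀ y : b, ∃ i, rows i = (y : κ → ℝ) := fun y => hbsub y.2
  choose pf hpf using hpre
  refine ⟨fun k => pf (eb k), ?_, ?_⟩
  · intro k1 k2 h12
    have h12' : pf (eb k1) = pf (eb k2) := h12
    have : ((eb k1 : b) : κ → ℝ) = ((eb k2 : b) : κ → ℝ) := by
      rw [← hpf (eb k1), ← hpf (eb k2), h12']
    exact eb.injective (Subtype.ext this)
  · intro hdet
    obtain ⟨c, hc0, hcv⟩ := Matrix.exists_vecMul_eq_zero_iff.mpr hdet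
    have hz : ∑ k, c k • ((eb k : b) : κ → ℝ) = 0 := by
      funext k'
      simp only [Finset.sum_apply, Pi.smul_apply, Pi.zero_apply, smul_eq_mul]
      have h := congrFun hcv k'
      simp only [Matrix.vecMul, dotProduct, Matrix.submatrix_apply, id,
        Pi.zero_apply] at h
      calc ∑ k, c k * ((eb k : b) : κ → ℝ) k'
          = ∑ k, c k * M (pf (eb k)) k' := by
            refine Finset.sum_congr rfl fun k _ => ?_
            rw [← hpf (eb k)]
        _ = 0 := h
    have hind' : LinearIndependent ℝ fun k => ((eb k : b) : κ → ℝ) :=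
      hbind.comp eb eb.injective
    have := Fintype.linearIndependent_iff.mp hind' c hz
    exact hc0 (funext this)



lemma abs_adjugate_le {κ : Type*} [Fintype κ] [DecidableEq κ] (A : Matrix κ κ ℤ) {a : ℤ}
    (ha : 1 ≤ a) (hA : ∀ i j, |A i j| ≤ a) (i j : κ) :
    |A.adjugate i j| ≤ (Fintype.card κ).factorial * a ^ (Fintype.card κ) := by
  rw [Matrix.adjugate_apply]
  have hx : ∀ r c, |(A.updateRow j (Pi.single i 1)) r c| ≤ a := by
    intro r c
    rw [Matrix.updateRow_apply]
    split
    · rw [Pi.single_apply]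
      split
      · simpa using ha
      · simpa using le_trans zero_le_one ha
    · exact hA r c
  have h := Matrix.det_le (A := A.updateRow j (Pi.single i 1))
    (abv := AbsoluteValue.abs) (x := a) hx
  simpa [nsmul_eq_mul] using h

lemma abs_det_le {κ : Type*} [Fintype κ] [DecidableEq κ] (A : Matrix κ κ ℤ) {a : ℤ}
    (hA : ∀ i j, |A i j| ≤ a) :
    |A.det| ≤ (Fintype.card κ).factorial * a ^ (Fintype.card κ) := by
  have h := Matrix.det_le (A := A) (abv := AbsoluteValue.abs) (x := a) hA
  simpa [nsmul_eq_mul] using h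

lemma nat_bound {m a d : ℕ} (hm : m ≤ d) (ha : 1 ≤ a) (hd : 1 ≤ d) :
    m * (m.factorial * a ^ m) * a ≤ (a * d) ^ (d + 1) := by
  have h1 : m.factorial ≤ d ^ d :=
    le_trans (Nat.factorial_le hm) (Nat.factorial_le_pow d)
  have h2 : a ^ m ≤ a ^ d := Nat.pow_le_pow_right ha hm
  calc m * (m.factorial * a ^ m) * a ≤ d * (d ^ d * a ^ d) * a :=
        Nat.mul_le_mul (Nat.mul_le_mul hm (Nat.mul_le_mul h1 h2)) le_rfl
    _ = a ^ (d + 1) * d ^ (d + 1) := by ring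
    _ = (a * d) ^ (d + 1) := (mul_pow a d (d + 1)).symm

lemma nat_bound' {m a d : ℕ} (hm : m ≤ d) (ha : 1 ≤ a) (hd : 1 ≤ d) :
    m.factorial * a ^ m ≤ (a * d) ^ (d + 1) := by
  have h1 : m.factorial * a ^ m ≤ d ^ d * a ^ d :=
    Nat.mul_le_mul (le_trans (Nat.factorial_le hm) (Nat.factorial_le_pow d))
      (Nat.pow_le_pow_right ha hm)
  calc m.factorial * a ^ m ≤ d ^ d * a ^ d := h1
    _ ≤ d ^ d * a ^ d * (d * a) := Nat.le_mul_of_pos_right _ (Nat.mul_pos hd ha)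
    _ = a ^ (d + 1) * d ^ (d + 1) := by ring
    _ = (a * d) ^ (d + 1) := (mul_pow a d (d + 1)).symm

lemma eps_spec (D : ℤ) (hD : D ≠ 0) : ∃ ε : ℤ, ε * D = |D| ∧ |ε| = 1 := by
  rcases lt_or_gt_of_ne hD with h | h
  · exact ⟨-1, by rw [abs_of_neg h]; ring, by norm_num⟩
  · exact ⟨1, by rw [abs_of_pos h]; ring, by norm_num⟩

lemma lemSEP {d l : ℕ} (rv : Fin l → Fin d → ℝ)
    (hnw : ¬ ∃ w : Fin l → ℝ, (∀ j, 0 ≤ w j) ∧ w ≠ 0 ∧ ∀ i, ∑ j, w j * rv j i = 0) :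
    ∃ h : Fin d → ℝ, ∀ j, 1 ≤ ∑ i, h i * rv j i := by
  classical
  set φ : (Fin l → ℝ) → (Fin d → ℝ) := fun w => ∑ j, w j • rv j with hφ
  have hlin : IsLinearMap ℝ φ := by
    constructor
    · intro w w'; simp [hφ, add_smul, Finset.sum_add_distrib]
    · intro c w; simp [hφ, Finset.smul_sum, smul_smul]
  set T : Set (Fin d → ℝ) := φ '' stdSimplex ℝ (Fin l) with hT
  have hTconv : Convex ℝ T := (convex_stdSimplex ℝ (Fin l)).is_linear_image hlin
  have hTcomp : IsCompact T := (isCompact_stdSimplex ℝ (Fin l)).image (by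
      apply continuous_finset_sum
      intro j _
      exact (continuous_apply j).smul continuous_const)
  have h0T : (0 : Fin d → ℝ) ∉ T := by
    rintro ⟨w, hw, hw0⟩
    refine hnw ⟨w, hw.1, ?_, ?_⟩
    · intro h0
      have h1 := hw.2
      rw [h0] at h1
      simp at h1
    · intro i
      have h2 := congrFun hw0 i
      simpa [hφ, Finset.sum_apply, smul_eq_mul] using h2
  obtain ⟨f, u, hfu, hub⟩ := geometric_hahn_banach_point_closed hTconv hTcomp.isClosed h0T
  have hupos : 0 < u := by simpa using hfu
  refine ⟨fun i => f (fun i' => if i = i' then 1 else 0) / u, fun j => ?_⟩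
  have hmem : rv j ∈ T := by
    refine ⟨fun j' => if j = j' then 1 else 0, ite_eq_mem_stdSimplex ℝ j, ?_⟩
    simp [hφ, ite_smul]
  have hjf : u < f (rv j) := hub _ hmem
  have hrep : f (rv j) = ∑ i, rv j i * f (fun i' => if i = i' then 1 else 0) := by
    have h3 := LinearMap.pi_apply_eq_sum_univ (f.toLinearMap) (rv j)
    simpa [smul_eq_mul] using h3
  have h4 : ∑ i, (f (fun i' => if i = i' then 1 else 0) / u) * rv j i = f (rv j) / u := by
    rw [hrep, Finset.sum_div]
    exact Finset.sum_congr rfl fun i _ => by ring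
  rw [h4, le_div_iff₀ hupos]
  linarith


lemma lemONE {a d l : ℕ} (ha : 0 < a) (hd : 0 < d)
    (v : Fin l → Fin d → ℤ) (hv : ∀ j i, |v j i| ≤ (a : ℤ))
    (hw : ∃ w : Fin l → ℝ, (∀ j, 0 ≤ w j) ∧ w ≠ 0 ∧ ∀ i, ∑ j, w j * (v j i : ℝ) = 0) :
    ∃ n : Fin l → ℕ, (∀ j, n j ≤ (a * d) ^ (d + 1)) ∧ n ≠ 0 ∧
      ∀ i, ∑ j, (n j : ℤ) * v j i = 0 := by
  classical
  set C : Set ℕ := {c | ∃ w : Fin l → ℝ, ((∀ j, 0 ≤ w j) ∧ w ≠ 0 ∧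
    ∀ i, ∑ j, w j * (v j i : ℝ) = 0) ∧ (univ.filter fun j => w j ≠ 0).card = c} with hC
  have hCne : C.Nonempty := by
    obtain ⟨w, hw1, hw2, hw3⟩ := hw
    exact ⟨_, w, ⟨hw1, hw2, hw3⟩, rfl⟩
  obtain ⟨w, hPw, hcard⟩ := Nat.sInf_mem hCne
  obtain ⟨hw1, hw2, hw3⟩ := hPw
  set S : Finset (Fin l) := univ.filter fun j => w j ≠ 0 with hS
  obtain ⟨j0, hj0w⟩ : ∃ j0, w j0 ≠ 0 := by
    by_contra hno; push_neg at hno; exact hw2 (funext hno)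
  have hj0S : j0 ∈ S := by simp [hS, hj0w]
  have hj0pos : 0 < w j0 := lt_of_le_of_ne (hw1 j0) (Ne.symm hj0w)
  set S' : Finset (Fin l) := S.erase j0 with hS'
  have hj0S' : j0 ∉ S' := Finset.notMem_erase _ _
  -- independence of the circuit minus one element
  have hind : LinearIndependent ℝ
      (fun c : {x // x ∈ S'} => fun i => (v (↑c : Fin l) i : ℝ)) := by
    rw [Fintype.linearIndependent_iff]
    intro g hg
    by_contra hgne
    push_neg at hgne
    obtain ⟨c0, hc0⟩ := hgne
    set μ0 : Fin l → ℝ := fun j => if hj : j ∈ S' then g ⟨j, hj⟩ else 0 with hμ0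
    have hμ0sys : ∀ i, ∑ j, μ0 j * (v j i : ℝ) = 0 := by
      intro i
      have h5 := congrFun hg i
      simp only [Finset.sum_apply, Pi.smul_apply, Pi.zero_apply, smul_eq_mul] at h5
      calc ∑ j, μ0 j * (v j i : ℝ)
          = ∑ j ∈ S', μ0 j * (v j i : ℝ) := by
            refine (Finset.sum_subset (Finset.subset_univ S') ?_).symm
            intro j _ hj; simp [hμ0, hj]
        _ = ∑ c : {x // x ∈ S'}, μ0 ↑c * (v (↑c : Fin l) i : ℝ) :=
            (Finset.sum_coe_sort S' fun j => μ0 j * (v j i : ℝ)).symm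
        _ = 0 := by
            rw [← h5]
            refine Finset.sum_congr rfl fun c _ => ?_
            simp [hμ0, c.2]
    have hμ0supp : ∀ j, j ∉ S' → μ0 j = 0 := fun j hj => by simp [hμ0, hj]
    have hμ0c0 : μ0 ↑c0 = g c0 := by simp [hμ0, c0.2]
    obtain ⟨μ, hμsys, hμsupp, c1, hc1⟩ :
        ∃ μ : Fin l → ℝ, (∀ i, ∑ j, μ j * (v j i : ℝ) = 0) ∧ (∀ j, j ∉ S' → μ j = 0) ∧
          ∃ c1, 0 < μ c1 := by
      rcases lt_or_gt_of_ne hc0 with hneg | hpos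
      · refine ⟨-μ0, fun i => ?_, fun j hj => by simp [hμ0supp j hj], ↑c0, ?_⟩
        · simp only [Pi.neg_apply, neg_mul]
          simp [hμ0sys i]
        · simp only [Pi.neg_apply, hμ0c0]
          linarith
      · exact ⟨μ0, hμ0sys, hμ0supp, ↑c0, by rw [hμ0c0]; exact hpos⟩
    set F : Finset (Fin l) := univ.filter fun j => 0 < μ j with hF
    have hc1F : c1 ∈ F := by simp [hF, hc1]
    obtain ⟨k0, hk0F, hk0min⟩ := F.exists_min_image (fun j => w j / μ j) ⟨c1, hc1F⟩
    have hk0pos : 0 < μ k0 := by simpa [hF] using hk0F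
    have hk0S' : k0 ∈ S' := by
      by_contra hk
      exact absurd (hμsupp k0 hk) (ne_of_gt hk0pos)
    have hk0S : k0 ∈ S := Finset.mem_of_mem_erase hk0S'
    set t : ℝ := w k0 / μ k0 with ht
    have htnn : 0 ≤ t := div_nonneg (hw1 k0) (le_of_lt hk0pos)
    set w' : Fin l → ℝ := fun j => w j - t * μ j with hw'
    have hw'nn : ∀ j, 0 ≤ w' j := by
      intro j
      by_cases hj : 0 < μ j
      · have hjF : j ∈ F := by simp [hF, hj]
        have h6 : t ≤ w j / μ j := hk0min j hjF
        have h7 : t * μ j ≤ w j := by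
          rw [← le_div_iff₀ hj]
          exact h6
        simp only [hw']
        linarith
      · push_neg at hj
        have h8 : t * μ j ≤ 0 := mul_nonpos_iff.mpr (Or.inl ⟨htnn, hj⟩)
        have h9 := hw1 j
        simp only [hw']
        linarith
    have htμk0 : t * μ k0 = w k0 := by
      rw [ht]; field_simp
    have hw'k0 : w' k0 = 0 := by simp [hw', htμk0]
    have hw'supp : ∀ j, w' j ≠ 0 → j ∈ S.erase k0 := by
      intro j hj
      rcases eq_or_ne j k0 with rfl | hne
      · exact absurd hw'k0 hj
      · refine Finset.mem_erase.mpr ⟨hne, ?_⟩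
        by_contra hjS
        have hwj : w j = 0 := by
          by_contra hwj'
          exact hjS (by simp [hS, hwj'])
        have hμj : μ j = 0 := hμsupp j fun hjS' => hjS (Finset.mem_of_mem_erase hjS')
        exact hj (by simp [hw', hwj, hμj])
    have hw'j0 : w' j0 ≠ 0 := by
      have hμj0 : μ j0 = 0 := hμsupp j0 hj0S'
      simpa [hw', hμj0] using hj0w
    have hw'sys : ∀ i, ∑ j, w' j * (v j i : ℝ) = 0 := by
      intro i
      have h8 : ∑ j, t * μ j * (v j i : ℝ) = 0 := by
        simp only [mul_assoc, ← Finset.mul_sum, hμsys i, mul_zero]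
      simp only [hw', sub_mul, Finset.sum_sub_distrib, hw3 i, h8, sub_zero]
    have hlt : (univ.filter fun j => w' j ≠ 0).card < sInf C := by
      calc (univ.filter fun j => w' j ≠ 0).card ≤ (S.erase k0).card := by
            apply Finset.card_le_card
            intro j hj
            refine hw'supp j ?_
            simpa using hj
        _ < S.card := Finset.card_erase_lt_of_mem hk0S
        _ = sInf C := hcard
    have hge : sInf C ≤ (univ.filter fun j => w' j ≠ 0).card :=
      Nat.sInf_le ⟨w', ⟨hw'nn, fun h0 => hw'j0 (congrFun h0 j0), hw'sys⟩, rfl⟩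
    omega
  -- Cramer extraction
  set M : Matrix (Fin d) {x // x ∈ S'} ℝ := fun i c => (v (↑c : Fin l) i : ℝ) with hM
  obtain ⟨f, hfinj, hfdet⟩ := exists_submatrix_det_ne_zero M hind
  set Az : Matrix {x // x ∈ S'} {x // x ∈ S'} ℤ := fun r c => v (↑c : Fin l) (f r) with hAz
  set AR : Matrix {x // x ∈ S'} {x // x ∈ S'} ℝ := Az.map (Int.castRingHom ℝ) with hAR
  have hARsub : AR = M.submatrix f id := by
    ext r c
    simp [hAR, hAz, hM, Matrix.map_apply]
    rfl
  have hARdet : AR.det = ((Az.det : ℤ) : ℝ) := by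
    rw [hAR, ← RingHom.mapMatrix_apply, ← RingHom.map_det]
    rfl
  have hDz0 : Az.det ≠ 0 := by
    intro h0
    apply hfdet
    rw [← hARsub, hARdet, h0]
    simp
  obtain ⟨ε, hεD, hε1⟩ := eps_spec Az.det hDz0
  set m := Fintype.card {x // x ∈ S'} with hm
  have hmd : m ≤ d := by
    have h9 := Fintype.card_le_of_injective f hfinj
    simpa [hm] using h9
  set lam : {x // x ∈ S'} → ℝ := fun c => w ↑c / w j0 with hlam
  have hlamnn : ∀ c, 0 ≤ lam c := fun c => div_nonneg (hw1 _) (le_of_lt hj0pos)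
  have hsys : ∀ i, (∑ c : {x // x ∈ S'}, lam c * (v (↑c : Fin l) i : ℝ)) + (v j0 i : ℝ) = 0 := by
    intro i
    have hsplit : ∑ j ∈ S, w j * (v j i : ℝ) = 0 := by
      have hzz : ∀ j ∈ univ, j ∉ S → w j * (v j i : ℝ) = 0 := by
        intro j _ hj
        have hwj : w j = 0 := by
          by_contra hwj'
          exact hj (by simp [hS, hwj'])
        simp [hwj]
      rw [Finset.sum_subset (Finset.subset_univ S) hzz]
      exact hw3 i
    rw [← Finset.insert_erase hj0S, Finset.sum_insert hj0S'] at hsplit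
    have h10 : ∑ c : {x // x ∈ S'}, lam c * (v (↑c : Fin l) i : ℝ)
        = (∑ j ∈ S', w j * (v j i : ℝ)) / w j0 := by
      rw [Finset.sum_div]
      simp only [hlam]
      rw [Finset.sum_coe_sort S' fun j => w j / w j0 * (v j i : ℝ)]
      exact Finset.sum_congr rfl fun j _ => by ring
    rw [h10]
    have h11 : ∑ j ∈ S', w j * (v j i : ℝ) = -(w j0 * (v j0 i : ℝ)) := by
      have := hsplit
      linarith
    rw [h11]
    field_simp
    ring
  have hmv : AR.mulVec lam = fun r => -((v j0 (f r) : ℤ) : ℝ) := by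
    funext r
    have h9 := hsys (f r)
    simp only [Matrix.mulVec, dotProduct, hAR, Matrix.map_apply, hAz,
      Int.coe_castRingHom]
    have h12 : ∑ c : {x // x ∈ S'}, ((v (↑c : Fin l) (f r) : ℤ) : ℝ) * lam c
        = ∑ c : {x // x ∈ S'}, lam c * ((v (↑c : Fin l) (f r) : ℤ) : ℝ) :=
      Finset.sum_congr rfl fun c _ => mul_comm _ _
    change ∑ c : {x // x ∈ S'}, ((v (↑c : Fin l) (f r) : ℤ) : ℝ) * lam c = _
    rw [h12]
    linarith
  have hDlam : ∀ c, ((Az.det : ℤ) : ℝ) * lam c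
      = (((Az.adjugate.mulVec fun r => -(v j0 (f r))) c : ℤ) : ℝ) := by
    intro c
    have h10 : AR.adjugate.mulVec (AR.mulVec lam) = AR.det • lam := by
      rw [Matrix.mulVec_mulVec, Matrix.adjugate_mul, Matrix.smul_mulVec,
        Matrix.one_mulVec]
    have h12 : AR.adjugate = Az.adjugate.map (Int.castRingHom ℝ) := by
      rw [hAR, ← RingHom.mapMatrix_apply, ← RingHom.map_adjugate, RingHom.mapMatrix_apply]
    calc ((Az.det : ℤ) : ℝ) * lam c = (AR.det • lam) c := by
          rw [hARdet]; simp
      _ = (AR.adjugate.mulVec (AR.mulVec lam)) c := by rw [h10]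
      _ = (AR.adjugate.mulVec fun r => -((v j0 (f r) : ℤ) : ℝ)) c := by rw [hmv]
      _ = (((Az.adjugate.mulVec fun r => -(v j0 (f r))) c : ℤ) : ℝ) := by
          rw [h12]
          simp only [Matrix.mulVec, dotProduct, Matrix.map_apply,
            Int.coe_castRingHom]
          push_cast
          rfl
  set Nz : {x // x ∈ S'} → ℤ := fun c => ε * (Az.adjugate.mulVec fun r => -(v j0 (f r))) c
    with hNz
  have hNcast : ∀ c, ((Nz c : ℤ) : ℝ) = ((|Az.det| : ℤ) : ℝ) * lam c := by
    intro c
    calc ((Nz c : ℤ) : ℝ)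
        = (ε : ℝ) * (((Az.adjugate.mulVec fun r => -(v j0 (f r))) c : ℤ) : ℝ) := by
          rw [hNz]; push_cast; ring
      _ = (ε : ℝ) * (((Az.det : ℤ) : ℝ) * lam c) := by rw [← hDlam c]
      _ = ((ε * Az.det : ℤ) : ℝ) * lam c := by push_cast; ring
      _ = ((|Az.det| : ℤ) : ℝ) * lam c := by rw [hεD]
  have hNnn : ∀ c, 0 ≤ Nz c := by
    intro c
    have h13 : (0 : ℝ) ≤ ((Nz c : ℤ) : ℝ) := by
      rw [hNcast c]
      have h14 : (0 : ℝ) ≤ ((|Az.det| : ℤ) : ℝ) := by positivity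
      exact mul_nonneg h14 (hlamnn c)
    exact_mod_cast h13
  set n : Fin l → ℕ := fun j => if hj : j ∈ S' then (Nz ⟨j, hj⟩).toNat
    else if j = j0 then Az.det.natAbs else 0 with hn
  have hnj0 : n j0 = Az.det.natAbs := by simp [hn, hj0S']
  have hnS' : ∀ (j) (hj : j ∈ S'), n j = (Nz ⟨j, hj⟩).toNat := by
    intro j hj; simp [hn, hj]
  have hnz : ∀ j, j ∉ S' → j ≠ j0 → n j = 0 := by
    intro j h1 h2; simp [hn, h1, h2]
  have hentry : ∀ r c, |Az r c| ≤ (a : ℤ) := fun r c => hv _ _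
  have hadj : ∀ c r, |Az.adjugate c r| ≤ (m.factorial : ℤ) * (a : ℤ) ^ m := by
    intro c r
    have h14 := abs_adjugate_le Az (by exact_mod_cast ha) hentry c r
    rw [← hm] at h14
    exact_mod_cast h14
  have hdetle : |Az.det| ≤ (m.factorial : ℤ) * (a : ℤ) ^ m := by
    have h15 := abs_det_le Az hentry
    rw [← hm] at h15
    exact_mod_cast h15
  have hNle : ∀ c, |Nz c| ≤ (m : ℤ) * ((m.factorial : ℤ) * (a : ℤ) ^ m) * (a : ℤ) := by
    intro c
    rw [hNz]
    calc |ε * (Az.adjugate.mulVec fun r => -(v j0 (f r))) c|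
        = |(Az.adjugate.mulVec fun r => -(v j0 (f r))) c| := by rw [abs_mul, hε1, one_mul]
      _ = |∑ r, Az.adjugate c r * -(v j0 (f r))| := by
          simp [Matrix.mulVec, dotProduct]
      _ ≤ ∑ r, |Az.adjugate c r * -(v j0 (f r))| := Finset.abs_sum_le_sum_abs _ _
      _ ≤ ∑ _r : {x // x ∈ S'}, (m.factorial : ℤ) * (a : ℤ) ^ m * (a : ℤ) := by
          refine Finset.sum_le_sum fun r _ => ?_
          rw [abs_mul, abs_neg]
          refine mul_le_mul (hadj c r) (hv _ _) (abs_nonneg _) ?_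
          positivity
      _ = (m : ℤ) * ((m.factorial : ℤ) * (a : ℤ) ^ m) * (a : ℤ) := by
          rw [Finset.sum_const, Finset.card_univ, ← hm, nsmul_eq_mul]
          ring
  have hKbound : ((m * (m.factorial * a ^ m) * a : ℕ) : ℤ) ≤ (((a * d) ^ (d + 1) : ℕ) : ℤ) := by
    exact_mod_cast nat_bound hmd ha hd
  have hKbound' : ((m.factorial * a ^ m : ℕ) : ℤ) ≤ (((a * d) ^ (d + 1) : ℕ) : ℤ) := by
    exact_mod_cast nat_bound' hmd ha hd
  refine ⟨n, ?_, ?_, ?_⟩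
  · intro j
    by_cases hj : j ∈ S'
    · rw [hnS' j hj]
      have h16 : Nz ⟨j, hj⟩ ≤ (((a * d) ^ (d + 1) : ℕ) : ℤ) := by
        refine le_trans (le_abs_self _) (le_trans (hNle _) ?_)
        refine le_trans ?_ hKbound
        apply le_of_eq
        push_cast
        ring
      exact Int.toNat_le.mpr h16
    · by_cases hj0 : j = j0
      · subst hj0
        rw [hnj0]
        have h17 : (Az.det.natAbs : ℤ) ≤ (((a * d) ^ (d + 1) : ℕ) : ℤ) := by
          rw [Int.abs_eq_natAbs] at hdetle
          refine le_trans hdetle (le_trans ?_ hKbound')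
          apply le_of_eq
          push_cast
          ring
        exact_mod_cast h17
      · rw [hnz j hj hj0]; exact Nat.zero_le _
  · intro h0
    have h18 := congrFun h0 j0
    rw [hnj0] at h18
    exact hDz0 (Int.natAbs_eq_zero.mp h18)
  · intro i
    have hreal : ∑ j, (n j : ℝ) * (v j i : ℝ) = 0 := by
      have hz : ∀ j ∈ univ, j ∉ insert j0 S' → (n j : ℝ) * (v j i : ℝ) = 0 := by
        intro j _ hj
        rw [Finset.mem_insert] at hj
        push_neg at hj
        rw [hnz j hj.2 hj.1]
        simp
      have hsum : ∑ j, (n j : ℝ) * (v j i : ℝ)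
          = ∑ j ∈ insert j0 S', (n j : ℝ) * (v j i : ℝ) :=
        (Finset.sum_subset (Finset.subset_univ _) hz).symm
      rw [hsum, Finset.sum_insert hj0S']
      have hA1 : (n j0 : ℝ) * (v j0 i : ℝ) = ((|Az.det| : ℤ) : ℝ) * (v j0 i : ℝ) := by
        rw [hnj0]
        congr 1
        rw [Nat.cast_natAbs, Int.cast_abs]
      have hA2 : ∑ j ∈ S', (n j : ℝ) * (v j i : ℝ)
          = ((|Az.det| : ℤ) : ℝ) * ∑ c : {x // x ∈ S'}, lam c * (v (↑c : Fin l) i : ℝ) := by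
        rw [Finset.mul_sum, ← Finset.sum_coe_sort S' fun j => (n j : ℝ) * (v j i : ℝ)]
        refine Finset.sum_congr rfl fun c _ => ?_
        have hcn : n ↑c = (Nz c).toNat := by
          have h20 := hnS' ↑c c.2
          simpa using h20
        rw [hcn]
        have h19 : (((Nz c).toNat : ℕ) : ℝ) = ((Nz c : ℤ) : ℝ) := by
          have h21 := Int.toNat_of_nonneg (hNnn c)
          exact_mod_cast congrArg (fun z : ℤ => (z : ℝ)) h21
        rw [h19, hNcast c]
        ring
      have h22 : (v j0 i : ℝ) + ∑ c : {x // x ∈ S'}, lam c * (v (↑c : Fin l) i : ℝ) = 0 := by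
        rw [add_comm]; exact hsys i
      rw [hA1, hA2, ← mul_add, h22, mul_zero]
    have hint : ((∑ j, (n j : ℤ) * v j i : ℤ) : ℝ) = 0 := by
      push_cast
      exact_mod_cast hreal
    exact_mod_cast hint


lemma lemTWO {a d l : ℕ} (ha : 0 < a) (hd : 0 < d)
    (v : Fin l → Fin d → ℤ) (hv : ∀ j i, |v j i| ≤ (a : ℤ))
    (hh : ∃ h : Fin d → ℝ, ∀ j, 1 ≤ ∑ i, h i * (v j i : ℝ)) :
    ∃ g : Fin d → ℤ, (∀ i, |g i| ≤ (((a * d) ^ (d + 1) : ℕ) : ℤ)) ∧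
      ∀ j, 1 ≤ ∑ i, g i * v j i := by
  classical
  set rv : Fin l → Fin d → ℝ := fun j i => (v j i : ℝ) with hrv
  set TS : (Fin d → ℝ) → Set (Fin d → ℝ) :=
    fun h => rv '' {j | ∑ i, h i * rv j i = 1} with hTS
  set ρ : (Fin d → ℝ) → ℕ := fun h => Module.finrank ℝ (span ℝ (TS h)) with hρ
  set C : Set ℕ := {c | ∃ h : Fin d → ℝ, (∀ j, 1 ≤ ∑ i, h i * rv j i) ∧ ρ h = c} with hC
  obtain ⟨h0, hh0⟩ := hh
  have hCne : C.Nonempty := ⟨ρ h0, h0, hh0, rfl⟩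
  have hCbdd : BddAbove C := by
    refine ⟨d, ?_⟩
    rintro c ⟨h, _, rfl⟩
    have h1 := Submodule.finrank_le (span ℝ (TS h))
    simpa [hρ, Module.finrank_pi] using h1
  obtain ⟨h, hfeas, hρh⟩ := Nat.sSup_mem hCne hCbdd
  -- every vector lies in span of the tight set of the optimum
  have hall : ∀ j, rv j ∈ span ℝ (TS h) := by
    by_contra hnot
    push_neg at hnot
    obtain ⟨k, hk⟩ := hnot
    obtain ⟨u0, hu0T, hu0k⟩ := exists_dot_ne (TS h) (rv k) hk
    obtain ⟨u, huT, k', hk'⟩ :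
        ∃ u : Fin d → ℝ, (∀ s ∈ TS h, ∑ i, u i * s i = 0) ∧
          ∃ k', ∑ i, u i * rv k' i < 0 := by
      rcases lt_or_gt_of_ne hu0k with hneg | hpos
      · exact ⟨u0, hu0T, k, hneg⟩
      · refine ⟨-u0, fun s hs => ?_, k, ?_⟩
        · have h2 := hu0T s hs
          simp only [Pi.neg_apply, neg_mul]
          simp [h2]
        · have h3 : ∑ i, (-u0) i * rv k i = -(∑ i, u0 i * rv k i) := by
            simp [neg_mul]
          rw [h3]
          linarith
    set F : Finset (Fin l) := univ.filter fun j => ∑ i, u i * rv j i < 0 with hF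
    have hk'F : k' ∈ F := by simp [hF, hk']
    obtain ⟨k0, hk0F, hk0min⟩ := F.exists_min_image
      (fun j => ((∑ i, h i * rv j i) - 1) / (-(∑ i, u i * rv j i))) ⟨k', hk'F⟩
    have hk0neg : ∑ i, u i * rv k0 i < 0 := by simpa [hF] using hk0F
    set t : ℝ := ((∑ i, h i * rv k0 i) - 1) / (-(∑ i, u i * rv k0 i)) with ht
    have htnn : 0 ≤ t := by
      apply div_nonneg
      · linarith [hfeas k0]
      · linarith
    set h2 : Fin d → ℝ := fun i => h i + t * u i with hh2
    have hdot : ∀ j, ∑ i, h2 i * rv j i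
        = (∑ i, h i * rv j i) + t * ∑ i, u i * rv j i := by
      intro j
      calc ∑ i, h2 i * rv j i
          = ∑ i, (h i * rv j i + t * (u i * rv j i)) :=
            Finset.sum_congr rfl fun i _ => by rw [hh2]; ring
        _ = (∑ i, h i * rv j i) + t * ∑ i, u i * rv j i := by
            rw [Finset.sum_add_distrib, Finset.mul_sum]
    have hfeas2 : ∀ j, 1 ≤ ∑ i, h2 i * rv j i := by
      intro j
      rw [hdot j]
      by_cases hj : ∑ i, u i * rv j i < 0
      · have hjF : j ∈ F := by simp [hF, hj]
        have h6 : t ≤ ((∑ i, h i * rv j i) - 1) / (-(∑ i, u i * rv j i)) := hk0min j hjF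
        rw [le_div_iff₀ (by linarith)] at h6
        ring_nf at h6 ⊢
        linarith
      · push_neg at hj
        have h7 : 0 ≤ t * ∑ i, u i * rv j i := mul_nonneg htnn hj
        linarith [hfeas j]
    have hTsub : TS h ⊆ TS h2 := by
      rintro s ⟨j, hjt, rfl⟩
      refine ⟨j, ?_, rfl⟩
      have hu0 : ∑ i, u i * rv j i = 0 := huT _ ⟨j, hjt, rfl⟩
      simp only [Set.mem_setOf_eq] at hjt ⊢
      rw [hdot j, hjt, hu0, mul_zero, add_zero]
    have hk0tight : rv k0 ∈ TS h2 := by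
      refine ⟨k0, ?_, rfl⟩
      simp only [Set.mem_setOf_eq]
      have hXne : (∑ i, u i * rv k0 i) ≠ 0 := ne_of_lt hk0neg
      have h8 : t * (∑ i, u i * rv k0 i) = -((∑ i, h i * rv k0 i) - 1) := by
        rw [ht]
        field_simp
      rw [hdot k0, h8]
      ring
    have hk0not : rv k0 ∉ span ℝ (TS h) := by
      intro hmem
      have h9 := dot_eq_zero_of_mem_span huT hmem
      linarith
    have hltspan : span ℝ (TS h) < span ℝ (TS h2) := by
      refine lt_of_le_of_ne (span_mono hTsub) ?_
      intro heq
      exact hk0not (heq ▸ subset_span hk0tight)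
    have hr : ρ h < ρ h2 := Submodule.finrank_lt_finrank_of_lt hltspan
    have hle : ρ h2 ≤ sSup C := le_csSup hCbdd ⟨h2, hfeas2, rfl⟩
    omega
  -- extract a basis from the tight set
  obtain ⟨b, hbsub, hbspan, hbind⟩ := exists_linearIndependent ℝ (TS h)
  have hbfin : b.Finite := Set.Finite.subset (Set.Finite.image rv (Set.toFinite _)) hbsub
  haveI : Fintype b := hbfin.fintype
  have hallb : ∀ j, rv j ∈ span ℝ b := by rw [hbspan]; exact hall
  have hpre : ∀ y : b, ∃ j, (∑ i, h i * rv j i = 1) ∧ rv j = (y : Fin d → ℝ) := by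
    intro y
    obtain ⟨j, hjt, hjy⟩ := hbsub y.2
    exact ⟨j, hjt, hjy⟩
  choose p hp1 hp2 using hpre
  set M : Matrix (Fin d) b ℝ := fun i c => rv (p c) i with hM
  have hMind : LinearIndependent ℝ fun c => fun i => M i c := by
    have h10 : (fun c : b => fun i => M i c) = fun c : b => (c : Fin d → ℝ) := by
      funext c
      exact hp2 c
    rw [h10]
    exact hbind
  obtain ⟨f, hfinj, hfdet⟩ := exists_submatrix_det_ne_zero M hMind
  set Qz : Matrix b b ℤ := fun r c => v (p c) (f r) with hQz
  set QR : Matrix b b ℝ := Qz.map (Int.castRingHom ℝ) with hQR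
  have hQRsub : QR = M.submatrix f id := by
    ext r c
    simp [hQR, hQz, hM, hrv, Matrix.map_apply]
    rfl
  have hQRdet : QR.det = ((Qz.det : ℤ) : ℝ) := by
    rw [hQR, ← RingHom.mapMatrix_apply, ← RingHom.map_det]
    rfl
  have hDz0 : Qz.det ≠ 0 := by
    intro h0; apply hfdet; rw [← hQRsub, hQRdet, h0]; simp
  obtain ⟨ε, hεD, hε1⟩ := eps_spec Qz.det hDz0
  set m := Fintype.card b with hm
  have hmd : m ≤ d := by
    have h9 := Fintype.card_le_of_injective f hfinj
    simpa [hm] using h9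
  set x : b → ℤ := fun r => ε * ∑ c, Qz.adjugate c r with hx
  have hxQ : ∀ c, ∑ r, x r * Qz r c = |Qz.det| := by
    intro c
    have hAQ : Qz.adjugate * Qz = Qz.det • (1 : Matrix b b ℤ) := Matrix.adjugate_mul Qz
    have e1 : ∑ r, x r * Qz r c = ε * ∑ r, ∑ c', Qz.adjugate c' r * Qz r c := by
      rw [Finset.mul_sum]
      refine Finset.sum_congr rfl fun r _ => ?_
      simp only [hx]
      rw [mul_assoc, Finset.sum_mul]
    have e2 : ∑ r, ∑ c', Qz.adjugate c' r * Qz r c = ∑ c', (Qz.adjugate * Qz) c' c := by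
      rw [Finset.sum_comm]
      exact Finset.sum_congr rfl fun c' _ => (Matrix.mul_apply).symm
    have e3 : ∑ c', (Qz.adjugate * Qz) c' c = Qz.det := by
      rw [hAQ]
      simp [Matrix.one_apply]
    rw [e1, e2, e3, hεD]
  set g : Fin d → ℤ := fun i => ∑ r, if f r = i then x r else 0 with hg
  have hgdot : ∀ c : b, ∑ i, g i * v (p c) i = |Qz.det| := by
    intro c
    calc ∑ i, g i * v (p c) i
        = ∑ i, ∑ r, (if f r = i then x r else 0) * v (p c) i := by
          refine Finset.sum_congr rfl fun i _ => ?_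
          simp only [hg]
          rw [Finset.sum_mul]
      _ = ∑ r, ∑ i, (if f r = i then x r * v (p c) i else 0) := by
          rw [Finset.sum_comm]
          exact Finset.sum_congr rfl fun r _ => Finset.sum_congr rfl fun i _ => by
            split <;> simp
      _ = ∑ r, x r * v (p c) (f r) := by
          refine Finset.sum_congr rfl fun r _ => ?_
          exact Fintype.sum_ite_eq (f r) fun i => x r * v (p c) i
      _ = ∑ r, x r * Qz r c := by
          refine Finset.sum_congr rfl fun r _ => by rw [hQz]
      _ = |Qz.det| := hxQ c
  -- bounds
  have hadj : ∀ c r, |Qz.adjugate c r| ≤ (m.factorial : ℤ) * (a : ℤ) ^ m := by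
    intro c r
    have h14 := abs_adjugate_le Qz (by exact_mod_cast ha) (fun r' c' => hv _ _) c r
    rw [← hm] at h14
    exact_mod_cast h14
  have hxle : ∀ r, |x r| ≤ (m : ℤ) * ((m.factorial : ℤ) * (a : ℤ) ^ m) := by
    intro r
    rw [hx, abs_mul, hε1, one_mul]
    calc |∑ c, Qz.adjugate c r| ≤ ∑ c, |Qz.adjugate c r| := Finset.abs_sum_le_sum_abs _ _
      _ ≤ ∑ _c : b, (m.factorial : ℤ) * (a : ℤ) ^ m := Finset.sum_le_sum fun c _ => hadj c r
      _ = (m : ℤ) * ((m.factorial : ℤ) * (a : ℤ) ^ m) := by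
          rw [Finset.sum_const, Finset.card_univ, ← hm, nsmul_eq_mul]
  have hKbound : ((m * (m.factorial * a ^ m) * a : ℕ) : ℤ) ≤ (((a * d) ^ (d + 1) : ℕ) : ℤ) := by
    exact_mod_cast nat_bound hmd ha hd
  have hgle : ∀ i, |g i| ≤ (((a * d) ^ (d + 1) : ℕ) : ℤ) := by
    intro i
    have hb : |g i| ≤ (m : ℤ) * ((m.factorial : ℤ) * (a : ℤ) ^ m) := by
      by_cases hex : ∃ r, f r = i
      · obtain ⟨r0, hr0⟩ := hex
        have h15 : g i = x r0 := by
          simp only [hg]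
          rw [Finset.sum_eq_single r0]
          · rw [if_pos hr0]
          · intro r _ hne
            exact if_neg fun he => hne (hfinj (he.trans hr0.symm))
          · intro habs; exact absurd (Finset.mem_univ r0) habs
        rw [h15]; exact hxle r0
      · push_neg at hex
        have h16 : g i = 0 := by
          simp only [hg]
          exact Finset.sum_eq_zero fun r _ => if_neg (hex r)
        rw [h16]
        simp only [abs_zero]
        positivity
    refine le_trans hb ?_
    refine le_trans ?_ hKbound
    have h17 : (m : ℤ) * ((m.factorial : ℤ) * (a : ℤ) ^ m)
        ≤ (m : ℤ) * ((m.factorial : ℤ) * (a : ℤ) ^ m) * (a : ℤ) := by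
      refine le_mul_of_one_le_right ?_ (by exact_mod_cast ha)
      positivity
    refine le_trans h17 ?_
    apply le_of_eq
    push_cast
    ring
  -- feasibility of g
  refine ⟨g, hgle, fun j => ?_⟩
  obtain ⟨coef, hcoef⟩ : ∃ coef : b → ℝ, ∑ c, coef c • (c : Fin d → ℝ) = rv j := by
    have hmem : rv j ∈ span ℝ (Set.range fun c : b => (c : Fin d → ℝ)) := by
      rw [Subtype.range_coe]
      exact hallb j
    exact (mem_span_range_iff_exists_fun ℝ).mp hmem
  have hcoord : ∀ i, rv j i = ∑ c, coef c * (c : Fin d → ℝ) i := by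
    intro i
    have h18 := congrFun hcoef i
    simpa [Finset.sum_apply, Pi.smul_apply, smul_eq_mul] using h18.symm
  have hswap : ∀ q : Fin d → ℝ,
      ∑ i, q i * rv j i = ∑ c, coef c * ∑ i, q i * (c : Fin d → ℝ) i := by
    intro q
    calc ∑ i, q i * rv j i
        = ∑ i, ∑ c, coef c * (q i * (c : Fin d → ℝ) i) := by
          refine Finset.sum_congr rfl fun i _ => ?_
          rw [hcoord i, Finset.mul_sum]
          exact Finset.sum_congr rfl fun c _ => by ring
      _ = ∑ c, coef c * ∑ i, q i * (c : Fin d → ℝ) i := by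
          rw [Finset.sum_comm]
          exact Finset.sum_congr rfl fun c _ => by rw [Finset.mul_sum]
  have hgc : ∀ c : b, ∑ i, ((g i : ℤ) : ℝ) * (c : Fin d → ℝ) i = ((|Qz.det| : ℤ) : ℝ) := by
    intro c
    have hyc : ((c : b) : Fin d → ℝ) = rv (p c) := (hp2 c).symm
    rw [hyc]
    simp only [hrv]
    exact_mod_cast congrArg (fun z : ℤ => (z : ℝ)) (hgdot c)
  have hhc : ∀ c : b, ∑ i, h i * (c : Fin d → ℝ) i = 1 := by
    intro c
    have hyc : ((c : b) : Fin d → ℝ) = rv (p c) := (hp2 c).symm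
    rw [hyc]
    exact hp1 c
  have hgreal : ∑ i, ((g i : ℤ) : ℝ) * rv j i = ((|Qz.det| : ℤ) : ℝ) * ∑ c, coef c := by
    rw [hswap fun i => ((g i : ℤ) : ℝ)]
    rw [Finset.mul_sum]
    exact Finset.sum_congr rfl fun c _ => by rw [hgc c]; ring
  have hhreal : ∑ i, h i * rv j i = ∑ c, coef c := by
    rw [hswap h]
    exact Finset.sum_congr rfl fun c _ => by rw [hhc c, mul_one]
  have hD1 : (1 : ℝ) ≤ ((|Qz.det| : ℤ) : ℝ) := by
    have := Int.one_le_abs hDz0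
    exact_mod_cast this
  have hX1 : (1 : ℝ) ≤ ∑ c, coef c := by
    rw [← hhreal]; exact hfeas j
  have hfinal : (1 : ℝ) ≤ ((∑ i, g i * v j i : ℤ) : ℝ) := by
    push_cast
    have h23 : ∑ i, ((g i : ℤ) : ℝ) * rv j i = ((|Qz.det| : ℤ) : ℝ) * ∑ c, coef c := hgreal
    simp only [hrv] at h23
    rw [h23]
    nlinarith
  exact_mod_cast hfinal


lemma lemEXCL {d l K : ℕ} (v : Fin l → Fin d → ℤ)
    (h1 : ∃ n : Fin l → ℕ, (∀ j, n j ≤ K) ∧ n ≠ 0 ∧ ∀ i, ∑ j, (n j : ℤ) * v j i = 0)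
    (h2 : ∃ h : Fin d → ℤ, (∀ i, |h i| ≤ (K : ℤ)) ∧ ∀ j, 1 ≤ ∑ i, h i * v j i) : False := by
  obtain ⟨n, hnK, hn0, hnsys⟩ := h1
  obtain ⟨g, hgK, hgsys⟩ := h2
  have hswap : ∑ j, (n j : ℤ) * (∑ i, g i * v j i) = 0 := by
    calc ∑ j, (n j : ℤ) * (∑ i, g i * v j i)
        = ∑ j, ∑ i, g i * ((n j : ℤ) * v j i) := by
          refine Finset.sum_congr rfl fun j _ => ?_
          rw [Finset.mul_sum]
          exact Finset.sum_congr rfl fun i _ => by ring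
      _ = ∑ i, g i * ∑ j, (n j : ℤ) * v j i := by
          rw [Finset.sum_comm]
          exact Finset.sum_congr rfl fun i _ => (Finset.mul_sum _ _ _).symm
      _ = 0 := by
          refine Finset.sum_eq_zero fun i _ => ?_
          rw [hnsys i, mul_zero]
  obtain ⟨j0, hj0⟩ : ∃ j0, n j0 ≠ 0 := by
    by_contra hno; push_neg at hno; exact hn0 (funext hno)
  have hterm : ∀ j, (n j : ℤ) ≤ (n j : ℤ) * (∑ i, g i * v j i) := fun j =>
    le_mul_of_one_le_right (by positivity) (hgsys j)
  have hsum : (n j0 : ℤ) ≤ ∑ j, (n j : ℤ) * (∑ i, g i * v j i) := by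
    refine le_trans ?_ (Finset.sum_le_sum fun j _ => hterm j)
    exact Finset.single_le_sum (f := fun j => (n j : ℤ)) (fun j _ => by positivity)
      (Finset.mem_univ j0)
  rw [hswap] at hsum
  have h19 : (1 : ℤ) ≤ (n j0 : ℤ) := by exact_mod_cast Nat.one_le_iff_ne_zero.mpr hj0
  omega

end Stmt3Aux

/-- discrete Farkas lemma of Papadimitriou. For positive
integers `a, d, l`, vectors `v_1, …, v_l ∈ ℤ^d` with all components of absolute
value at most `a`, and `K = (ad)^(d+1)`, exactly one of the following holds:
(1) some nontrivial combination `∑ n_j v_j = 0` with coefficients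
`n_j ∈ {0,…,K}`; (2) some `h ∈ ℤ^d` with components of absolute value at most
`K` satisfies `h · v_j ≥ 1` for all `j`. -/
theorem stmt3 (a d l : ℕ) (ha : 0 < a) (hd : 0 < d) (hl : 0 < l)
    (v : Fin l → Fin d → ℤ) (hv : ∀ j i, |v j i| ≤ (a : ℤ))
    (K : ℕ) (hK : K = (a * d) ^ (d + 1)) :
    Xor'
      (∃ n : Fin l → ℕ, (∀ j, n j ≤ K) ∧ n ≠ 0 ∧
        ∀ i, ∑ j, (n j : ℤ) * v j i = 0)
      (∃ h : Fin d → ℤ, (∀ i, |h i| ≤ (K : ℤ)) ∧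
        ∀ j, 1 ≤ ∑ i, h i * v j i) := by
  subst hK
  unfold Xor'
  by_cases hP : ∃ n : Fin l → ℕ, (∀ j, n j ≤ (a * d) ^ (d + 1)) ∧ n ≠ 0 ∧
      ∀ i, ∑ j, (n j : ℤ) * v j i = 0
  · exact Or.inl ⟨hP, fun hQ => Stmt3Aux.lemEXCL v hP hQ⟩
  · refine Or.inr ⟨?_, hP⟩
    have hnw : ¬ ∃ w : Fin l → ℝ, (∀ j, 0 ≤ w j) ∧ w ≠ 0 ∧
        ∀ i, ∑ j, w j * ((v j i : ℤ) : ℝ) = 0 := fun hw =>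
      hP (Stmt3Aux.lemONE ha hd v hv hw)
    have hfeas := Stmt3Aux.lemSEP (fun j i => ((v j i : ℤ) : ℝ)) hnw
    exact Stmt3Aux.lemTWO ha hd v hv hfeas
end

section
/- Let d, n, a be positive integers and let M be a d×n integer matrix all of whose entries have absolute value at most a. Suppose c in ℕ^n satisfies M c = 0 and \|c\|_1 >= 2 n (ad)^{2d+3}. Then there exist nonzero vectors c_1, c_2 in ℕ^n such that c_1 + c_2 = c, M c_1 = 0, and M c_2 = 0. -/
open Finset

namespace Stmt4

variable {d n : ℕ}

/-- sum of entries -/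
def SS (x : Fin n → ℚ) : ℚ := ∑ j, x j

/-- nonnegative kernel element -/
def IsSol (M : Fin d → Fin n → ℚ) (x : Fin n → ℚ) : Prop :=
  (∀ j, 0 ≤ x j) ∧ ∀ i, ∑ j, M i j * x j = 0

/-- support -/
def supp (x : Fin n → ℚ) : Finset (Fin n) := univ.filter (fun j => x j ≠ 0)

lemma mem_supp {x : Fin n → ℚ} {j : Fin n} : j ∈ supp x ↔ x j ≠ 0 := by
  simp [supp]

lemma not_mem_supp {x : Fin n → ℚ} {j : Fin n} : j ∉ supp x ↔ x j = 0 := by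
  simp [supp]

/-- extreme solution: every kernel vector supported in supp x is a multiple of x -/
def Ext (M : Fin d → Fin n → ℚ) (x : Fin n → ℚ) : Prop :=
  ∀ z : Fin n → ℚ, (∀ i, ∑ j, M i j * z j = 0) → (∀ j, x j = 0 → z j = 0) →
    ∃ μ : ℚ, z = μ • x

lemma Ext_zero (M : Fin d → Fin n → ℚ) : Ext M (0 : Fin n → ℚ) := by
  intro z _ hz
  refine ⟨0, ?_⟩
  ext j
  simpa using hz j rfl

lemma Ext_smul {M : Fin d → Fin n → ℚ} {x : Fin n → ℚ} {t : ℚ} (ht : t ≠ 0)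
    (hx : Ext M x) : Ext M (t • x) := by
  intro z hker hsupp
  obtain ⟨μ, hμ⟩ := hx z hker (fun j hj => hsupp j (by simp [hj]))
  refine ⟨μ / t, ?_⟩
  rw [hμ]; ext j
  simp only [Pi.smul_apply, smul_eq_mul, div_eq_mul_inv]
  field_simp

lemma IsSol_smul {M : Fin d → Fin n → ℚ} {x : Fin n → ℚ} {t : ℚ} (ht : 0 ≤ t)
    (hx : IsSol M x) : IsSol M (t • x) := by
  refine ⟨fun j => mul_nonneg ht (hx.1 j), fun i => ?_⟩
  have := hx.2 i
  calc ∑ j, M i j * (t • x) j = t * ∑ j, M i j * x j := by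
        rw [Finset.mul_sum]; apply Finset.sum_congr rfl; intro j _; simp; ring
    _ = 0 := by rw [this, mul_zero]

lemma supp_pos {M : Fin d → Fin n → ℚ} {x : Fin n → ℚ} (hx : IsSol M x) {j : Fin n}
    (hj : j ∈ supp x) : 0 < x j := lt_of_le_of_ne (hx.1 j) (Ne.symm (mem_supp.1 hj))

lemma eq_zero_of_supp_empty {x : Fin n → ℚ} (h : supp x = ∅) : x = 0 := by
  ext j
  have := Finset.eq_empty_iff_forall_notMem.1 h j
  simpa [not_mem_supp] using (not_mem_supp.1 this)

/-- The basic step: subtract a multiple of a kernel vector `w` with a positive coordinate,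
killing one coordinate of the support. -/
lemma step {M : Fin d → Fin n → ℚ} {y w : Fin n → ℚ} (hy : IsSol M y)
    (hker : ∀ i, ∑ j, M i j * w j = 0) (hsupp : ∀ j, y j = 0 → w j = 0)
    (hpos : ∃ j, 0 < w j) :
    ∃ t : ℚ, 0 < t ∧ IsSol M (y - t • w) ∧ supp (y - t • w) ⊂ supp y := by
  classical
  set P : Finset (Fin n) := univ.filter (fun j => 0 < w j) with hP
  have hPne : P.Nonempty := by
    obtain ⟨j, hj⟩ := hpos
    exact ⟨j, by simp [hP, hj]⟩
  obtain ⟨j₀, hj₀P, hj₀min⟩ := Finset.exists_min_image P (fun j => y j / w j) hPne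
  have hwj₀ : 0 < w j₀ := by simpa [hP] using hj₀P
  have hyj₀ : 0 < y j₀ := by
    rcases lt_or_eq_of_le (hy.1 j₀) with h | h
    · exact h
    · exact absurd (hsupp j₀ h.symm) (ne_of_gt hwj₀)
  refine ⟨y j₀ / w j₀, div_pos hyj₀ hwj₀, ⟨?_, ?_⟩, ?_⟩
  · -- nonnegativity
    intro j
    by_cases hw : 0 < w j
    · have hmin := hj₀min j (by simp [hP, hw])
      have : (y j₀ / w j₀) * w j ≤ (y j / w j) * w j :=
        mul_le_mul_of_nonneg_right hmin (le_of_lt hw)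
      have h2 : (y j / w j) * w j = y j := div_mul_cancel₀ _ (ne_of_gt hw)
      simp only [Pi.sub_apply, Pi.smul_apply, smul_eq_mul]
      linarith [this, h2.le, h2.ge]
    · push_neg at hw
      have : (y j₀ / w j₀) * w j ≤ 0 :=
        mul_nonpos_of_nonneg_of_nonpos (le_of_lt (div_pos hyj₀ hwj₀)) hw
      have := hy.1 j
      simp only [Pi.sub_apply, Pi.smul_apply, smul_eq_mul]
      linarith
  · -- kernel
    intro i
    have h1 := hy.2 i
    have h2 := hker i
    calc ∑ j, M i j * (y - (y j₀ / w j₀) • w) j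
        = ∑ j, (M i j * y j - (y j₀ / w j₀) * (M i j * w j)) := by
          apply Finset.sum_congr rfl; intro j _; simp; ring
      _ = (∑ j, M i j * y j) - (y j₀ / w j₀) * ∑ j, M i j * w j := by
          rw [Finset.sum_sub_distrib, Finset.mul_sum]
      _ = 0 := by rw [h1, h2]; ring
  · -- strict support shrink
    constructor
    · intro j hj
      rw [mem_supp] at hj
      rw [mem_supp]
      intro hyj
      apply hj
      simp [hyj, hsupp j hyj]
    · intro hsub
      have hj₀supp : j₀ ∈ supp y := mem_supp.2 (ne_of_gt hyj₀)
      have := hsub hj₀supp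
      rw [mem_supp] at this
      apply this
      simp only [Pi.sub_apply, Pi.smul_apply, smul_eq_mul]
      field_simp; simp

end Stmt4
namespace Stmt4

variable {d n : ℕ}

/-- from a non-extreme solution, find a kernel vector supported in supp y with both signs -/
lemma exists_mixed {M : Fin d → Fin n → ℚ} {y : Fin n → ℚ} (hy : IsSol M y)
    (hnE : ¬ Ext M y) :
    ∃ w : Fin n → ℚ, (∀ i, ∑ j, M i j * w j = 0) ∧ (∀ j, y j = 0 → w j = 0) ∧
      (∃ j, 0 < w j) ∧ (∃ j, w j < 0) := by
  classical
  unfold Ext at hnE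
  push_neg at hnE
  obtain ⟨z, hzker, hzsupp, hznmul⟩ := hnE
  have hyne : y ≠ 0 := by
    rintro rfl
    apply hznmul 0
    ext j
    simpa using hzsupp j rfl
  have hsne : (supp y).Nonempty := by
    rcases Finset.eq_empty_or_nonempty (supp y) with h | h
    · exact absurd (eq_zero_of_supp_empty h) hyne
    · exact h
  set R : Finset ℚ := (supp y).image (fun j => z j / y j) with hR
  have hRne : R.Nonempty := hsne.image _
  have hminmax : R.min' hRne < R.max' hRne := by
    rcases lt_or_eq_of_le (Finset.min'_le R _ (R.max'_mem hRne)) with h | h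
    · exact h
    · exfalso
      apply hznmul (R.min' hRne)
      ext j
      by_cases hj : j ∈ supp y
      · have hmem : z j / y j ∈ R := Finset.mem_image_of_mem _ hj
        have h1 : R.min' hRne ≤ z j / y j := Finset.min'_le _ _ hmem
        have h2 : z j / y j ≤ R.max' hRne := Finset.le_max' _ _ hmem
        have : z j / y j = R.min' hRne := le_antisymm (h ▸ h2) h1
        have hyj : y j ≠ 0 := mem_supp.1 hj
        simp only [Pi.smul_apply, smul_eq_mul]
        rw [← this]
        field_simp
      · have hyj : y j = 0 := not_mem_supp.1 hj
        simp [hzsupp j hyj, hyj]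
  set ν : ℚ := (R.min' hRne + R.max' hRne) / 2 with hν
  have hν1 : R.min' hRne < ν := by rw [hν]; linarith
  have hν2 : ν < R.max' hRne := by rw [hν]; linarith
  refine ⟨z - ν • y, ?_, ?_, ?_, ?_⟩
  · intro i
    have h1 := hzker i
    have h2 := hy.2 i
    calc ∑ j, M i j * (z - ν • y) j
        = (∑ j, M i j * z j) - ν * ∑ j, M i j * y j := by
          rw [Finset.mul_sum, ← Finset.sum_sub_distrib]
          apply Finset.sum_congr rfl; intro j _; simp; ring
      _ = 0 := by rw [h1, h2]; ring
  · intro j hyj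
    simp [hzsupp j hyj, hyj]
  · -- positive coordinate at argmax
    obtain ⟨j, hjs, hjmax⟩ := Finset.mem_image.1 (R.max'_mem hRne)
    have hyj : 0 < y j := supp_pos hy hjs
    refine ⟨j, ?_⟩
    have h3 : ν < z j / y j := by rw [hjmax]; exact hν2
    have h4 := (lt_div_iff₀ hyj).1 h3
    simp only [Pi.sub_apply, Pi.smul_apply, smul_eq_mul]
    linarith
  · obtain ⟨j, hjs, hjmin⟩ := Finset.mem_image.1 (R.min'_mem hRne)
    have hyj : 0 < y j := supp_pos hy hjs
    refine ⟨j, ?_⟩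
    have h3 : z j / y j < ν := by rw [hjmin]; exact hν1
    have h4 := (div_lt_iff₀ hyj).1 h3
    simp only [Pi.sub_apply, Pi.smul_apply, smul_eq_mul]
    linarith

end Stmt4
namespace Stmt4
variable {d n : ℕ}

lemma supp_smul {x : Fin n → ℚ} {t : ℚ} (ht : t ≠ 0) : supp (t • x) = supp x := by
  ext j; simp [mem_supp, ht]

lemma decomp (M : Fin d → Fin n → ℚ) :
    ∀ (N₀ : ℕ) (y : Fin n → ℚ), (supp y).card ≤ N₀ → IsSol M y →
    ∃ (k : ℕ) (v : Fin k → (Fin n → ℚ)),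
      (∀ i, IsSol M (v i) ∧ Ext M (v i)) ∧ ∑ i, v i = y := by
  intro N₀
  induction N₀ with
  | zero =>
    intro y hc hy
    have : supp y = ∅ := Finset.card_eq_zero.1 (Nat.le_zero.1 hc)
    refine ⟨0, ![], by simp, ?_⟩
    rw [eq_zero_of_supp_empty this]
    simp
  | succ N ih =>
    intro y hc hy
    by_cases hE : Ext M y
    · exact ⟨1, ![y], by intro i; fin_cases i <;> exact ⟨hy, hE⟩, by simp⟩
    · obtain ⟨w, hker, hsupp, hpos, hneg⟩ := exists_mixed hy hE
      obtain ⟨t₁, ht₁, hsol₁, hss₁⟩ := step hy hker hsupp hpos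
      have hkerneg : ∀ i, ∑ j, M i j * (-w) j = 0 := by
        intro i
        have := hker i
        calc ∑ j, M i j * (-w) j = -∑ j, M i j * w j := by
              rw [← Finset.sum_neg_distrib]
              apply Finset.sum_congr rfl; intro j _; simp
          _ = 0 := by rw [this]; ring
      have hsuppneg : ∀ j, y j = 0 → (-w) j = 0 := by
        intro j hj; simp [hsupp j hj]
      have hposneg : ∃ j, 0 < (-w) j := by
        obtain ⟨j, hj⟩ := hneg; exact ⟨j, by simp; linarith⟩
      obtain ⟨t₂, ht₂, hsol₂, hss₂⟩ := step hy hkerneg hsuppneg hposneg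
      set y₁ := y - t₁ • w with hy₁
      set y₂ := y - t₂ • (-w) with hy₂
      have hsum : 0 < t₁ + t₂ := by linarith
      set lam := t₂ / (t₁ + t₂) with hlam
      set mu := t₁ / (t₁ + t₂) with hmu
      have hlam0 : 0 < lam := div_pos ht₂ hsum
      have hmu0 : 0 < mu := div_pos ht₁ hsum
      have hcomb : lam • y₁ + mu • y₂ = y := by
        ext j
        simp only [hy₁, hy₂, Pi.add_apply, Pi.smul_apply, Pi.sub_apply, Pi.neg_apply,
          smul_eq_mul, hlam, hmu]
        field_simp
        ring
      have hcard₁ : (supp (lam • y₁)).card ≤ N := by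
        rw [supp_smul (ne_of_gt hlam0)]
        have := Finset.card_lt_card hss₁
        omega
      have hcard₂ : (supp (mu • y₂)).card ≤ N := by
        rw [supp_smul (ne_of_gt hmu0)]
        have := Finset.card_lt_card hss₂
        omega
      obtain ⟨k₁, v₁, hv₁, hsum₁⟩ := ih (lam • y₁) hcard₁ (IsSol_smul (le_of_lt hlam0) hsol₁)
      obtain ⟨k₂, v₂, hv₂, hsum₂⟩ := ih (mu • y₂) hcard₂ (IsSol_smul (le_of_lt hmu0) hsol₂)
      refine ⟨k₁ + k₂, Fin.append v₁ v₂, ?_, ?_⟩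
      · intro i
        refine Fin.addCases (fun l => ?_) (fun r => ?_) i
        · rw [Fin.append_left]; exact hv₁ l
        · rw [Fin.append_right]; exact hv₂ r
      · rw [Fin.sum_univ_add]
        simp only [Fin.append_left, Fin.append_right]
        rw [hsum₁, hsum₂, hcomb]

end Stmt4
namespace Stmt4
variable {d n : ℕ}

lemma shrink (M : Fin d → Fin n → ℚ) : ∀ (k : ℕ) (v : Fin k → (Fin n → ℚ)),
    (∀ i, IsSol M (v i) ∧ Ext M (v i)) →
    ∃ (k' : ℕ) (v' : Fin k' → (Fin n → ℚ)), k' ≤ n ∧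
      (∀ i, IsSol M (v' i) ∧ Ext M (v' i)) ∧ ∑ i, v' i = ∑ i, v i := by
  intro k
  induction k using Nat.strong_induction_on with
  | _ k ih =>
    intro v hv
    by_cases hk : k ≤ n
    · exact ⟨k, v, hk, hv, rfl⟩
    · have hk' : n < k := not_le.1 hk
      have hnli : ¬ LinearIndependent ℚ v := by
        intro hli
        have h1 := hli.fintype_card_le_finrank
        rw [Module.finrank_fintype_fun_eq_card] at h1
        simp only [Fintype.card_fin] at h1
        omega
      obtain ⟨g₀, hg₀, i₁, hi₁⟩ := Fintype.not_linearIndependent_iff.1 hnli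
      have hex : ∃ g : Fin k → ℚ, (∑ i, g i • v i = 0) ∧ ∃ i, 0 < g i := by
        rcases lt_trichotomy (g₀ i₁) 0 with h | h | h
        · refine ⟨-g₀, ?_, ⟨i₁, by simp; linarith⟩⟩
          calc ∑ i, (-g₀) i • v i = -∑ i, g₀ i • v i := by
                rw [← Finset.sum_neg_distrib]
                apply Finset.sum_congr rfl; intro i _; simp
            _ = 0 := by rw [hg₀]; simp
        · exact absurd h hi₁
        · exact ⟨g₀, hg₀, i₁, h⟩
      obtain ⟨g, hg, hgpos⟩ := hex
      classical
      set P : Finset (Fin k) := univ.filter (fun i => 0 < g i) with hP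
      have hPne : P.Nonempty := by
        obtain ⟨i, hi⟩ := hgpos; exact ⟨i, by simp [hP, hi]⟩
      obtain ⟨i₀, hi₀P, hi₀min⟩ := Finset.exists_min_image P (fun i => 1 / g i) hPne
      have hgi₀ : 0 < g i₀ := by simpa [hP] using hi₀P
      set t : ℚ := 1 / g i₀ with ht
      have ht0 : 0 < t := by positivity
      set lam : Fin k → ℚ := fun i => 1 - t * g i with hlam
      have hlam0 : ∀ i, 0 ≤ lam i := by
        intro i
        by_cases h : 0 < g i
        · have h5 := hi₀min i (by simp [hP, h])
          have h6 : t * g i ≤ (1 / g i) * g i := mul_le_mul_of_nonneg_right h5 (le_of_lt h)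
          rw [one_div_mul_cancel (ne_of_gt h)] at h6
          have : (0:ℚ) ≤ 1 - t * g i := by linarith
          simpa [hlam] using this
        · push_neg at h
          have h6 : t * g i ≤ 0 := mul_nonpos_of_nonneg_of_nonpos (le_of_lt ht0) h
          have : (0:ℚ) ≤ 1 - t * g i := by linarith
          simpa [hlam] using this
      have hlami₀ : lam i₀ = 0 := by
        have : (1:ℚ) - t * g i₀ = 0 := by rw [ht]; field_simp; simp
        simpa [hlam] using this
      obtain ⟨m, rfl⟩ : ∃ m, k = m + 1 := ⟨k - 1, by omega⟩
      set v' : Fin m → (Fin n → ℚ) := fun j => lam (i₀.succAbove j) • v (i₀.succAbove j)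
        with hv'
      have hsum' : ∑ j, v' j = ∑ i, v i := by
        have h1 : ∑ i, lam i • v i = lam i₀ • v i₀ + ∑ j, v' j :=
          Fin.sum_univ_succAbove (fun i => lam i • v i) i₀
        have h2 : ∑ i, lam i • v i = ∑ i, v i := by
          calc ∑ i, lam i • v i = ∑ i, (v i - t • (g i • v i)) := by
                apply Finset.sum_congr rfl; intro i _
                rw [hlam]; ext j; simp; ring
            _ = (∑ i, v i) - t • ∑ i, (g i • v i) := by
                rw [Finset.sum_sub_distrib, Finset.smul_sum]
            _ = ∑ i, v i := by rw [hg]; simp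
        rw [hlami₀] at h1
        simp only [zero_smul, zero_add] at h1
        rw [← h1, h2]
      have hv'props : ∀ j, IsSol M (v' j) ∧ Ext M (v' j) := by
        intro j
        constructor
        · exact IsSol_smul (hlam0 _) (hv _).1
        · rcases eq_or_lt_of_le (hlam0 (i₀.succAbove j)) with h | h
          · rw [hv']; dsimp only; rw [← h, zero_smul]; exact Ext_zero M
          · exact Ext_smul (ne_of_gt h) (hv _).2
      obtain ⟨k', v'', hk'', hprops, hsum''⟩ := ih m (by omega) v' hv'props
      exact ⟨k', v'', hk'', hprops, by rw [hsum'', hsum']⟩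

end Stmt4
namespace Stmt4
variable {d n : ℕ}

lemma SS_nonneg {M : Fin d → Fin n → ℚ} {x : Fin n → ℚ} (hx : IsSol M x) : 0 ≤ SS x :=
  Finset.sum_nonneg (fun j _ => hx.1 j)

lemma bigpiece (M : Fin d → Fin n → ℚ) (c : Fin n → ℚ) (hc : IsSol M c) :
    ∃ x : Fin n → ℚ, IsSol M x ∧ Ext M x ∧ (∀ j, x j ≤ c j) ∧ SS c ≤ (n:ℚ) * SS x := by
  obtain ⟨k0, v0, hv0, hsum0⟩ := decomp M (supp c).card c le_rfl hc
  obtain ⟨k, v, hk, hv, hsum⟩ := shrink M k0 v0 hv0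
  rw [hsum0] at hsum
  have hcj : ∀ j, c j = ∑ i, v i j := by
    intro j; rw [← hsum]; simp
  rcases Nat.eq_zero_or_pos k with rfl | hkpos
  · have hc0 : ∀ j, c j = 0 := by intro j; rw [hcj j]; simp
    refine ⟨0, ⟨fun j => le_rfl, fun i => by simp⟩, Ext_zero M, fun j => by rw [hc0 j]; rfl, ?_⟩
    have : SS c = 0 := by unfold SS; exact Finset.sum_eq_zero (fun j _ => hc0 j)
    rw [this]
    have : SS (0 : Fin n → ℚ) = 0 := by unfold SS; simp
    rw [this]; simp
  · have huniv : (univ : Finset (Fin k)).Nonempty := by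
      rw [Finset.univ_nonempty_iff]; exact Fin.pos_iff_nonempty.1 hkpos
    obtain ⟨i₀, _, hmax⟩ := Finset.exists_max_image univ (fun i => SS (v i)) huniv
    refine ⟨v i₀, (hv i₀).1, (hv i₀).2, ?_, ?_⟩
    · intro j
      rw [hcj j]
      exact Finset.single_le_sum (fun i _ => ((hv i).1).1 j) (Finset.mem_univ i₀)
    · have h1 : SS c = ∑ i, SS (v i) := by
        unfold SS
        rw [Finset.sum_comm]
        apply Finset.sum_congr rfl
        intro j _; exact hcj j
      have h2 : ∑ i, SS (v i) ≤ ∑ _i : Fin k, SS (v i₀) :=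
        Finset.sum_le_sum (fun i _ => hmax i (Finset.mem_univ i))
      have h3 : (∑ _i : Fin k, SS (v i₀)) = (k : ℚ) * SS (v i₀) := by
        rw [Finset.sum_const]; simp [mul_comm]
      have h4 : (k : ℚ) * SS (v i₀) ≤ (n : ℚ) * SS (v i₀) := by
        apply mul_le_mul_of_nonneg_right _ (SS_nonneg (hv i₀).1)
        exact_mod_cast hk
      linarith [h1, h2]
  
end Stmt4
namespace Stmt4
variable {d n : ℕ}

attribute [local instance] Matrix.seminormedAddCommGroup

/-- dot product with a fixed vector, as a linear map -/
def dotL {T : Finset (Fin n)} (u : {j // j ∈ T} → ℚ) : ({j // j ∈ T} → ℚ) →ₗ[ℚ] ℚ where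
  toFun v := ∑ j, v j * u j
  map_add' := by intros v w; simp [add_mul, Finset.sum_add_distrib]
  map_smul' := by intros a v; simp [Finset.mul_sum, mul_assoc]

lemma sum_restrict {T : Finset (Fin n)} (f : Fin n → ℚ) (hf : ∀ j, j ∉ T → f j = 0) :
    ∑ j, f j = ∑ j : {j // j ∈ T}, f j.1 := by
  rw [Finset.sum_coe_sort T f]
  exact (Finset.sum_subset (Finset.subset_univ T) (fun j _ hj => hf j hj)).symm

lemma extract (a : ℕ) (ha : 0 < a) (M : Fin d → Fin n → ℤ) (hM : ∀ i j, |M i j| ≤ (a:ℤ))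
    {x : Fin n → ℚ} (hx : IsSol (fun i j => (M i j : ℚ)) x)
    (hE : Ext (fun i j => (M i j : ℚ)) x) (hxne : x ≠ 0) :
    ∃ (q : Fin n → ℤ) (μ : ℚ), 0 < μ ∧ (∀ j, (q j : ℚ) = μ * x j) ∧
      (((supp x).card = 1 ∧ ∑ j, q j ≤ 1) ∨
       ((supp x).card = 2 ∧ ∑ j, q j ≤ 2 * a) ∨
       (3 ≤ (supp x).card ∧ (supp x).card ≤ d + 1 ∧
         ∑ j, q j ≤ (((supp x).card * ((supp x).card * a) ^ ((supp x).card - 1) : ℕ) : ℤ))) := by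
  classical
  set Mq : Fin d → Fin n → ℚ := fun i j => (M i j : ℚ) with hMq
  set T : Finset (Fin n) := supp x with hT
  have hTne : T.Nonempty := by
    rcases Finset.eq_empty_or_nonempty T with h | h
    · exact absurd (eq_zero_of_supp_empty h) hxne
    · exact h
  have hxpos : ∀ j, j ∈ T → 0 < x j := fun j hj => supp_pos hx hj
  have hxz : ∀ j, j ∉ T → x j = 0 := fun j hj => not_mem_supp.1 hj
  -- case on card
  rcases lt_trichotomy T.card 2 with hcard | hcard | hcard
  · -- card = 1
    have h1 : T.card = 1 := by
      have : T.card ≠ 0 := by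
        intro h; exact hTne.ne_empty (Finset.card_eq_zero.1 h)
      omega
    obtain ⟨j₀, hj₀⟩ := Finset.card_eq_one.1 h1
    have hxj₀ : 0 < x j₀ := hxpos j₀ (by rw [hj₀]; exact Finset.mem_singleton_self j₀)
    refine ⟨fun j => if j = j₀ then 1 else 0, 1 / x j₀, by positivity, ?_, Or.inl ⟨h1, ?_⟩⟩
    · intro j
      by_cases h : j = j₀
      · subst h; simp; field_simp
      · have : x j = 0 := by
          apply hxz; rw [hj₀]; simp [h]
        simp [h, this]
    · rw [Finset.sum_eq_single j₀] <;> simp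
  · -- card = 2
    obtain ⟨j₁, j₂, hne, hj⟩ := Finset.card_eq_two.1 hcard
    have hx₁ : 0 < x j₁ := hxpos _ (by rw [hj]; simp)
    have hx₂ : 0 < x j₂ := hxpos _ (by rw [hj]; simp)
    have hsum2 : ∀ i, Mq i j₁ * x j₁ + Mq i j₂ * x j₂ = 0 := by
      intro i
      have h0 := hx.2 i
      have : ∑ j, Mq i j * x j = ∑ j ∈ T, Mq i j * x j := by
        symm
        apply Finset.sum_subset (Finset.subset_univ T)
        intro j _ hjT
        rw [hxz j hjT, mul_zero]
      rw [this, hj, Finset.sum_pair hne] at h0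
      exact h0
    -- find a row with nonzero entry at j₁
    have hrow : ∃ i, M i j₁ ≠ 0 := by
      by_contra hall
      push_neg at hall
      have hker : ∀ i, ∑ j, Mq i j * (fun j => if j = j₁ then (1:ℚ) else 0) j = 0 := by
        intro i
        rw [Finset.sum_eq_single j₁]
        · simp [hMq, hall i]
        · intro b _ hb; simp [hb]
        · simp
      obtain ⟨μ, hμ⟩ := hE _ hker (by
        intro j hxj
        have : j ∉ T := by rw [hT, not_mem_supp]; exact hxj
        have : j ≠ j₁ := by rintro rfl; rw [hj] at this; simp at this
        simp [this])
      have e1 : (if j₂ = j₁ then (1:ℚ) else 0) = μ * x j₂ := by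
        have := congrFun hμ j₂; simpa using this
      have e2 : (if j₁ = j₁ then (1:ℚ) else 0) = μ * x j₁ := by
        have := congrFun hμ j₁; simpa using this
      rw [if_neg (fun h => hne h.symm)] at e1
      rw [if_pos rfl] at e2
      have hμ0 : μ = 0 := by
        rcases mul_eq_zero.1 e1.symm with h | h
        · exact h
        · exact absurd h (ne_of_gt hx₂)
      rw [hμ0] at e2; simp at e2
    obtain ⟨i₁, hi₁⟩ := hrow
    set α : ℤ := M i₁ j₁ with hα
    set β : ℤ := M i₁ j₂ with hβ
    have hrel : (α:ℚ) * x j₁ + (β:ℚ) * x j₂ = 0 := hsum2 i₁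
    have hβ0 : β ≠ 0 := by
      intro h
      rw [h] at hrel
      simp at hrel
      rcases hrel with h' | h'
      · exact hi₁ (by exact_mod_cast h')
      · exact (ne_of_gt hx₁) h'
    have habs : (|α| : ℚ) * x j₁ = (|β| : ℚ) * x j₂ := by
      have h1 : (α:ℚ) * x j₁ = -((β:ℚ) * x j₂) := by linarith
      have := congrArg abs h1
      rw [abs_neg, abs_mul, abs_mul, abs_of_pos hx₁, abs_of_pos hx₂] at this
      exact_mod_cast this
    set q : Fin n → ℤ := fun j => if j = j₁ then |β| else if j = j₂ then |α| else 0 with hq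
    set μ : ℚ := (|β| : ℚ) / x j₁ with hμd
    have hμpos : 0 < μ := by
      apply div_pos _ hx₁
      have : (0:ℤ) < |β| := abs_pos.2 hβ0
      exact_mod_cast this
    refine ⟨q, μ, hμpos, ?_, Or.inr (Or.inl ⟨hcard, ?_⟩)⟩
    · intro j
      by_cases h1 : j = j₁
      · subst h1
        rw [hq]; simp only [if_pos rfl, ↓reduceIte]
        rw [hμd]; field_simp; exact Int.cast_abs
      · by_cases h2 : j = j₂
        · subst h2
          rw [hq]; simp only [if_neg h1, if_pos rfl, ↓reduceIte]
          rw [hμd]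
          rw [div_mul_eq_mul_div, ← habs]
          field_simp; exact Int.cast_abs
        · have hxj : x j = 0 := by
            apply hxz
            rw [hj]
            simp [h1, h2]
          rw [hq]; simp [h1, h2, hxj]
    · have hqz : ∀ j, j ∉ ({j₁, j₂} : Finset (Fin n)) → q j = 0 := by
        intro j hjm
        simp only [Finset.mem_insert, Finset.mem_singleton] at hjm
        push_neg at hjm
        rw [hq]; simp [hjm.1, hjm.2]
      have hsq : ∑ j, q j = |β| + |α| := by
        have h7 : ∑ j, q j = ∑ j ∈ ({j₁, j₂} : Finset (Fin n)), q j :=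
          (Finset.sum_subset (Finset.subset_univ _) (fun j _ hjm => hqz j hjm)).symm
        rw [h7, Finset.sum_pair hne]
        rw [hq]; simp [hne, Ne.symm hne]
      rw [hsq]
      have hα2 : |α| ≤ (a:ℤ) := hM i₁ j₁
      have hβ2 : |β| ≤ (a:ℤ) := hM i₁ j₂
      push_cast
      omega
  · -- card ≥ 3
    set t := T.card with htdef
    have ht3 : 3 ≤ t := hcard
    set N : Matrix (Fin d) {j // j ∈ T} ℚ := fun i j => Mq i j.1 with hN
    set xh : {j // j ∈ T} → ℚ := fun j => x j.1 with hxh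
    have hxh0 : xh ≠ 0 := by
      obtain ⟨j₀, hj₀⟩ := hTne
      intro h
      have h2 : x j₀ = 0 := congrFun h ⟨j₀, hj₀⟩
      exact (ne_of_gt (hxpos _ hj₀)) h2
    have hmulxh : N.mulVec xh = 0 := by
      funext i
      have h0 := hx.2 i
      rw [sum_restrict (fun j => Mq i j * x j)
        (fun j hj => by show Mq i j * x j = 0; rw [hxz j hj, mul_zero])] at h0
      show ∑ j, N i j * xh j = 0
      exact h0
    have hkerN : ∀ z : {j // j ∈ T} → ℚ, N.mulVec z = 0 → ∃ μ : ℚ, z = μ • xh := by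
      intro z hz
      set zext : Fin n → ℚ := fun j => if h : j ∈ T then z ⟨j, h⟩ else 0 with hzext
      have hker : ∀ i, ∑ j, Mq i j * zext j = 0 := by
        intro i
        rw [sum_restrict (fun j => Mq i j * zext j)
          (fun j (hj : j ∉ T) => by
            show Mq i j * zext j = 0
            rw [hzext]
            dsimp only
            rw [dif_neg hj, mul_zero])]
        have h4 := congrFun hz i
        simp only [Matrix.mulVec, dotProduct, hN, Pi.zero_apply] at h4
        rw [← h4]
        apply Finset.sum_congr rfl
        intro j _
        rw [hzext]
        simp [j.2]
      obtain ⟨μ, hμ⟩ := hE zext hker (by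
        intro j hxj
        have hjT : j ∉ T := by rw [hT, not_mem_supp]; exact hxj
        rw [hzext]; simp [hjT])
      refine ⟨μ, funext fun j => ?_⟩
      have h5 := congrFun hμ j.1
      rw [hzext] at h5
      simpa [j.2, hxh] using h5
    have hcardT : Fintype.card {j // j ∈ T} = t := Fintype.card_coe T
    have hker_eq : LinearMap.ker N.mulVecLin = Submodule.span ℚ {xh} := by
      ext z
      rw [LinearMap.mem_ker, Submodule.mem_span_singleton]
      constructor
      · intro hz
        obtain ⟨μ, hμ⟩ := hkerN z (by rwa [Matrix.mulVecLin_apply] at hz)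
        exact ⟨μ, hμ.symm⟩
      · rintro ⟨μ, rfl⟩
        rw [map_smul, Matrix.mulVecLin_apply, hmulxh, smul_zero]
    have hfr : Module.finrank ℚ (LinearMap.ker N.mulVecLin) = 1 := by
      rw [hker_eq]; exact finrank_span_singleton hxh0
    have hrank : N.rank + 1 = t := by
      have h6 := LinearMap.finrank_range_add_finrank_ker N.mulVecLin
      rw [hfr, Module.finrank_fintype_fun_eq_card ℚ, hcardT] at h6
      exact h6
    have hrankd : N.rank ≤ d := le_trans (Matrix.rank_le_card_height N) (by simp)
    have htd : t ≤ d + 1 := by omega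
    have hrowspan : Module.finrank ℚ (Submodule.span ℚ (Set.range N)) = t - 1 := by
      have h1 : LinearMap.range N.transpose.mulVecLin = Submodule.span ℚ (Set.range N) := by
        rw [Matrix.range_mulVecLin]; rfl
      have h2 : Module.finrank ℚ (LinearMap.range N.transpose.mulVecLin) = N.rank :=
        Matrix.rank_transpose N
      rw [h1] at h2
      omega
    obtain ⟨b, hb_sub, hb_span, hb_ind⟩ := exists_linearIndependent ℚ (Set.range N)
    haveI : Fintype b := (Set.Finite.subset (Set.finite_range N) hb_sub).fintype
    have hb_card : Fintype.card b = t - 1 := by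
      have h5 := finrank_span_set_eq_card (s := b) hb_ind
      rw [hb_span, hrowspan] at h5
      rw [← Set.toFinset_card]
      omega
    have hrows : ∀ w : b, ∃ i : Fin d, N i = (w : {j // j ∈ T} → ℚ) :=
      fun w => Set.mem_range.1 (hb_sub w.2)
    choose r hr using hrows
    set A : Matrix b {j // j ∈ T} ℤ := fun w j => M (r w) j.1 with hA
    have hAcast : ∀ (w : b) (j), ((A w j : ℤ) : ℚ) = (w : {j // j ∈ T} → ℚ) j := by
      intro w j
      rw [hA]
      have := congrFun (hr w) j
      rw [hN] at this
      exact this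
    have hcards : Fintype.card b < Fintype.card {j // j ∈ T} := by
      rw [hb_card, hcardT]; omega
    have hcard0 : 0 < Fintype.card b := by rw [hb_card]; omega
    obtain ⟨y, hy0, hAy, hynorm⟩ := Int.Matrix.exists_ne_zero_int_vec_norm_le A hcards hcard0
    have hybound : ∀ j, |y j| ≤ (((t * a) ^ (t - 1) : ℕ) : ℤ) := by
      intro j
      have h1 : ‖y j‖ ≤ ‖y‖ := norm_le_pi_norm y j
      have hAnorm : (1 : ℝ) ⊔ ‖A‖ ≤ (a : ℝ) := by
        apply max_le
        · exact_mod_cast Nat.one_le_cast.2 ha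
        · rw [Matrix.norm_le_iff (by positivity)]
          intro i j'
          rw [Int.norm_eq_abs]
          exact_mod_cast hM (r i) j'.1
      have hexp : ((Fintype.card b : ℝ) / ((Fintype.card {j // j ∈ T} : ℝ) -
          (Fintype.card b : ℝ))) = ((t - 1 : ℕ) : ℝ) := by
        rw [hb_card, hcardT]
        have h7 : ((t:ℝ) - ((t-1:ℕ):ℝ)) = 1 := by
          rw [Nat.cast_sub (by omega)]
          push_cast; ring
        rw [h7, div_one]
      rw [hexp, Real.rpow_natCast] at hynorm
      have hbase : (0:ℝ) ≤ (Fintype.card {j // j ∈ T} : ℝ) * ((1:ℝ) ⊔ ‖A‖) := by positivity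
      have h8 : ((Fintype.card {j // j ∈ T} : ℝ) * ((1:ℝ) ⊔ ‖A‖)) ^ (t-1) ≤ ((t:ℝ) * (a:ℝ)) ^ (t-1) := by
        apply pow_le_pow_left₀ hbase
        rw [hcardT]
        apply mul_le_mul_of_nonneg_left hAnorm (by positivity)
      have h9 : ‖y‖ ≤ ((t:ℝ) * (a:ℝ)) ^ (t-1) := le_trans hynorm h8
      have h10 : ‖y j‖ ≤ ((((t * a) ^ (t - 1) : ℕ) : ℝ)) := by
        push_cast
        exact le_trans h1 h9
      rw [Int.norm_eq_abs] at h10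
      exact_mod_cast h10
    set yq : {j // j ∈ T} → ℚ := fun j => (y j : ℚ) with hyq
    have hNy : N.mulVec yq = 0 := by
      have hbker : Submodule.span ℚ b ≤ LinearMap.ker (dotL yq) := by
        rw [Submodule.span_le]
        intro w hw
        rw [SetLike.mem_coe, LinearMap.mem_ker]
        have h4 := congrFun hAy ⟨w, hw⟩
        simp only [Matrix.mulVec, dotProduct, Pi.zero_apply] at h4
        show ∑ j, w j * yq j = 0
        have h5 : ∀ j, w j * yq j = ((A ⟨w, hw⟩ j * y j : ℤ) : ℚ) := by
          intro j
          have e : ((A ⟨w, hw⟩ j : ℤ) : ℚ) = w j := hAcast ⟨w, hw⟩ j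
          rw [← e]
          show (A ⟨w, hw⟩ j : ℚ) * ((y j : ℤ) : ℚ) = _
          push_cast
          ring
        rw [Finset.sum_congr rfl (fun j _ => h5 j), ← Int.cast_sum, h4, Int.cast_zero]
      have hNi : ∀ i, N i ∈ Submodule.span ℚ b := by
        intro i; rw [hb_span]; exact Submodule.subset_span (Set.mem_range_self i)
      funext i
      have h6 := hbker (hNi i)
      rw [LinearMap.mem_ker] at h6
      show ∑ j, N i j * yq j = 0
      exact h6
    obtain ⟨μ0, hμ0⟩ := hkerN yq hNy
    have hμ0ne : μ0 ≠ 0 := by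
      rintro rfl
      rw [zero_smul] at hμ0
      apply hy0
      funext j
      have h7 := congrFun hμ0 j
      simp only [hyq, Pi.zero_apply] at h7
      exact_mod_cast h7
    set y' : {j // j ∈ T} → ℤ := if 0 < μ0 then y else -y with hy'
    have hy'cast : ∀ j, ((y' j : ℤ) : ℚ) = |μ0| * xh j := by
      intro j
      have h8 : ((y j : ℤ) : ℚ) = μ0 * xh j := by
        have h8' := congrFun hμ0 j
        simpa [hyq] using h8'
      rcases lt_trichotomy μ0 0 with hm | hm | hm
      · rw [hy', if_neg (by linarith), abs_of_neg hm]
        simp only [Pi.neg_apply]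
        push_cast
        rw [h8]
        simp
      · exact absurd hm hμ0ne
      · rw [hy', if_pos hm, abs_of_pos hm]
        rw [h8]
    have hy'bound : ∀ j, y' j ≤ (((t * a) ^ (t - 1) : ℕ) : ℤ) := by
      intro j
      apply le_trans (le_abs_self _)
      rw [hy']
      rcases ite_eq_or_eq (0 < μ0) y (-y) with h9 | h9 <;> rw [h9]
      · exact hybound j
      · rw [Pi.neg_apply, abs_neg]; exact hybound j
    set q : Fin n → ℤ := fun j => if h : j ∈ T then y' ⟨j, h⟩ else 0 with hq
    refine ⟨q, |μ0|, abs_pos.2 hμ0ne, ?_, Or.inr (Or.inr ⟨ht3, htd, ?_⟩)⟩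
    · intro j
      by_cases h : j ∈ T
      · rw [hq]
        simp only [dif_pos h]
        rw [hy'cast ⟨j, h⟩, hxh]
      · rw [hq]
        simp only [dif_neg h]
        rw [hxz j h, mul_zero, Int.cast_zero]
    · have hqoff : ∀ j ∈ univ, j ∉ T → q j = 0 := by
        intro j _ hj
        rw [hq]; simp [hj]
      have h11 : ∑ j, q j = ∑ j ∈ T, q j :=
        (Finset.sum_subset (Finset.subset_univ T) hqoff).symm
      have h12 : ∑ j ∈ T, q j = ∑ j : {j // j ∈ T}, q j.1 := (Finset.sum_coe_sort T q).symm
      have h13 : ∀ j : {j // j ∈ T}, q j.1 = y' j := by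
        intro j
        rw [hq]
        simp only [dif_pos j.2]
      have h14 : ∑ j : {j // j ∈ T}, y' j ≤
          (Finset.univ : Finset {j // j ∈ T}).card • (((t * a) ^ (t - 1) : ℕ) : ℤ) :=
        Finset.sum_le_card_nsmul _ _ _ (fun j _ => hy'bound j)
      rw [h11, h12, Finset.sum_congr rfl (fun j _ => h13 j)]
      apply le_trans h14
      rw [Finset.card_univ, hcardT]
      rw [nsmul_eq_mul]
      push_cast
      ring_nf
      exact le_rfl

end Stmt4
namespace Stmt4
variable {d n : ℕ}

lemma arith1 (a d : ℕ) (ha : 1 ≤ a) (hd : 1 ≤ d) : a ≤ (a * d) ^ (2 * d + 3) := by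
  calc a = a * 1 := (mul_one a).symm
    _ ≤ a * d := Nat.mul_le_mul_left a hd
    _ = (a * d) ^ 1 := (pow_one _).symm
    _ ≤ (a * d) ^ (2 * d + 3) := Nat.pow_le_pow_right (by positivity) (by omega)

lemma arith0 (a d : ℕ) (ha : 1 ≤ a) (hd : 1 ≤ d) : 1 ≤ (a * d) ^ (2 * d + 3) :=
  Nat.one_le_pow _ _ (by positivity)

lemma arith2 (a d t : ℕ) (ha : 1 ≤ a) (ht3 : 3 ≤ t) (htd : t ≤ d + 1) :
    t * (t * a) ^ (t - 1) ≤ (a * d) ^ (2 * d + 3) := by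
  have hd2 : 2 ≤ d := by omega
  have h1 : (t * a) ^ (t - 1) ≤ ((d + 1) * a) ^ d := by
    calc (t * a) ^ (t - 1) ≤ ((d + 1) * a) ^ (t - 1) :=
          Nat.pow_le_pow_left (Nat.mul_le_mul_right a htd) _
      _ ≤ ((d + 1) * a) ^ d := Nat.pow_le_pow_right (by positivity) (by omega)
  have h2 : t * (t * a) ^ (t - 1) ≤ (d + 1) * ((d + 1) * a) ^ d :=
    Nat.mul_le_mul (by omega) h1
  have h3 : (d + 1) * ((d + 1) * a) ^ d = (d + 1) ^ (d + 1) * a ^ d := by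
    rw [mul_pow, pow_succ]
    ring
  have h4 : (d + 1) ^ (d + 1) ≤ d ^ (2 * d + 3) := by
    calc (d + 1) ^ (d + 1) ≤ (d ^ 2) ^ (d + 1) := by
          apply Nat.pow_le_pow_left
          nlinarith
      _ = d ^ (2 * (d + 1)) := by rw [← pow_mul]
      _ ≤ d ^ (2 * d + 3) := Nat.pow_le_pow_right (by omega) (by omega)
  have h5 : a ^ d ≤ a ^ (2 * d + 3) := Nat.pow_le_pow_right ha (by omega)
  calc t * (t * a) ^ (t - 1) ≤ (d + 1) ^ (d + 1) * a ^ d := by rw [← h3]; exact h2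
    _ ≤ d ^ (2 * d + 3) * a ^ (2 * d + 3) := Nat.mul_le_mul h4 h5
    _ = (a * d) ^ (2 * d + 3) := by rw [mul_pow]; ring

end Stmt4

/-- splitting of large nonnegative integer solutions. If `M`
is a `d × n` integer matrix with entries of absolute value at most `a`, and
`c ∈ ℕ^n` satisfies `M c = 0` and `‖c‖₁ ≥ 2 n (ad)^(2d+3)`, then `c` splits as
`c = c₁ + c₂` with `c₁, c₂ ∈ ℕ^n` nonzero and `M c₁ = 0`, `M c₂ = 0`. -/
theorem stmt4 (d n a : ℕ) (hd : 0 < d) (hn : 0 < n) (ha : 0 < a)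
    (M : Fin d → Fin n → ℤ) (hM : ∀ i j, |M i j| ≤ (a : ℤ))
    (c : Fin n → ℕ)
    (hMc : ∀ i, ∑ j, M i j * (c j : ℤ) = 0)
    (hbig : 2 * n * (a * d) ^ (2 * d + 3) ≤ ∑ j, c j) :
    ∃ c₁ c₂ : Fin n → ℕ, c₁ ≠ 0 ∧ c₂ ≠ 0 ∧ c₁ + c₂ = c ∧
      (∀ i, ∑ j, M i j * (c₁ j : ℤ) = 0) ∧
      (∀ i, ∑ j, M i j * (c₂ j : ℤ) = 0) := by
  classical
  open Stmt4 in
  set B : ℕ := (a * d) ^ (2 * d + 3) with hB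
  have hB1 : 1 ≤ B := Stmt4.arith0 a d ha hd
  set Mq : Fin d → Fin n → ℚ := fun i j => (M i j : ℚ) with hMq
  set cq : Fin n → ℚ := fun j => (c j : ℚ) with hcq
  have hcsol : Stmt4.IsSol Mq cq := by
    refine ⟨fun j => by positivity, fun i => ?_⟩
    have h0 := hMc i
    show ∑ j, ((M i j : ℚ)) * (((c j : ℕ)) : ℚ) = 0
    exact_mod_cast h0
  have hSc : Stmt4.SS cq = ((∑ j, c j : ℕ) : ℚ) := by
    unfold Stmt4.SS
    push_cast
    rfl
  have hScbig : (2 * n * B : ℚ) ≤ Stmt4.SS cq := by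
    rw [hSc]
    exact_mod_cast hbig
  obtain ⟨x, hxsol, hxE, hxle, hxbig⟩ := Stmt4.bigpiece Mq cq hcsol
  have hSxB : 2 * (B:ℚ) ≤ Stmt4.SS x := by
    have h1 : (2 * n * B : ℚ) ≤ (n:ℚ) * Stmt4.SS x := le_trans hScbig hxbig
    have hn0 : (0:ℚ) < n := by exact_mod_cast hn
    have h2 : (n:ℚ) * (2 * B) ≤ (n:ℚ) * Stmt4.SS x := by linarith
    exact (mul_le_mul_iff_right₀ hn0).1 h2
  have hxne : x ≠ 0 := by
    intro h
    rw [h] at hSxB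
    have : Stmt4.SS (0 : Fin n → ℚ) = 0 := by unfold Stmt4.SS; simp
    rw [this] at hSxB
    have : (0:ℚ) < B := by exact_mod_cast hB1
    linarith
  obtain ⟨q, μ, hμpos, hqcast, hcases⟩ := Stmt4.extract a ha M hM hxsol hxE hxne
  -- sum of q
  have hSq : ((∑ j, q j : ℤ) : ℚ) = μ * Stmt4.SS x := by
    unfold Stmt4.SS
    push_cast
    rw [Finset.mul_sum]
    apply Finset.sum_congr rfl
    intro j _
    exact hqcast j
  have hSx0 : 0 < Stmt4.SS x := by
    have : (0:ℚ) < B := by exact_mod_cast hB1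
    linarith
  -- two key bounds, by cases
  have hkey : ((∑ j, q j : ℤ) : ℚ) ≤ Stmt4.SS x ∧ (∑ j, q j) < ((∑ j, c j : ℕ) : ℤ) := by
    have hcbigZ : (2 * n * B : ℤ) ≤ ((∑ j, c j : ℕ) : ℤ) := by exact_mod_cast hbig
    have hane : (a : ℤ) ≤ (B : ℤ) := by exact_mod_cast Stmt4.arith1 a d ha hd
    have hB1' : (1:ℤ) ≤ B := by exact_mod_cast hB1
    have hn1 : (1:ℤ) ≤ n := by exact_mod_cast hn
    rcases hcases with ⟨ht, hq1⟩ | ⟨ht, hq2⟩ | ⟨ht3, htd, hq3⟩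
    · constructor
      · calc ((∑ j, q j : ℤ) : ℚ) ≤ 1 := by exact_mod_cast hq1
          _ ≤ 2 * (B:ℚ) := by
            have : (1:ℚ) ≤ B := by exact_mod_cast hB1
            linarith
          _ ≤ Stmt4.SS x := hSxB
      · calc (∑ j, q j) ≤ 1 := hq1
          _ < 2 * n * B := by nlinarith
          _ ≤ _ := hcbigZ
    · -- t = 2, so n ≥ 2
      have hn2 : 2 ≤ n := by
        have := Finset.card_le_card (Finset.subset_univ (Stmt4.supp x))
        rw [ht] at this
        simpa using this
      have hn2' : (2:ℤ) ≤ n := by exact_mod_cast hn2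
      constructor
      · calc ((∑ j, q j : ℤ) : ℚ) ≤ 2 * (a:ℚ) := by exact_mod_cast hq2
          _ ≤ 2 * (B:ℚ) := by
            have : (a:ℚ) ≤ B := by exact_mod_cast Stmt4.arith1 a d ha hd
            linarith
          _ ≤ Stmt4.SS x := hSxB
      · calc (∑ j, q j) ≤ 2 * (a:ℤ) := hq2
          _ < 2 * n * B := by nlinarith
          _ ≤ _ := hcbigZ
    · have harith : ((Stmt4.supp x).card * ((Stmt4.supp x).card * a) ^ ((Stmt4.supp x).card - 1) : ℕ) ≤ B :=
        Stmt4.arith2 a d _ ha ht3 htd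
      have harith' : (((Stmt4.supp x).card * ((Stmt4.supp x).card * a) ^ ((Stmt4.supp x).card - 1) : ℕ) : ℤ) ≤ (B:ℤ) := by
        exact_mod_cast harith
      constructor
      · calc ((∑ j, q j : ℤ) : ℚ) ≤ ((B:ℤ):ℚ) := by exact_mod_cast le_trans hq3 harith'
          _ ≤ 2 * (B:ℚ) := by push_cast; linarith [show (0:ℚ) ≤ (B:ℚ) by positivity]
          _ ≤ Stmt4.SS x := hSxB
      · calc (∑ j, q j) ≤ (B:ℤ) := le_trans hq3 harith'
          _ < 2 * n * B := by nlinarith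
          _ ≤ _ := hcbigZ
  obtain ⟨hkey1, hkey2⟩ := hkey
  -- μ ≤ 1
  have hμ1 : μ ≤ 1 := by
    rw [hSq] at hkey1
    nlinarith
  -- coordinatewise bounds
  have hq0 : ∀ j, 0 ≤ q j := by
    intro j
    have : ((q j : ℤ) : ℚ) = μ * x j := hqcast j
    have h2 : 0 ≤ μ * x j := mul_nonneg (le_of_lt hμpos) (hxsol.1 j)
    exact_mod_cast this ▸ h2
  have hqc : ∀ j, q j ≤ (c j : ℤ) := by
    intro j
    have h1 : ((q j : ℤ) : ℚ) = μ * x j := hqcast j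
    have h2 : μ * x j ≤ x j := by nlinarith [hxsol.1 j]
    have h3 : x j ≤ cq j := hxle j
    have : ((q j : ℤ) : ℚ) ≤ ((c j : ℕ) : ℚ) := by
      rw [h1]
      exact le_trans h2 h3
    exact_mod_cast this
  have hqker : ∀ i, ∑ j, M i j * q j = 0 := by
    intro i
    have h1 : ∑ j, Mq i j * ((q j : ℤ) : ℚ) = 0 := by
      calc ∑ j, Mq i j * ((q j : ℤ) : ℚ) = ∑ j, Mq i j * (μ * x j) := by
            apply Finset.sum_congr rfl
            intro j _
            rw [hqcast j]
        _ = μ * ∑ j, Mq i j * x j := by rw [Finset.mul_sum]; apply Finset.sum_congr rfl; intro j _; ring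
        _ = 0 := by rw [hxsol.2 i, mul_zero]
    have h2 : ((∑ j, M i j * q j : ℤ) : ℚ) = 0 := by
      push_cast
      rw [← h1]
    exact_mod_cast h2
  -- q positive somewhere
  have hSqpos : 0 < ∑ j, q j := by
    have h1 : (0:ℚ) < μ * Stmt4.SS x := mul_pos hμpos hSx0
    rw [← hSq] at h1
    exact_mod_cast h1
  -- now build the ℕ vectors
  refine ⟨fun j => (q j).toNat, fun j => c j - (q j).toNat, ?_, ?_, ?_, ?_, ?_⟩
  · -- c₁ ≠ 0
    intro h
    have : ∀ j, (q j).toNat = 0 := fun j => congrFun h j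
    have hz : ∀ j, q j = 0 := by
      intro j
      have h1 := this j
      have h2 := hq0 j
      omega
    rw [Finset.sum_eq_zero (fun j _ => hz j)] at hSqpos
    exact lt_irrefl 0 hSqpos
  · -- c₂ ≠ 0
    intro h
    have hall : ∀ j, c j = (q j).toNat := by
      intro j
      have h1 : c j - (q j).toNat = 0 := congrFun h j
      have h2 : (q j).toNat ≤ c j := by
        have := hqc j
        have := hq0 j
        omega
      omega
    have : ((∑ j, c j : ℕ) : ℤ) = ∑ j, q j := by
      push_cast
      apply Finset.sum_congr rfl
      intro j _
      rw [hall j]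
      have := hq0 j
      omega
    omega
  · -- sum
    funext j
    have h2 : (q j).toNat ≤ c j := by
      have := hqc j
      have := hq0 j
      omega
    show (q j).toNat + (c j - (q j).toNat) = c j
    omega
  · -- first kernel
    intro i
    have := hqker i
    have hcast : ∀ j, (((q j).toNat : ℕ) : ℤ) = q j := by
      intro j
      have := hq0 j
      omega
    calc ∑ j, M i j * (((q j).toNat : ℕ) : ℤ) = ∑ j, M i j * q j := by
          apply Finset.sum_congr rfl
          intro j _
          rw [hcast j]
      _ = 0 := hqker i
  · -- second kernel
    intro i
    have hcast : ∀ j, ((c j - (q j).toNat : ℕ) : ℤ) = (c j : ℤ) - q j := by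
      intro j
      have := hqc j
      have := hq0 j
      omega
    calc ∑ j, M i j * ((c j - (q j).toNat : ℕ) : ℤ)
        = ∑ j, (M i j * (c j : ℤ) - M i j * q j) := by
          apply Finset.sum_congr rfl
          intro j _
          rw [hcast j]
          ring
      _ = (∑ j, M i j * (c j : ℤ)) - ∑ j, M i j * q j := Finset.sum_sub_distrib _ _
      _ = 0 := by rw [hMc i, hqker i]; ring
end
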